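/- arXiv:2007.11979 — 7 statements merged into one kernel-verified Lean document; each statement's English description precedes it below -/
import Mathlib

section
/- (Selberg-Jack integral in the Schur case, $\theta = 1$) For a partition $\kappa$ with at most $n$ parts and reals $a, b > 0$, $\frac{1}{S_n(a,b,1)}\int_{[0,1]^n} \prod_{j=1}^n u_j^a(1-u_j)^b\, s_\kappa(u_1,\ldots,u_n) \prod_{1\le j<k\le n}(u_j - u_k)^2 \, du = s_\kappa(1^n) \prod_{j=1}^n \frac{\Gamma(a + n - j + 1 + \kappa_j)}{\Gamma(a + b + 2n - j + 1 + \kappa_j)} \cdot \frac{\Gamma(a + b + 2n - j + 1)}{\Gamma(a + n - j + 1)}$, where $S_n(a,b,1)$ is the Selberg integral with $\theta = 1$. -/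
open MeasureTheory

/-- Complete homogeneous symmetric polynomial `h_k` in `n` variables. -/
noncomputable def hcomplete (n k : ℕ) (x : Fin n → ℝ) : ℝ :=
  ∑ m ∈ (Finset.univ : Finset (Fin n)).sym k, ((m : Sym (Fin n) k).1.map x).prod

/-- Schur polynomial in `n` variables via the Jacobi–Trudi determinant. -/
noncomputable def schur (n : ℕ) (κ : Fin n → ℕ) (x : Fin n → ℝ) : ℝ :=
  Matrix.det (Matrix.of fun i j : Fin n =>
    if (i : ℕ) ≤ κ i + (j : ℕ) then hcomplete n (κ i + (j : ℕ) - (i : ℕ)) x else 0)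

open PowerSeries Finset Polynomial Filter


noncomputable def hT {n : ℕ} (T : Finset (Fin n)) (r : ℕ) (x : Fin n → ℝ) : ℝ :=
  ∑ m ∈ T.sym r, ((m : Sym (Fin n) r).1.map x).prod

lemma hcomplete_eq_hT (n k : ℕ) (x : Fin n → ℝ) : hcomplete n k x = hT Finset.univ k x := rfl

lemma hT_zero {n : ℕ} (T : Finset (Fin n)) (x : Fin n → ℝ) : hT T 0 x = 1 := by
  simp [hT, Finset.sym_zero]
  rfl

lemma hT_empty_succ {n : ℕ} (r : ℕ) (x : Fin n → ℝ) : hT (∅ : Finset (Fin n)) (r+1) x = 0 := by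
  simp [hT, Finset.sym_empty]

lemma hT_succ_erase {n : ℕ} {T : Finset (Fin n)} {k : Fin n} (hk : k ∈ T) (r : ℕ)
    (x : Fin n → ℝ) :
    hT T (r+1) x = hT (T.erase k) (r+1) x + x k * hT T r x := by
  classical
  have hsplit := Finset.sum_filter_add_sum_filter_not (T.sym (r+1))
    (fun m => k ∈ m) (fun m => ((m : Sym (Fin n) (r+1)).1.map x).prod)
  have h2 : (T.sym (r+1)).filter (fun m => ¬ k ∈ m) = (T.erase k).sym (r+1) := by
    ext m
    simp only [Finset.mem_filter, Finset.mem_sym_iff, Finset.mem_erase]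
    constructor
    · rintro ⟨h1, h2⟩ a ha
      exact ⟨fun hak => h2 (hak ▸ ha), h1 a ha⟩
    · intro h
      exact ⟨fun a ha => (h a ha).2, fun hk' => (h k hk').1 rfl⟩
  have h1 : ∑ m ∈ T.sym r, (x k * ((m : Sym (Fin n) r).1.map x).prod)
      = ∑ m ∈ (T.sym (r+1)).filter (fun m => k ∈ m),
          ((m : Sym (Fin n) (r+1)).1.map x).prod := by
    refine Finset.sum_bij' (fun m _hm => k ::ₛ m)
      (fun m hm => Sym.erase m k (by simpa using (Finset.mem_filter.mp hm).2))
      ?_ ?_ ?_ ?_ ?_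
    · intro m hm
      rw [Finset.mem_filter]
      refine ⟨?_, Sym.mem_cons_self k m⟩
      rw [Finset.mem_sym_iff]
      intro a ha
      rcases Sym.mem_cons.mp ha with h | h
      · exact h ▸ hk
      · exact Finset.mem_sym_iff.mp hm a h
    · intro m hm
      rw [Finset.mem_sym_iff]
      intro a ha
      have hmm := (Finset.mem_filter.mp hm).1
      rw [Finset.mem_sym_iff] at hmm
      have hkm : k ∈ m := by simpa using (Finset.mem_filter.mp hm).2
      refine hmm a ?_
      rw [← Sym.mem_coe, Sym.coe_erase] at ha
      rw [← Sym.mem_coe]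
      exact Multiset.mem_of_mem_erase ha
    · intro m hm
      exact Sym.erase_cons_head m k
    · intro m hm
      exact Sym.cons_erase _
    · intro m hm
      show _ = ((↑(k ::ₛ m) : Multiset (Fin n)).map x).prod
      rw [Sym.coe_cons, Multiset.map_cons, Multiset.prod_cons]
      rfl
  rw [hT, ← hsplit, ← h1, h2]
  rw [hT, hT, Finset.mul_sum]
  ring

section
variable {n : ℕ}
/-- generating series of complete homogeneous polynomials over `T`. -/
noncomputable def HS (T : Finset (Fin n)) (x : Fin n → ℝ) : PowerSeries ℝ :=
  PowerSeries.mk fun r => hT T r x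

/-- `∏ i in T, (1 - x i X)`. -/
noncomputable def FS (T : Finset (Fin n)) (x : Fin n → ℝ) : PowerSeries ℝ :=
  ∏ i ∈ T, (1 - PowerSeries.C (x i) * PowerSeries.X)

/-- geometric series. -/
noncomputable def GS (c : ℝ) : PowerSeries ℝ := PowerSeries.mk fun r => c ^ r

lemma one_sub_mul_coeff (c : ℝ) (f : PowerSeries ℝ) (r : ℕ) :
    PowerSeries.coeff r ((1 - PowerSeries.C c * PowerSeries.X) * f)
      = PowerSeries.coeff r f - (if h : r = 0 then 0 else c * PowerSeries.coeff (r-1) f) := by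
  rw [sub_mul, one_mul, map_sub]
  congr 1
  rw [mul_assoc, PowerSeries.coeff_C_mul]
  cases r with
  | zero => simp
  | succ m => simp [PowerSeries.coeff_succ_X_mul]

lemma one_sub_mul_GS (c : ℝ) :
    (1 - PowerSeries.C c * PowerSeries.X) * GS c = 1 := by
  ext r
  rw [one_sub_mul_coeff, PowerSeries.coeff_one]
  cases r with
  | zero => simp [GS]
  | succ m => simp [GS, pow_succ, mul_comm]

lemma one_sub_mul_HS {T : Finset (Fin n)} {k : Fin n} (hk : k ∈ T) (x : Fin n → ℝ) :
    (1 - PowerSeries.C (x k) * PowerSeries.X) * HS T x = HS (T.erase k) x := by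
  ext r
  rw [one_sub_mul_coeff]
  cases r with
  | zero => simp [HS, hT_zero]
  | succ m =>
    simp only [HS, PowerSeries.coeff_mk, Nat.add_sub_cancel]
    rw [dif_neg (by omega : ¬ (m+1 = 0)), hT_succ_erase hk m x]
    ring

lemma FS_mul_HS (T : Finset (Fin n)) (x : Fin n → ℝ) : FS T x * HS T x = 1 := by
  classical
  induction T using Finset.induction_on with
  | empty =>
    have : HS (∅ : Finset (Fin n)) x = 1 := by
      ext r
      rw [PowerSeries.coeff_one]
      cases r with
      | zero => simp [HS, hT_zero]
      | succ m => simp [HS, hT_empty_succ]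
    simp [FS, this]
  | @insert k T hkT ih =>
    rw [FS, Finset.prod_insert hkT, ← FS]
    have h3 : (1 - PowerSeries.C (x k) * PowerSeries.X) * HS (insert k T) x = HS T x := by
      rw [one_sub_mul_HS (Finset.mem_insert_self k T) x, Finset.erase_insert hkT]
    calc (1 - PowerSeries.C (x k) * PowerSeries.X) * FS T x * HS (insert k T) x
        = FS T x * ((1 - PowerSeries.C (x k) * PowerSeries.X) * HS (insert k T) x) := by ring
      _ = 1 := by rw [h3, ih]

lemma FS_erase_mul_HS {T : Finset (Fin n)} {k : Fin n} (hk : k ∈ T) (x : Fin n → ℝ) :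
    FS (T.erase k) x * HS T x = GS (x k) := by
  classical
  have h1 : FS T x = (1 - PowerSeries.C (x k) * PowerSeries.X) * FS (T.erase k) x := by
    exact (Finset.mul_prod_erase T (fun i => 1 - PowerSeries.C (x i) * PowerSeries.X) hk).symm
  have h2 := FS_mul_HS T x
  rw [h1] at h2
  calc FS (T.erase k) x * HS T x
      = ((1 - PowerSeries.C (x k) * PowerSeries.X) * GS (x k)) *
        (FS (T.erase k) x * HS T x) := by rw [one_sub_mul_GS]; ring
    _ = GS (x k) * ((1 - PowerSeries.C (x k) * PowerSeries.X) *
          FS (T.erase k) x * HS T x) := by ring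
    _ = GS (x k) := by rw [h2, mul_one]

lemma coeff_FS_eq_zero {T : Finset (Fin n)} (x : Fin n → ℝ) :
    ∀ {s : ℕ}, T.card < s → PowerSeries.coeff s (FS T x) = 0 := by
  classical
  induction T using Finset.induction_on with
  | empty =>
    intro s hs
    rw [FS, Finset.prod_empty, PowerSeries.coeff_one, if_neg (by omega)]
  | @insert k T hkT ih =>
    intro s hs
    rw [Finset.card_insert_of_notMem hkT] at hs
    rw [FS, Finset.prod_insert hkT, ← FS, one_sub_mul_coeff]
    rw [ih (by omega), dif_neg (by omega), ih (by omega)]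
    simp
end

section
variable (n : ℕ) (κ : Fin n → ℕ) (u : Fin n → ℝ)

noncomputable def Hmat : Matrix (Fin n) (Fin n) ℝ :=
  Matrix.of fun i j : Fin n =>
    if (i : ℕ) ≤ κ i + (j : ℕ) then hcomplete n (κ i + (j : ℕ) - (i : ℕ)) u else 0

noncomputable def Emat : Matrix (Fin n) (Fin n) ℝ :=
  Matrix.of fun j k : Fin n => PowerSeries.coeff (n - 1 - (j:ℕ)) (FS (Finset.univ.erase k) u)

noncomputable def Amat : Matrix (Fin n) (Fin n) ℝ :=
  Matrix.of fun i k : Fin n => u k ^ (κ i + (n - 1 - (i:ℕ)))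

lemma schur_eq_det : schur n κ u = (Hmat n κ u).det := rfl

lemma Hmat_mul_Emat : Hmat n κ u * Emat n u = Amat n κ u := by
  classical
  ext i k
  rw [Matrix.mul_apply]
  set m₀ := κ i + (n - 1 - (i:ℕ)) with hm₀
  set g : ℕ → ℝ := fun s =>
    (if s ≤ m₀ then hT Finset.univ (m₀ - s) u else 0) *
      PowerSeries.coeff s (FS (Finset.univ.erase k) u) with hg
  have hterm : ∀ j : Fin n, Hmat n κ u i j * Emat n u j k = g (n - 1 - (j:ℕ)) := by
    intro j
    have hi : (i:ℕ) < n := i.isLt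
    have hj : (j:ℕ) < n := j.isLt
    have hiff : ((i:ℕ) ≤ κ i + (j:ℕ)) ↔ (n - 1 - (j:ℕ) ≤ m₀) := by
      rw [hm₀]; omega
    by_cases hc : (i:ℕ) ≤ κ i + (j:ℕ)
    · have hc' : n - 1 - (j:ℕ) ≤ m₀ := hiff.mp hc
      have hidx : κ i + (j:ℕ) - (i:ℕ) = m₀ - (n - 1 - (j:ℕ)) := by rw [hm₀]; omega
      simp only [Hmat, Emat, Matrix.of_apply, if_pos hc, hg, if_pos hc', hidx,
        hcomplete_eq_hT]
    · have hc' : ¬ (n - 1 - (j:ℕ) ≤ m₀) := fun h => hc (hiff.mpr h)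
      simp only [Hmat, Emat, Matrix.of_apply, if_neg hc, hg, if_neg hc', zero_mul]
  calc ∑ j, Hmat n κ u i j * Emat n u j k
      = ∑ j : Fin n, g (n - 1 - (j:ℕ)) := by
        exact Finset.sum_congr rfl fun j _ => hterm j
    _ = ∑ j : Fin n, g ((Fin.rev j : Fin n) : ℕ) := by
        refine Finset.sum_congr rfl fun j _ => ?_
        congr 1
        rw [Fin.val_rev]
        omega
    _ = ∑ j : Fin n, g (j:ℕ) := Equiv.sum_comp (Fin.revPerm) (fun j : Fin n => g (j:ℕ))
    _ = ∑ s ∈ Finset.range n, g s := Fin.sum_univ_eq_sum_range g n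
    _ = ∑ s ∈ Finset.range (n + (m₀+1)), g s := by
        refine Finset.sum_subset (by
          intro s hs; rw [Finset.mem_range] at *; omega) ?_
        intro s _hs hns
        rw [Finset.mem_range] at hns
        have : n ≤ s := by omega
        have hcard : (Finset.univ.erase k).card < s := by
          rw [Finset.card_erase_of_mem (Finset.mem_univ k), Finset.card_univ,
            Fintype.card_fin]
          omega
        rw [hg]; dsimp only
        simp only [coeff_FS_eq_zero u hcard, mul_zero]
    _ = ∑ s ∈ Finset.range (m₀+1), g s := by
        refine (Finset.sum_subset (by
          intro s hs; rw [Finset.mem_range] at *; omega) ?_).symm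
        intro s _hs hns
        rw [Finset.mem_range] at hns
        rw [hg]; dsimp only
        rw [if_neg (by omega), zero_mul]
    _ = ∑ s ∈ Finset.range (m₀+1),
          PowerSeries.coeff s (FS (Finset.univ.erase k) u) * hT Finset.univ (m₀ - s) u := by
        refine Finset.sum_congr rfl fun s hs => ?_
        rw [Finset.mem_range] at hs
        rw [hg]; dsimp only
        rw [if_pos (by omega)]; ring
    _ = PowerSeries.coeff m₀ (FS (Finset.univ.erase k) u * HS Finset.univ u) := by
        rw [PowerSeries.coeff_mul, Finset.Nat.sum_antidiagonal_eq_sum_range_succ_mk]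
        simp [HS]
    _ = u k ^ m₀ := by
        rw [FS_erase_mul_HS (Finset.mem_univ k) u]
        simp [GS]
    _ = Amat n κ u i k := rfl

lemma det_Amat : (Amat n κ u).det = schur n κ u * (Emat n u).det := by
  rw [← Hmat_mul_Emat, Matrix.det_mul, schur_eq_det]

lemma det_Hmat_zero : (Hmat n (fun _ => 0) u).det = 1 := by
  have htri : (Hmat n (fun _ => 0) u).BlockTriangular id := by
    intro i j hij
    simp only [Hmat, Matrix.of_apply, id] at *
    rw [if_neg (by omega)]
  rw [Matrix.det_of_upperTriangular htri]
  refine Finset.prod_eq_one fun i _ => ?_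
  simp only [Hmat, Matrix.of_apply, if_pos (by omega : (i:ℕ) ≤ 0 + (i:ℕ))]
  rw [show 0 + (i:ℕ) - (i:ℕ) = 0 by omega, hcomplete_eq_hT, hT_zero]

lemma det_Emat : (Emat n u).det = (Amat n (fun _ => 0) u).det := by
  rw [det_Amat, schur_eq_det, det_Hmat_zero, one_mul]
end

lemma continuous_msprod {n : ℕ} (s : Multiset (Fin n)) :
    Continuous fun x : Fin n → ℝ => (s.map x).prod := by
  induction s using Multiset.induction_on with
  | empty => simpa using continuous_const
  | cons a s ih =>
    have : (fun x : Fin n → ℝ => ((a ::ₘ s).map x).prod)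
        = fun x => x a * (s.map x).prod := by
      funext x; rw [Multiset.map_cons, Multiset.prod_cons]
    rw [this]
    exact (continuous_apply a).mul ih

lemma continuous_hcomplete (n k : ℕ) : Continuous (hcomplete n k) := by
  unfold hcomplete
  exact continuous_finset_sum _ fun m _ => continuous_msprod _

lemma continuous_schur (n : ℕ) (κ : Fin n → ℕ) : Continuous (schur n κ) := by
  unfold schur
  apply Continuous.matrix_det
  apply continuous_pi; intro i; apply continuous_pi; intro j
  dsimp only [Matrix.of_apply]
  by_cases h : (i:ℕ) ≤ κ i + (j:ℕ)
  · simpa [h] using continuous_hcomplete n _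
  · simpa [h] using continuous_const

lemma pow_ne_pow_of_one_lt {t : ℝ} (ht : 1 < t) {p q : ℕ} (hpq : p ≠ q) : t ^ p ≠ t ^ q := by
  rcases hpq.lt_or_gt with h | h
  · exact ne_of_lt (pow_lt_pow_right₀ ht h)
  · exact (ne_of_lt (pow_lt_pow_right₀ ht h)).symm

lemma slope_pow_tendsto (p q : ℕ) :
    Tendsto (fun t : ℝ => (t^p - t^q)/(t - 1)) (nhdsWithin 1 (Set.Ioi 1)) (nhds ((p:ℝ) - q)) := by
  have h : HasDerivAt (fun t : ℝ => t^p - t^q) ((p:ℝ) - q) 1 := by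
    have h0 := (hasDerivAt_pow p (1:ℝ)).sub (hasDerivAt_pow q (1:ℝ))
    simp only [one_pow, mul_one] at h0
    exact h0
  have h2 := hasDerivAt_iff_tendsto_slope.mp h
  have h3 : Tendsto (slope (fun t : ℝ => t^p - t^q) 1) (nhdsWithin 1 (Set.Ioi 1))
      (nhds ((p:ℝ) - q)) := by
    refine h2.mono_left (nhdsWithin_mono 1 ?_)
    intro t ht
    simp only [Set.mem_compl_iff, Set.mem_singleton_iff]
    exact ne_of_gt ht
  refine h3.congr fun t => ?_
  simp [slope, div_eq_inv_mul]

lemma ratio_pow_tendsto {P Q R S : ℕ} (hRS : R ≠ S) :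
    Tendsto (fun t : ℝ => (t^P - t^Q)/(t^R - t^S)) (nhdsWithin 1 (Set.Ioi 1))
      (nhds (((P:ℝ) - Q)/((R:ℝ) - S))) := by
  have hne : (R:ℝ) - S ≠ 0 := by
    have : (R:ℝ) ≠ S := Nat.cast_injective.ne hRS
    exact sub_ne_zero_of_ne this
  have := (slope_pow_tendsto P Q).div (slope_pow_tendsto R S) hne
  refine this.congr' ?_
  filter_upwards [self_mem_nhdsWithin] with t ht
  have h1 : t - 1 ≠ 0 := sub_ne_zero_of_ne (ne_of_gt ht)
  rw [Pi.div_apply, div_div_div_cancel_right₀ h1]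

lemma schur_ones (n : ℕ) (κ : Fin n → ℕ) :
    schur n κ (fun _ => 1)
      = (∏ i : Fin n, ∏ j ∈ Finset.Ioi i,
          (((κ j + (n - 1 - (j:ℕ)) : ℕ):ℝ) - ((κ i + (n - 1 - (i:ℕ)) : ℕ):ℝ)))
        / (∏ i : Fin n, ∏ j ∈ Finset.Ioi i,
          (((n - 1 - (j:ℕ) : ℕ):ℝ) - ((n - 1 - (i:ℕ) : ℕ):ℝ))) := by
  classical
  set L : Fin n → ℕ := fun i => κ i + (n - 1 - (i:ℕ)) with hL
  set D : Fin n → ℕ := fun i => n - 1 - (i:ℕ) with hD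
  set u : ℝ → (Fin n → ℝ) := fun t k => t ^ (k:ℕ) with hu
  have hDne : ∀ i : Fin n, ∀ j ∈ Finset.Ioi i, D j ≠ D i := by
    intro i j hj
    rw [Finset.mem_Ioi] at hj
    have : (i:ℕ) < (j:ℕ) := hj
    have := j.isLt
    simp only [hD]; omega
  have hAmat : ∀ (κ' : Fin n → ℕ) (t : ℝ),
      (Amat n κ' (u t)).det = ∏ i : Fin n, ∏ j ∈ Finset.Ioi i,
        (t ^ (κ' j + (n - 1 - (j:ℕ))) - t ^ (κ' i + (n - 1 - (i:ℕ)))) := by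
    intro κ' t
    have : Amat n κ' (u t) = Matrix.vandermonde (fun i => t ^ (κ' i + (n - 1 - (i:ℕ)))) := by
      ext i k
      simp only [Amat, Matrix.of_apply, Matrix.vandermonde, hu]
      rw [← pow_mul, ← pow_mul, Nat.mul_comm]
    rw [this, Matrix.det_vandermonde]
  -- the key identity
  have key : ∀ t : ℝ, schur n κ (u t) * (∏ i : Fin n, ∏ j ∈ Finset.Ioi i,
        (t ^ D j - t ^ D i)) = ∏ i : Fin n, ∏ j ∈ Finset.Ioi i, (t ^ L j - t ^ L i) := by
    intro t
    have h1 := det_Amat n κ (u t)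
    rw [det_Emat, hAmat κ t, hAmat (fun _ => 0) t] at h1
    simp only [Nat.zero_add] at h1
    rw [h1.symm]
  have h1 : Tendsto (fun t : ℝ => schur n κ (u t)) (nhdsWithin 1 (Set.Ioi 1))
      (nhds (schur n κ (fun _ => 1))) := by
    have hc : Continuous fun t : ℝ => schur n κ (u t) := by
      apply (continuous_schur n κ).comp
      exact continuous_pi fun k => continuous_pow (k:ℕ)
    have := hc.tendsto 1
    have hval : schur n κ (u 1) = schur n κ (fun _ => 1) := by
      congr 1; funext k; simp [hu]
    rw [hval] at this
    exact this.mono_left nhdsWithin_le_nhds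
  have h2 : Tendsto (fun t : ℝ => schur n κ (u t)) (nhdsWithin 1 (Set.Ioi 1))
      (nhds (∏ i : Fin n, ∏ j ∈ Finset.Ioi i, (((L j:ℝ) - L i)/((D j:ℝ) - D i)))) := by
    have hprod : Tendsto (fun t : ℝ => ∏ i : Fin n, ∏ j ∈ Finset.Ioi i,
        ((t ^ L j - t ^ L i)/(t ^ D j - t ^ D i))) (nhdsWithin 1 (Set.Ioi 1))
        (nhds (∏ i : Fin n, ∏ j ∈ Finset.Ioi i, (((L j:ℝ) - L i)/((D j:ℝ) - D i)))) := by
      refine tendsto_finset_prod _ fun i _ => tendsto_finset_prod _ fun j hj => ?_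
      exact ratio_pow_tendsto (hDne i j hj)
    refine hprod.congr' ?_
    filter_upwards [self_mem_nhdsWithin] with t ht
    have hdenne : ∀ i : Fin n, ∀ j ∈ Finset.Ioi i, t ^ D j - t ^ D i ≠ 0 := fun i j hj =>
      sub_ne_zero_of_ne (pow_ne_pow_of_one_lt ht (hDne i j hj))
    have hdne : (∏ i : Fin n, ∏ j ∈ Finset.Ioi i, (t ^ D j - t ^ D i)) ≠ 0 :=
      Finset.prod_ne_zero_iff.mpr fun i _ => Finset.prod_ne_zero_iff.mpr fun j hj =>
        hdenne i j hj
    have : (∏ i : Fin n, ∏ j ∈ Finset.Ioi i, ((t ^ L j - t ^ L i)/(t ^ D j - t ^ D i)))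
        = (∏ i : Fin n, ∏ j ∈ Finset.Ioi i, (t ^ L j - t ^ L i))
          / (∏ i : Fin n, ∏ j ∈ Finset.Ioi i, (t ^ D j - t ^ D i)) := by
      rw [← Finset.prod_div_distrib]
      exact Finset.prod_congr rfl fun i _ => by rw [← Finset.prod_div_distrib]
    rw [this, eq_comm, eq_div_iff hdne]
    exact key t
  have := tendsto_nhds_unique h1 h2
  rw [this, ← Finset.prod_div_distrib]
  exact Finset.prod_congr rfl fun i _ => by rw [← Finset.prod_div_distrib]

section
variable {n : ℕ}

local notation "SBox" => Set.univ.pi (fun _ : Fin n => Set.Icc (0 : ℝ) 1)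

lemma indicator_pi_prod (F : Fin n → ℝ → ℝ) (u : Fin n → ℝ) :
    (SBox).indicator (fun u : Fin n → ℝ => ∏ k, F k (u k)) u
      = ∏ k, (Set.Icc (0:ℝ) 1).indicator (F k) (u k) := by
  by_cases hu : u ∈ SBox
  · rw [Set.indicator_of_mem hu]
    refine Finset.prod_congr rfl fun k _ => ?_
    rw [Set.indicator_of_mem (by exact hu k (Set.mem_univ k))]
  · rw [Set.indicator_of_notMem hu]
    rw [Set.mem_pi] at hu
    push_neg at hu
    obtain ⟨k, _, hk⟩ := hu
    refine (Finset.prod_eq_zero (Finset.mem_univ k) ?_).symm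
    rw [Set.indicator_of_notMem hk]

lemma integrable_prod_pi {F : Fin n → ℝ → ℝ} (hF : ∀ k, Continuous (F k)) :
    IntegrableOn (fun u : Fin n → ℝ => ∏ k, F k (u k)) SBox volume := by
  refine (integrable_indicator_iff
    (MeasurableSet.univ_pi fun _ => measurableSet_Icc)).mp ?_
  have : (SBox).indicator (fun u : Fin n → ℝ => ∏ k, F k (u k))
      = fun u => ∏ k, (Set.Icc (0:ℝ) 1).indicator (F k) (u k) := by
    funext u; exact indicator_pi_prod F u
  rw [this]
  apply Integrable.fintype_prod (f := fun k => (Set.Icc (0:ℝ) 1).indicator (F k))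
  intro k
  rw [integrable_indicator_iff measurableSet_Icc]
  exact (hF k).integrableOn_Icc

lemma integral_prod_pi {F : Fin n → ℝ → ℝ} (hF : ∀ k, Continuous (F k)) :
    ∫ u in SBox, ∏ k, F k (u k) = ∏ k, ∫ t in Set.Icc (0:ℝ) 1, F k t := by
  rw [← MeasureTheory.integral_indicator
    (MeasurableSet.univ_pi fun _ => measurableSet_Icc)]
  have : (SBox).indicator (fun u : Fin n → ℝ => ∏ k, F k (u k))
      = fun u => ∏ k, (Set.Icc (0:ℝ) 1).indicator (F k) (u k) := by
    funext u; exact indicator_pi_prod F u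
  rw [this]
  refine (MeasureTheory.integral_fintype_prod_eq_prod
    (f := fun k => (Set.Icc (0:ℝ) 1).indicator (F k))).trans ?_
  refine Finset.prod_congr rfl fun k _ => ?_
  rw [MeasureTheory.integral_indicator measurableSet_Icc]

lemma andreief (f g : Fin n → ℝ → ℝ) (hf : ∀ i, Continuous (f i))
    (hg : ∀ i, Continuous (g i)) :
    ∫ u in SBox,
        (Matrix.of fun i k : Fin n => f i (u k)).det *
        (Matrix.of fun i k : Fin n => g i (u k)).det
      = (Nat.factorial n : ℝ) * (Matrix.of fun i j : Fin n => ∫ t in Set.Icc (0:ℝ) 1, f i t * g j t).det := by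
  classical
  set M : Matrix (Fin n) (Fin n) ℝ :=
    Matrix.of fun i j : Fin n => ∫ t in Set.Icc (0:ℝ) 1, f i t * g j t with hM
  have hexp : ∀ u : Fin n → ℝ,
      (Matrix.of fun i k : Fin n => f i (u k)).det *
      (Matrix.of fun i k : Fin n => g i (u k)).det
      = ∑ σ : Equiv.Perm (Fin n), ∑ τ : Equiv.Perm (Fin n),
          (((Equiv.Perm.sign σ : ℤ) : ℝ) * ((Equiv.Perm.sign τ : ℤ) : ℝ)) *
            ∏ k, (f (σ k) (u k) * g (τ k) (u k)) := by
    intro u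
    rw [Matrix.det_apply', Matrix.det_apply', Finset.sum_mul_sum]
    refine Finset.sum_congr rfl fun σ _ => Finset.sum_congr rfl fun τ _ => ?_
    rw [Finset.prod_mul_distrib]
    simp only [Matrix.of_apply]
    ring
  have hint : ∀ σ τ : Equiv.Perm (Fin n),
      IntegrableOn (fun u : Fin n → ℝ =>
        (((Equiv.Perm.sign σ : ℤ) : ℝ) * ((Equiv.Perm.sign τ : ℤ) : ℝ)) *
          ∏ k, (f (σ k) (u k) * g (τ k) (u k))) SBox volume := by
    intro σ τ
    exact (integrable_prod_pi fun k => ((hf (σ k)).mul (hg (τ k)))).const_mul _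
  calc ∫ u in SBox,
        (Matrix.of fun i k : Fin n => f i (u k)).det *
        (Matrix.of fun i k : Fin n => g i (u k)).det
      = ∫ u in SBox, ∑ σ : Equiv.Perm (Fin n), ∑ τ : Equiv.Perm (Fin n),
          (((Equiv.Perm.sign σ : ℤ) : ℝ) * ((Equiv.Perm.sign τ : ℤ) : ℝ)) *
            ∏ k, (f (σ k) (u k) * g (τ k) (u k)) := by
        exact setIntegral_congr_fun (MeasurableSet.univ_pi fun _ => measurableSet_Icc)
          fun u _ => hexp u
    _ = ∑ σ : Equiv.Perm (Fin n), ∑ τ : Equiv.Perm (Fin n),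
          (((Equiv.Perm.sign σ : ℤ) : ℝ) * ((Equiv.Perm.sign τ : ℤ) : ℝ)) *
            ∏ k, ∫ t in Set.Icc (0:ℝ) 1, f (σ k) t * g (τ k) t := by
        rw [MeasureTheory.integral_finset_sum _ (fun σ _ =>
          integrable_finset_sum _ (fun τ _ => hint σ τ))]
        refine Finset.sum_congr rfl fun σ _ => ?_
        rw [MeasureTheory.integral_finset_sum _ (fun τ _ => hint σ τ)]
        refine Finset.sum_congr rfl fun τ _ => ?_
        rw [MeasureTheory.integral_const_mul]
        rw [integral_prod_pi (F := fun k t => f (σ k) t * g (τ k) t) fun k => ((hf (σ k)).mul (hg (τ k)))]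
    _ = ∑ σ : Equiv.Perm (Fin n), ∑ τ : Equiv.Perm (Fin n),
          (((Equiv.Perm.sign σ : ℤ) : ℝ) * ((Equiv.Perm.sign τ : ℤ) : ℝ)) *
            ∏ k, M (σ k) (τ k) := rfl
    _ = ∑ σ : Equiv.Perm (Fin n), ∑ π : Equiv.Perm (Fin n),
          (((Equiv.Perm.sign σ : ℤ) : ℝ) * ((Equiv.Perm.sign (π * σ) : ℤ) : ℝ)) *
            ∏ k, M (σ k) ((π * σ) k) := by
        refine Finset.sum_congr rfl fun σ _ => ?_
        refine (Finset.sum_bijective (fun π => π * σ)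
          (Group.mulRight_bijective σ) (by simp) ?_).symm
        intro π _
        rfl
    _ = ∑ σ : Equiv.Perm (Fin n), ∑ π : Equiv.Perm (Fin n),
          ((Equiv.Perm.sign π : ℤ) : ℝ) * ∏ i, M i (π i) := by
        refine Finset.sum_congr rfl fun σ _ => Finset.sum_congr rfl fun π _ => ?_
        have hsign : ((Equiv.Perm.sign (π * σ) : ℤ) : ℝ)
            = ((Equiv.Perm.sign π : ℤ) : ℝ) * ((Equiv.Perm.sign σ : ℤ) : ℝ) := by
          rw [map_mul]; push_cast; ring
        have hsq : ((Equiv.Perm.sign σ : ℤ) : ℝ) * ((Equiv.Perm.sign σ : ℤ) : ℝ) = 1 := by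
          rcases Int.units_eq_one_or (Equiv.Perm.sign σ) with h | h <;> rw [h] <;> norm_num
        have hprod : ∏ k, M (σ k) ((π * σ) k) = ∏ i, M i (π i) := by
          refine Equiv.prod_comp σ (fun i => M i (π i))
        rw [hprod, hsign]
        linear_combination (((Equiv.Perm.sign π : ℤ):ℝ) * ∏ i, M i (π i)) * hsq
    _ = (Nat.factorial n : ℝ) * M.det := by
        rw [Finset.sum_const]
        have hdet : ∑ π : Equiv.Perm (Fin n),
            ((Equiv.Perm.sign π : ℤ) : ℝ) * ∏ i, M i (π i) = M.det := by
          rw [← Matrix.det_transpose M, Matrix.det_apply']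
          rfl
        rw [hdet, Finset.card_univ, Fintype.card_perm, Fintype.card_fin, nsmul_eq_mul]
end

lemma beta_real {p q : ℝ} (hp : 0 < p) (hq : 0 < q) :
    ∫ t in Set.Icc (0:ℝ) 1, t^(p-1) * (1-t)^(q-1)
      = Real.Gamma p * Real.Gamma q / Real.Gamma (p+q) := by
  have hC := Complex.Gamma_mul_Gamma_eq_betaIntegral
    (s := (p:ℂ)) (t := (q:ℂ)) (by simpa using hp) (by simpa using hq)
  have hbeta : Complex.betaIntegral (p:ℂ) (q:ℂ)
      = ((∫ t in (0:ℝ)..1, t^(p-1) * (1-t)^(q-1) : ℝ) : ℂ) := by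
    rw [Complex.betaIntegral]
    rw [← intervalIntegral.integral_ofReal]
    refine intervalIntegral.integral_congr ?_
    intro x hx
    rw [Set.uIcc_of_le (by norm_num : (0:ℝ) ≤ 1)] at hx
    obtain ⟨hx0, hx1⟩ := hx
    beta_reduce
    have e1 : ((p:ℂ) - 1) = ((p - 1 : ℝ) : ℂ) := by push_cast; ring
    have e2 : ((q:ℂ) - 1) = ((q - 1 : ℝ) : ℂ) := by push_cast; ring
    have e3 : (1 - (x:ℂ)) = ((1 - x : ℝ) : ℂ) := by push_cast; ring
    rw [e1, e2, e3, ← Complex.ofReal_cpow hx0, ← Complex.ofReal_cpow (by linarith)]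
    push_cast
    ring
  rw [hbeta] at hC
  rw [← Complex.ofReal_add, Complex.Gamma_ofReal, Complex.Gamma_ofReal,
    Complex.Gamma_ofReal] at hC
  have hreal : Real.Gamma p * Real.Gamma q
      = Real.Gamma (p+q) * ∫ t in (0:ℝ)..1, t^(p-1) * (1-t)^(q-1) := by
    exact_mod_cast hC
  have hne : Real.Gamma (p+q) ≠ 0 := ne_of_gt (Real.Gamma_pos_of_pos (by linarith))
  have : ∫ t in (0:ℝ)..1, t^(p-1) * (1-t)^(q-1)
      = Real.Gamma p * Real.Gamma q / Real.Gamma (p+q) := by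
    field_simp
    linarith [hreal]
  rw [← this]
  rw [intervalIntegral.integral_of_le (by norm_num : (0:ℝ) ≤ 1)]
  rw [MeasureTheory.integral_Icc_eq_integral_Ioc]

lemma entry_integral {a b : ℝ} (ha : 0 < a) (hb : 0 < b) (c : ℕ) :
    ∫ t in Set.Icc (0:ℝ) 1, (t^a * (1-t)^b) * t^(c:ℕ)
      = Real.Gamma (a+1+c) * Real.Gamma (b+1) / Real.Gamma (a+1+c+(b+1)) := by
  have hcong : ∀ t ∈ Set.Icc (0:ℝ) 1,
      (t^a * (1-t)^b) * t^(c:ℕ) = t^((a+1+c)-1) * (1-t)^((b+1)-1) := by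
    intro t ht
    obtain ⟨ht0, ht1⟩ := ht
    have hb1 : (b+1)-1 = b := by ring
    rw [hb1]
    rcases eq_or_lt_of_le ht0 with h0 | h0
    · rw [← h0]
      rw [Real.zero_rpow (ne_of_gt ha), Real.zero_rpow (by push_cast; linarith)]
      ring
    · rw [← Real.rpow_natCast t c, mul_right_comm, ← Real.rpow_add h0,
        show a + (c:ℝ) = a + 1 + (c:ℝ) - 1 by ring]
  rw [setIntegral_congr_fun measurableSet_Icc hcong]
  exact beta_real (by push_cast; linarith) (by linarith)

lemma Gamma_add_nat {x : ℝ} (hx : 0 < x) (m : ℕ) :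
    Real.Gamma (x + m) = Real.Gamma x * ∏ t ∈ Finset.range m, (x + t) := by
  induction m with
  | zero => simp
  | succ m ih =>
    have hxm : x + (m:ℝ) ≠ 0 := by positivity
    have : x + ((m+1 : ℕ):ℝ) = (x + m) + 1 := by push_cast; ring
    rw [this, Real.Gamma_add_one hxm, ih, Finset.prod_range_succ]
    push_cast
    ring

section
variable (n : ℕ) (b : ℝ)

/-- the column polynomials. -/
noncomputable def Pp (j : Fin n) : Polynomial ℝ :=
  (∏ t ∈ Finset.range (n - 1 - (j:ℕ)), (Polynomial.X + Polynomial.C (t:ℝ))) *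
  (∏ t ∈ Finset.range (j:ℕ), (Polynomial.X + Polynomial.C (b + ((n - (j:ℕ) : ℕ):ℝ) + t)))

lemma Pp_natDegree (j : Fin n) : (Pp n b j).natDegree = n - 1 := by
  have h1 : (∏ t ∈ Finset.range (n - 1 - (j:ℕ)),
      (Polynomial.X + Polynomial.C ((t:ℝ)))).Monic :=
    monic_prod_of_monic _ _ fun t _ => monic_X_add_C _
  have h2 : (∏ t ∈ Finset.range (j:ℕ),
      (Polynomial.X + Polynomial.C (b + ((n - (j:ℕ) : ℕ):ℝ) + t))).Monic :=
    monic_prod_of_monic _ _ fun t _ => monic_X_add_C _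
  rw [Pp, h1.natDegree_mul h2]
  rw [natDegree_prod_of_monic _ _ fun t _ => monic_X_add_C _,
    natDegree_prod_of_monic _ _ fun t _ => monic_X_add_C _]
  simp only [natDegree_X_add_C, Finset.sum_const, Finset.card_range, smul_eq_mul, mul_one]
  have := j.isLt
  omega

lemma Pp_eval (j : Fin n) (x : ℝ) :
    (Pp n b j).eval x = (∏ t ∈ Finset.range (n - 1 - (j:ℕ)), (x + t)) *
      (∏ t ∈ Finset.range (j:ℕ), (x + (b + ((n - (j:ℕ) : ℕ):ℝ) + t))) := by
  simp [Pp, eval_prod]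
  try ring_nf

/-- coefficient matrix -/
noncomputable def Cmat : Matrix (Fin n) (Fin n) ℝ :=
  Matrix.of fun k j : Fin n => (Pp n b j).coeff (k : ℕ)

lemma entry_scalar (hb : 0 < b) {x : ℝ} (hx : 0 < x) (j : Fin n) :
    Real.Gamma (x + ((n - 1 - (j:ℕ) : ℕ):ℝ)) * Real.Gamma (b+1)
        / Real.Gamma (x + ((n - 1 - (j:ℕ) : ℕ):ℝ) + (b+1))
      = (Real.Gamma (b+1) * Real.Gamma x / Real.Gamma (x + b + n)) * (Pp n b j).eval x := by
  have hj := j.isLt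
  set m : ℕ := n - 1 - (j:ℕ) with hm
  have hnum : Real.Gamma (x + (m:ℝ)) = Real.Gamma x * ∏ t ∈ Finset.range m, (x + t) :=
    Gamma_add_nat hx m
  have hxbnj : (0:ℝ) < x + b + ((n - (j:ℕ) : ℕ):ℝ) := by positivity
  have hden : Real.Gamma (x + b + (n:ℝ))
      = Real.Gamma (x + (m:ℝ) + (b+1)) *
        ∏ t ∈ Finset.range (j:ℕ), (x + b + ((n - (j:ℕ) : ℕ):ℝ) + t) := by
    have e1 : x + b + (n:ℝ) = (x + b + ((n - (j:ℕ) : ℕ):ℝ)) + ((j:ℕ):ℝ) := by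
      have : ((n - (j:ℕ) : ℕ):ℝ) = (n:ℝ) - ((j:ℕ):ℝ) := by
        rw [Nat.cast_sub (le_of_lt hj)]
      rw [this]; ring
    have e2 : x + (m:ℝ) + (b+1) = x + b + ((n - (j:ℕ) : ℕ):ℝ) := by
      have h1 : ((m:ℕ):ℝ) = (n:ℝ) - 1 - ((j:ℕ):ℝ) := by
        rw [hm, Nat.cast_sub (by omega), Nat.cast_sub (by omega)]
        push_cast; ring
      have h2 : ((n - (j:ℕ) : ℕ):ℝ) = (n:ℝ) - ((j:ℕ):ℝ) := by
        rw [Nat.cast_sub (le_of_lt hj)]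
      rw [h1, h2]; ring
    rw [e1, Gamma_add_nat hxbnj (j:ℕ), e2]
  have hpos1 : 0 < Real.Gamma (x + (m:ℝ) + (b+1)) := by
    apply Real.Gamma_pos_of_pos; positivity
  have hpos2 : 0 < ∏ t ∈ Finset.range (j:ℕ), (x + b + ((n - (j:ℕ) : ℕ):ℝ) + t) := by
    apply Finset.prod_pos; intro t _; positivity
  rw [Pp_eval, hnum, hden]
  rw [div_mul_eq_mul_div, div_eq_div_iff (ne_of_gt hpos1)
    (ne_of_gt (mul_pos hpos1 hpos2))]
  rw [← hm]
  ring
end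

section
variable (n : ℕ) (b : ℝ)

lemma detM_factor (hb : 0 < b) (X : Fin n → ℝ) (hX : ∀ i, 0 < X i) :
    (Matrix.of fun i j : Fin n =>
      Real.Gamma (X i + ((n - 1 - (j:ℕ) : ℕ):ℝ)) * Real.Gamma (b+1)
        / Real.Gamma (X i + ((n - 1 - (j:ℕ) : ℕ):ℝ) + (b+1))).det
    = (∏ i, (Real.Gamma (b+1) * Real.Gamma (X i) / Real.Gamma (X i + b + n)))
      * ((Cmat n b).det * ∏ i : Fin n, ∏ j ∈ Finset.Ioi i, (X j - X i)) := by
  rcases Nat.eq_zero_or_pos n with hn | hn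
  · subst hn
    simp [Matrix.det_fin_zero]
  have hentry : (Matrix.of fun i j : Fin n =>
      Real.Gamma (X i + ((n - 1 - (j:ℕ) : ℕ):ℝ)) * Real.Gamma (b+1)
        / Real.Gamma (X i + ((n - 1 - (j:ℕ) : ℕ):ℝ) + (b+1)))
      = Matrix.of fun i j : Fin n =>
        (Real.Gamma (b+1) * Real.Gamma (X i) / Real.Gamma (X i + b + n)) *
          (Matrix.vandermonde X * Cmat n b) i j := by
    ext i j
    rw [Matrix.of_apply, entry_scalar n b hb (hX i) j, Matrix.of_apply]
    congr 1
    rw [Matrix.mul_apply]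
    rw [eval_eq_sum_range' (show (Pp n b j).natDegree < n by rw [Pp_natDegree]; omega) (X i)]
    rw [← Fin.sum_univ_eq_sum_range (fun k => (Pp n b j).coeff k * X i ^ k) n]
    refine Finset.sum_congr rfl fun k _ => ?_
    rw [Matrix.vandermonde, Cmat]
    simp only [Matrix.of_apply]
    ring
  rw [hentry, Matrix.det_mul_column, Matrix.det_mul, Matrix.det_vandermonde]
  ring
end

lemma continuous_rpow_const {q : ℝ} (hq : 0 < q) : Continuous fun t : ℝ => t ^ q := by
  rw [continuous_iff_continuousAt]
  intro x
  exact Real.continuousAt_rpow_const x q (Or.inr hq.le)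

lemma selberg_pos (n : ℕ) (a b : ℝ) (ha : 0 < a) (hb : 0 < b) :
    0 < ∫ u in Set.univ.pi (fun _ : Fin n => Set.Icc (0 : ℝ) 1),
        (∏ j, ∏ k ∈ Finset.Ioi j, |u j - u k| ^ (2 : ℝ)) *
          ∏ j, u j ^ a * (1 - u j) ^ b := by
  classical
  set H : (Fin n → ℝ) → ℝ := fun u =>
    (∏ j, ∏ k ∈ Finset.Ioi j, |u j - u k| ^ (2 : ℝ)) *
      ∏ j, u j ^ a * (1 - u j) ^ b with hH
  have hcont : Continuous H := by
    apply Continuous.mul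
    · refine continuous_finset_prod _ fun j _ => continuous_finset_prod _ fun k _ => ?_
      exact (continuous_rpow_const (by norm_num : (0:ℝ) < 2)).comp
        (((continuous_apply j).sub (continuous_apply k)).abs)
    · refine continuous_finset_prod _ fun j _ => Continuous.mul ?_ ?_
      · exact (continuous_rpow_const ha).comp (continuous_apply j)
      · exact (continuous_rpow_const hb).comp (continuous_const.sub (continuous_apply j))
  have hS : MeasurableSet (Set.univ.pi (fun _ : Fin n => Set.Icc (0 : ℝ) 1)) :=
    MeasurableSet.univ_pi fun _ => measurableSet_Icc
  have hcompact : IsCompact (Set.univ.pi (fun _ : Fin n => Set.Icc (0 : ℝ) 1)) :=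
    isCompact_univ_pi fun _ => isCompact_Icc
  have hint : IntegrableOn H (Set.univ.pi (fun _ : Fin n => Set.Icc (0 : ℝ) 1)) volume :=
    hcont.continuousOn.integrableOn_compact hcompact
  have hnn : 0 ≤ᵐ[volume.restrict (Set.univ.pi (fun _ : Fin n => Set.Icc (0 : ℝ) 1))] H := by
    refine MeasureTheory.ae_restrict_of_forall_mem hS ?_
    intro u hu
    rw [Set.mem_pi] at hu
    have h1 : 0 ≤ ∏ j, ∏ k ∈ Finset.Ioi j, |u j - u k| ^ (2 : ℝ) :=
      Finset.prod_nonneg fun j _ => Finset.prod_nonneg fun k _ =>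
        Real.rpow_nonneg (abs_nonneg _) 2
    have h2 : 0 ≤ ∏ j : Fin n, u j ^ a * (1 - u j) ^ b := by
      refine Finset.prod_nonneg fun j _ => mul_nonneg ?_ ?_
      · exact Real.rpow_nonneg (hu j (Set.mem_univ j)).1 a
      · exact Real.rpow_nonneg (by linarith [(hu j (Set.mem_univ j)).2]) b
    exact mul_nonneg h1 h2
  rw [MeasureTheory.setIntegral_pos_iff_support_of_nonneg_ae hnn hint]
  set U : Set (Fin n → ℝ) := (Set.univ.pi fun _ : Fin n => Set.Ioo (0:ℝ) 1) ∩
    (⋂ (p : Fin n × Fin n) (_ : p.1 ≠ p.2), {u : Fin n → ℝ | u p.1 ≠ u p.2}) with hU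
  have hUopen : IsOpen U := by
    refine IsOpen.inter (isOpen_set_pi Set.finite_univ fun _ _ => isOpen_Ioo) ?_
    refine isOpen_iInter_of_finite fun p => isOpen_iInter_of_finite fun hp => ?_
    exact isOpen_ne_fun (continuous_apply p.1) (continuous_apply p.2)
  have hUne : U.Nonempty := by
    refine ⟨fun k => ((k:ℕ)+1)/((n:ℕ)+1), ?_, ?_⟩
    · rw [Set.mem_pi]
      intro k _
      constructor
      · positivity
      · rw [div_lt_one (by positivity)]
        exact_mod_cast Nat.succ_lt_succ k.isLt
    · simp only [Set.mem_iInter]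
      intro p hp
      simp only [Set.mem_setOf_eq, ne_eq]
      intro heq
      apply hp
      have hne : ((n:ℝ)+1) ≠ 0 := by positivity
      rw [div_eq_div_iff hne hne] at heq
      have : (p.1:ℕ) = (p.2:ℕ) := by
        have hne2 : ((n:ℝ)+1) ≠ 0 := by positivity
        field_simp at heq
        have h : ((p.1:ℕ):ℝ) = ((p.2:ℕ):ℝ) := by linarith
        exact_mod_cast h
      exact Fin.ext this
  have hUsub : U ⊆ Function.support H ∩ Set.univ.pi (fun _ : Fin n => Set.Icc (0 : ℝ) 1) := by
    rintro u ⟨hu1, hu2⟩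
    rw [Set.mem_pi] at hu1
    constructor
    · rw [Function.mem_support, hH]
      have h1 : (0:ℝ) < ∏ j, ∏ k ∈ Finset.Ioi j, |u j - u k| ^ (2 : ℝ) := by
        refine Finset.prod_pos fun j _ => Finset.prod_pos fun k hk => ?_
        refine Real.rpow_pos_of_pos ?_ 2
        rw [abs_pos, sub_ne_zero]
        rw [Set.mem_iInter] at hu2
        have hjk : j ≠ k := ne_of_lt (Finset.mem_Ioi.mp hk)
        exact Set.mem_iInter.mp (hu2 (j, k)) hjk
      have h2 : (0:ℝ) < ∏ j : Fin n, u j ^ a * (1 - u j) ^ b := by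
        refine Finset.prod_pos fun j _ => mul_pos ?_ ?_
        · exact Real.rpow_pos_of_pos (hu1 j (Set.mem_univ j)).1 a
        · exact Real.rpow_pos_of_pos (by linarith [(hu1 j (Set.mem_univ j)).2]) b
      positivity
    · rw [Set.mem_pi]
      intro k hk
      exact Set.mem_Icc_of_Ioo (hu1 k hk)
  calc (0:ENNReal) < volume U := hUopen.measure_pos volume hUne
    _ ≤ volume (Function.support H ∩ Set.univ.pi (fun _ : Fin n => Set.Icc (0 : ℝ) 1)) :=
      measure_mono hUsub

/-- the Selberg–Jack integral in the Schur case (`θ = 1`).  Here the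
normalizing constant is the Selberg integral `S_n(a,b,1)`. -/
theorem selberg_schur_integral (n : ℕ) (a b : ℝ) (ha : 0 < a) (hb : 0 < b)
    (κ : Fin n → ℕ) (hκ : Antitone κ) :
    (∫ u in Set.univ.pi (fun _ : Fin n => Set.Icc (0 : ℝ) 1),
        (∏ j, u j ^ a * (1 - u j) ^ b) * schur n κ u *
          ∏ j, ∏ k ∈ Finset.Ioi j, (u j - u k) ^ 2) /
      (∫ u in Set.univ.pi (fun _ : Fin n => Set.Icc (0 : ℝ) 1),
        (∏ j, ∏ k ∈ Finset.Ioi j, |u j - u k| ^ (2 : ℝ)) *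
          ∏ j, u j ^ a * (1 - u j) ^ b) =
    schur n κ (fun _ => 1) *
      ∏ j : Fin n,
        (Real.Gamma (a + ((n : ℝ) - (j : ℕ)) + κ j) /
            Real.Gamma (a + b + (2 * (n : ℝ) - (j : ℕ)) + κ j)) *
          (Real.Gamma (a + b + (2 * (n : ℝ) - (j : ℕ))) /
            Real.Gamma (a + ((n : ℝ) - (j : ℕ)))) := by
  classical
  have hS : MeasurableSet (Set.univ.pi (fun _ : Fin n => Set.Icc (0 : ℝ) 1)) :=
    MeasurableSet.univ_pi fun _ => measurableSet_Icc
  set w : ℝ → ℝ := fun t => t ^ a * (1 - t) ^ b with hw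
  have hwcont : Continuous w := by
    exact (continuous_rpow_const ha).mul
      ((continuous_rpow_const hb).comp (continuous_const.sub continuous_id))
  set f : Fin n → ℝ → ℝ := fun i t => w t * t ^ (κ i + (n - 1 - (i:ℕ))) with hf
  set f0 : Fin n → ℝ → ℝ := fun i t => w t * t ^ ((0:ℕ) + (n - 1 - (i:ℕ))) with hf0
  set g : Fin n → ℝ → ℝ := fun i t => t ^ ((0:ℕ) + (n - 1 - (i:ℕ))) with hg
  have hfc : ∀ i, Continuous (f i) := fun i => hwcont.mul (continuous_pow _)
  have hf0c : ∀ i, Continuous (f0 i) := fun i => hwcont.mul (continuous_pow _)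
  have hgc : ∀ i, Continuous (g i) := fun i => continuous_pow _
  -- squared Vandermonde
  have hsq : ∀ u : Fin n → ℝ, ((Amat n (fun _ => 0) u).det)^2
      = ∏ j, ∏ k ∈ Finset.Ioi j, (u j - u k)^2 := by
    intro u
    have hmat : Amat n (fun _ => 0) u
        = ((Matrix.vandermonde u).transpose).submatrix (Fin.revPerm) id := by
      ext i k
      simp only [Amat, Matrix.of_apply, Matrix.submatrix_apply, Matrix.transpose_apply,
        Matrix.vandermonde, id_eq, Fin.revPerm_apply]
      congr 1
      rw [Fin.val_rev]
      omega
    rw [hmat, Matrix.det_permute, Matrix.det_transpose, Matrix.det_vandermonde, mul_pow]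
    have hs2 : (((Equiv.Perm.sign (Fin.revPerm : Equiv.Perm (Fin n))) : ℤ) : ℝ)^2 = 1 := by
      rcases Int.units_eq_one_or (Equiv.Perm.sign (Fin.revPerm : Equiv.Perm (Fin n)))
        with h | h <;> rw [h] <;> norm_num
    rw [hs2, one_mul, ← Finset.prod_pow]
    refine Finset.prod_congr rfl fun j _ => ?_
    rw [← Finset.prod_pow]
    refine Finset.prod_congr rfl fun k _ => ?_
    rw [← neg_sub (u j) (u k), neg_sq]
  -- matrices of f/g entries
  have hdetf : ∀ (κ' : Fin n → ℕ) (u : Fin n → ℝ),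
      (Matrix.of fun i k : Fin n => w (u k) * u k ^ (κ' i + (n - 1 - (i:ℕ)))).det
        = (∏ k, w (u k)) * (Amat n κ' u).det := by
    intro κ' u
    exact Matrix.det_mul_row (fun k => w (u k)) (Amat n κ' u)
  -- numerator
  have hN : (∫ u in Set.univ.pi (fun _ : Fin n => Set.Icc (0 : ℝ) 1),
        (∏ j, u j ^ a * (1 - u j) ^ b) * schur n κ u *
          ∏ j, ∏ k ∈ Finset.Ioi j, (u j - u k) ^ 2)
      = (Nat.factorial n : ℝ) *
        (Matrix.of fun i j : Fin n => ∫ t in Set.Icc (0:ℝ) 1, f i t * g j t).det := by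
    rw [← andreief f g hfc hgc]
    refine setIntegral_congr_fun hS fun u _ => ?_
    have h1 : (Matrix.of fun i k : Fin n => f i (u k)).det
        = (∏ k, w (u k)) * (Amat n κ u).det := hdetf κ u
    have h2 : (Matrix.of fun i k : Fin n => g i (u k)).det = (Amat n (fun _ => 0) u).det := rfl
    rw [h1, h2, det_Amat, det_Emat]
    have hww : (∏ j, u j ^ a * (1 - u j)^b) = ∏ k, w (u k) := rfl
    rw [← hsq u, hww]
    ring
  have hD : (∫ u in Set.univ.pi (fun _ : Fin n => Set.Icc (0 : ℝ) 1),
        (∏ j, ∏ k ∈ Finset.Ioi j, |u j - u k| ^ (2 : ℝ)) *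
          ∏ j, u j ^ a * (1 - u j) ^ b)
      = (Nat.factorial n : ℝ) *
        (Matrix.of fun i j : Fin n => ∫ t in Set.Icc (0:ℝ) 1, f0 i t * g j t).det := by
    rw [← andreief f0 g hf0c hgc]
    refine setIntegral_congr_fun hS fun u _ => ?_
    have h1 : (Matrix.of fun i k : Fin n => f0 i (u k)).det
        = (∏ k, w (u k)) * (Amat n (fun _ => 0) u).det := hdetf (fun _ => 0) u
    have h2 : (Matrix.of fun i k : Fin n => g i (u k)).det = (Amat n (fun _ => 0) u).det := rfl
    have habs : (∏ j, ∏ k ∈ Finset.Ioi j, |u j - u k| ^ (2 : ℝ))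
        = ∏ j, ∏ k ∈ Finset.Ioi j, (u j - u k)^2 := by
      refine Finset.prod_congr rfl fun j _ => Finset.prod_congr rfl fun k _ => ?_
      rw [show (2:ℝ) = ((2:ℕ):ℝ) by norm_num, Real.rpow_natCast, sq_abs]
    rw [h1, h2, habs]
    have hww : (∏ j, u j ^ a * (1 - u j)^b) = ∏ k, w (u k) := rfl
    rw [← hsq u, hww]
    ring
  -- the Gamma matrices
  set X : Fin n → ℝ := fun i => a + 1 + ((κ i + (n - 1 - (i:ℕ)) : ℕ):ℝ) with hX
  set Y : Fin n → ℝ := fun i => a + 1 + (((n - 1 - (i:ℕ)) : ℕ):ℝ) with hY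
  have hXpos : ∀ i, 0 < X i := fun i => by rw [hX]; positivity
  have hYpos : ∀ i, 0 < Y i := fun i => by rw [hY]; positivity
  have hMk : (Matrix.of fun i j : Fin n => ∫ t in Set.Icc (0:ℝ) 1, f i t * g j t)
      = Matrix.of (fun i j : Fin n =>
        Real.Gamma (X i + ((n - 1 - (j:ℕ) : ℕ):ℝ)) * Real.Gamma (b+1)
          / Real.Gamma (X i + ((n - 1 - (j:ℕ) : ℕ):ℝ) + (b+1))) := by
    ext i j
    simp only [Matrix.of_apply]
    have hfg : (fun t : ℝ => f i t * g j t)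
        = fun t => (t^a * (1-t)^b) * t^((κ i + (n - 1 - (i:ℕ))) + ((0:ℕ) + (n - 1 - (j:ℕ)))) := by
      funext t
      rw [hf, hg, hw, pow_add]
      ring
    rw [show (∫ t in Set.Icc (0:ℝ) 1, f i t * g j t)
        = ∫ t in Set.Icc (0:ℝ) 1,
          (t^a * (1-t)^b) * t^((κ i + (n - 1 - (i:ℕ))) + ((0:ℕ) + (n - 1 - (j:ℕ)))) from by
      rw [← hfg]]
    rw [entry_integral ha hb]
    have e1 : a + 1 + (((κ i + (n - 1 - (i:ℕ))) + ((0:ℕ) + (n - 1 - (j:ℕ))) : ℕ):ℝ)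
        = X i + ((n - 1 - (j:ℕ) : ℕ):ℝ) := by
      rw [hX]; push_cast; ring
    rw [e1]
  have hMk0 : (Matrix.of fun i j : Fin n => ∫ t in Set.Icc (0:ℝ) 1, f0 i t * g j t)
      = Matrix.of (fun i j : Fin n =>
        Real.Gamma (Y i + ((n - 1 - (j:ℕ) : ℕ):ℝ)) * Real.Gamma (b+1)
          / Real.Gamma (Y i + ((n - 1 - (j:ℕ) : ℕ):ℝ) + (b+1))) := by
    ext i j
    simp only [Matrix.of_apply]
    have hfg : (fun t : ℝ => f0 i t * g j t)
        = fun t => (t^a * (1-t)^b) * t^(((0:ℕ) + (n - 1 - (i:ℕ))) + ((0:ℕ) + (n - 1 - (j:ℕ)))) := by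
      funext t
      rw [hf0, hg, hw, pow_add]
      ring
    rw [show (∫ t in Set.Icc (0:ℝ) 1, f0 i t * g j t)
        = ∫ t in Set.Icc (0:ℝ) 1,
          (t^a * (1-t)^b) * t^(((0:ℕ) + (n - 1 - (i:ℕ))) + ((0:ℕ) + (n - 1 - (j:ℕ)))) from by
      rw [← hfg]]
    rw [entry_integral ha hb]
    have e1 : a + 1 + ((((0:ℕ) + (n - 1 - (i:ℕ))) + ((0:ℕ) + (n - 1 - (j:ℕ))) : ℕ):ℝ)
        = Y i + ((n - 1 - (j:ℕ) : ℕ):ℝ) := by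
      rw [hY]; push_cast; ring
    rw [e1]
  rw [hN, hD, hMk, hMk0, detM_factor n b hb X hXpos, detM_factor n b hb Y hYpos]
  -- positivity/nonvanishing
  have hfact : (0:ℝ) < (Nat.factorial n : ℝ) := by positivity
  have hGB : (0:ℝ) < Real.Gamma (b+1) := Real.Gamma_pos_of_pos (by linarith)
  have hA1 : (0:ℝ) < ∏ i, Real.Gamma (X i) :=
    Finset.prod_pos fun i _ => Real.Gamma_pos_of_pos (hXpos i)
  have hA2 : (0:ℝ) < ∏ i, Real.Gamma (X i + b + n) :=
    Finset.prod_pos fun i _ => Real.Gamma_pos_of_pos (by have := hXpos i; positivity)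
  have hB1 : (0:ℝ) < ∏ i, Real.Gamma (Y i) :=
    Finset.prod_pos fun i _ => Real.Gamma_pos_of_pos (hYpos i)
  have hB2 : (0:ℝ) < ∏ i, Real.Gamma (Y i + b + n) :=
    Finset.prod_pos fun i _ => Real.Gamma_pos_of_pos (by have := hYpos i; positivity)
  have hΔ0 : (∏ i : Fin n, ∏ j ∈ Finset.Ioi i, (Y j - Y i)) ≠ 0 := by
    refine Finset.prod_ne_zero_iff.mpr fun i _ => Finset.prod_ne_zero_iff.mpr fun j hj => ?_
    rw [Finset.mem_Ioi] at hj
    have hij : (i:ℕ) < (j:ℕ) := hj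
    have hjn := j.isLt
    have : (((n - 1 - (j:ℕ)) : ℕ):ℝ) < (((n - 1 - (i:ℕ)) : ℕ):ℝ) := by
      exact_mod_cast (by omega : (n - 1 - (j:ℕ)) < (n - 1 - (i:ℕ)))
    rw [hY]
    dsimp only
    intro hcontra
    have := sub_eq_zero.mp hcontra
    nlinarith [this]
  -- C ≠ 0 from positivity of the Selberg integral
  have hDpos := selberg_pos n a b ha hb
  rw [hD, hMk0, detM_factor n b hb Y hYpos] at hDpos
  have hDne := ne_of_gt hDpos
  have hC : (Cmat n b).det ≠ 0 := by
    intro hc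
    rw [hc] at hDne
    simp at hDne
  have hP0ne : (∏ i, (Real.Gamma (b+1) * Real.Gamma (Y i) / Real.Gamma (Y i + b + n))) ≠ 0 := by
    refine Finset.prod_ne_zero_iff.mpr fun i _ => ?_
    have h1 := Real.Gamma_pos_of_pos (hYpos i)
    have h2 := Real.Gamma_pos_of_pos (show (0:ℝ) < Y i + b + n by have := hYpos i; positivity)
    positivity
  -- rewrite the RHS Gamma arguments
  have hXe : ∀ j : Fin n, a + ((n : ℝ) - (j : ℕ)) + κ j = X j := by
    intro j
    have hjn := j.isLt
    rw [hX]
    dsimp only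
    rw [Nat.cast_add, Nat.cast_sub (by omega), Nat.cast_sub (by omega : (1:ℕ) ≤ n)]
    push_cast
    ring
  have hXbn : ∀ j : Fin n, a + b + (2 * (n : ℝ) - (j : ℕ)) + κ j = X j + b + n := by
    intro j
    rw [← hXe j]; ring
  have hYe : ∀ j : Fin n, a + ((n : ℝ) - (j : ℕ)) = Y j := by
    intro j
    have hjn := j.isLt
    rw [hY]
    dsimp only
    rw [Nat.cast_sub (by omega), Nat.cast_sub (by omega : (1:ℕ) ≤ n)]
    push_cast
    ring
  have hYbn : ∀ j : Fin n, a + b + (2 * (n : ℝ) - (j : ℕ)) = Y j + b + n := by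
    intro j
    rw [← hYe j]; ring
  have hRHSprod : (∏ j : Fin n,
        (Real.Gamma (a + ((n : ℝ) - (j : ℕ)) + κ j) /
            Real.Gamma (a + b + (2 * (n : ℝ) - (j : ℕ)) + κ j)) *
          (Real.Gamma (a + b + (2 * (n : ℝ) - (j : ℕ))) /
            Real.Gamma (a + ((n : ℝ) - (j : ℕ)))))
      = ((∏ i, Real.Gamma (X i)) * (∏ i, Real.Gamma (Y i + b + n)))
        / ((∏ i, Real.Gamma (X i + b + n)) * (∏ i, Real.Gamma (Y i))) := by
    rw [show ((∏ i, Real.Gamma (X i)) * (∏ i, Real.Gamma (Y i + b + n)))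
        / ((∏ i, Real.Gamma (X i + b + n)) * (∏ i, Real.Gamma (Y i)))
        = ∏ i : Fin n, (Real.Gamma (X i) / Real.Gamma (X i + b + n)) *
            (Real.Gamma (Y i + b + n) / Real.Gamma (Y i)) from by
      rw [Finset.prod_mul_distrib, Finset.prod_div_distrib, Finset.prod_div_distrib]
      field_simp]
    refine Finset.prod_congr rfl fun j _ => ?_
    rw [hXe j, hXbn j, hYe j, hYbn j]
  -- schur at ones
  have hschur1 : schur n κ (fun _ => 1)
      = (∏ i : Fin n, ∏ j ∈ Finset.Ioi i, (X j - X i))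
        / (∏ i : Fin n, ∏ j ∈ Finset.Ioi i, (Y j - Y i)) := by
    rw [schur_ones n κ]
    congr 1
    · refine Finset.prod_congr rfl fun i _ => Finset.prod_congr rfl fun j _ => ?_
      rw [hX]; dsimp only; ring
    · refine Finset.prod_congr rfl fun i _ => Finset.prod_congr rfl fun j _ => ?_
      rw [hY]; dsimp only; ring
  rw [hschur1, hRHSprod]
  -- final field computation
  have hPk : (∏ i, (Real.Gamma (b+1) * Real.Gamma (X i) / Real.Gamma (X i + b + n)))
      = Real.Gamma (b+1)^n * (∏ i, Real.Gamma (X i)) / (∏ i, Real.Gamma (X i + b + n)) := by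
    rw [Finset.prod_div_distrib, Finset.prod_mul_distrib, Finset.prod_const,
      Finset.card_univ, Fintype.card_fin]
  have hP0 : (∏ i, (Real.Gamma (b+1) * Real.Gamma (Y i) / Real.Gamma (Y i + b + n)))
      = Real.Gamma (b+1)^n * (∏ i, Real.Gamma (Y i)) / (∏ i, Real.Gamma (Y i + b + n)) := by
    rw [Finset.prod_div_distrib, Finset.prod_mul_distrib, Finset.prod_const,
      Finset.card_univ, Fintype.card_fin]
  rw [hPk, hP0]
  have hGBn : Real.Gamma (b+1)^n ≠ 0 := by positivity
  field_simp
end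

section
/- (Distributional invariance of singular values under truncation restructuring) Let $n \le n_1, n_2 \le m$ be positive integers. Let $T$ and $\widetilde{T}$ be respectively the $n_2\times n_1$ and $n_2 \times n$ upper-left truncations of a Haar-distributed unitary matrix from $U(m)$. Let $X$ be a fixed $n_1\times n$ complex matrix and $\widetilde{X} = (X^*X)^{1/2}$. Then the vector of singular values of $TX$ has the same distribution as the vector of singular values of $\widetilde{T}\widetilde{X}$. -/
open MeasureTheory Matrix ComplexOrder

noncomputable instance (m : ℕ) : MeasurableSpace (Matrix (Fin m) (Fin m) ℂ) := borel _

/-- The vector of singular values of a rectangular complex matrix (in some order):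
square roots of the eigenvalues of `Aᴴ * A`. -/
noncomputable def sval {p q : ℕ} (A : Matrix (Fin p) (Fin q) ℂ) : Fin q → ℝ :=
  fun i => Real.sqrt ((Matrix.isHermitian_conjTranspose_mul_self A).eigenvalues i)

/-- The positive semidefinite square root of a positive semidefinite matrix (the definition
Mathlib had as `Matrix.PosSemidef.sqrt`, since removed). -/
noncomputable def Matrix.PosSemidef.sqrt {n 𝕜 : Type*} [Fintype n] [RCLike 𝕜] [DecidableEq n]
    {A : Matrix n n 𝕜} (hA : A.PosSemidef) : Matrix n n 𝕜 :=
  hA.1.eigenvectorUnitary.1 * Matrix.diagonal ((↑) ∘ Real.sqrt ∘ hA.1.eigenvalues) *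
    (star hA.1.eigenvectorUnitary : Matrix n n 𝕜)

lemma sqrt_herm {n : ℕ} {A : Matrix (Fin n) (Fin n) ℂ} (hA : A.PosSemidef) :
    (hA.sqrt)ᴴ = hA.sqrt := by
  unfold Matrix.PosSemidef.sqrt
  simp only [Matrix.conjTranspose_mul, Matrix.diagonal_conjTranspose, Matrix.mul_assoc,
    Matrix.star_eq_conjTranspose, Matrix.conjTranspose_conjTranspose]
  congr 3
  funext i
  simp

lemma sqrt_mul_self' {n : ℕ} {A : Matrix (Fin n) (Fin n) ℂ} (hA : A.PosSemidef) :
    hA.sqrt * hA.sqrt = A := by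
  unfold Matrix.PosSemidef.sqrt
  conv_rhs => rw [hA.1.spectral_theorem, Unitary.conjStarAlgAut_apply]
  have hu : (star hA.1.eigenvectorUnitary : Matrix (Fin n) (Fin n) ℂ) *
      hA.1.eigenvectorUnitary.1 = 1 := Unitary.coe_star_mul_self _
  rw [show ∀ a b c d e f : Matrix (Fin n) (Fin n) ℂ, a * b * c * (d * e * f) = a * (b * (c * d) * e) * f
    from fun a b c d e f => by simp only [Matrix.mul_assoc], hu, Matrix.mul_one,
    Matrix.diagonal_mul_diagonal]
  congr 3
  funext i
  simp only [Function.comp_apply]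
  rw [← RCLike.ofReal_mul, Real.mul_self_sqrt (hA.eigenvalues_nonneg i)]

instance (m : ℕ) : BorelSpace (Matrix (Fin m) (Fin m) ℂ) := ⟨rfl⟩

namespace TruncAux

lemma toEuclideanLin_mul {p q r : ℕ} (C : Matrix (Fin p) (Fin q) ℂ)
    (D : Matrix (Fin q) (Fin r) ℂ) :
    Matrix.toEuclideanLin (C * D) =
      (Matrix.toEuclideanLin C).comp (Matrix.toEuclideanLin D) := by
  simp only [Matrix.toEuclideanLin_eq_toLin]
  exact Matrix.toLin_mul _ _ _ _ _

lemma inner_toEuclideanLin {p q : ℕ} (C : Matrix (Fin p) (Fin q) ℂ)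
    (x y : EuclideanSpace ℂ (Fin q)) :
    (inner ℂ (Matrix.toEuclideanLin C x) (Matrix.toEuclideanLin C y) : ℂ) =
      inner ℂ x (Matrix.toEuclideanLin (Cᴴ * C) y) := by
  rw [toEuclideanLin_mul, LinearMap.comp_apply,
    Matrix.toEuclideanLin_conjTranspose_eq_adjoint, LinearMap.adjoint_inner_right]

/-- If `AᴴA = BᴴB` then `A = V B` for some unitary `V`. -/
lemma exists_unitary_mul_eq {m n : ℕ} (A B : Matrix (Fin m) (Fin n) ℂ)
    (h : Aᴴ * A = Bᴴ * B) :
    ∃ V : Matrix (Fin m) (Fin m) ℂ, Vᴴ * V = 1 ∧ V * B = A := by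
  classical
  set f := Matrix.toEuclideanLin A with hf
  set g := Matrix.toEuclideanLin B with hg
  have hinner : ∀ x y, (inner ℂ (f x) (f y) : ℂ) = inner ℂ (g x) (g y) := by
    intro x y
    rw [hf, hg, inner_toEuclideanLin, inner_toEuclideanLin, h]
  have hnorm : ∀ x, ‖f x‖ = ‖g x‖ := by
    intro x
    have h1 : (inner ℂ (f x) (f x) : ℂ) = inner ℂ (g x) (g x) := hinner x x
    rw [@norm_eq_sqrt_re_inner ℂ, @norm_eq_sqrt_re_inner ℂ, h1]
  have hker : LinearMap.ker g ≤ LinearMap.ker f := by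
    intro x hx
    rw [LinearMap.mem_ker] at hx ⊢
    have := hnorm x
    rw [hx, norm_zero, norm_eq_zero] at this
    exact this
  let fbar := (LinearMap.ker g).liftQ f hker
  let L0 : LinearMap.range g →ₗ[ℂ] EuclideanSpace ℂ (Fin m) :=
    fbar ∘ₗ (g.quotKerEquivRange.symm : LinearMap.range g ≃ₗ[ℂ] _).toLinearMap
  have hL0 : ∀ x, L0 ⟨g x, LinearMap.mem_range_self g x⟩ = f x := by
    intro x
    show fbar (g.quotKerEquivRange.symm ⟨g x, LinearMap.mem_range_self g x⟩) = f x
    rw [LinearMap.quotKerEquivRange_symm_apply_image]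
    exact Submodule.liftQ_apply _ f x
  have hL0norm : ∀ s : LinearMap.range g, ‖L0 s‖ = ‖s‖ := by
    rintro ⟨-, x, rfl⟩
    show ‖L0 ⟨g x, LinearMap.mem_range_self g x⟩‖ = ‖g x‖
    rw [hL0 x]
    exact hnorm x
  let L : LinearMap.range g →ₗᵢ[ℂ] EuclideanSpace ℂ (Fin m) := ⟨L0, hL0norm⟩
  let W := L.extend
  have hW : ∀ x, W (g x) = f x := by
    intro x
    have := L.extend_apply ⟨g x, LinearMap.mem_range_self g x⟩
    exact this.trans (hL0 x)
  set V := Matrix.toEuclideanLin.symm W.toLinearMap with hV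
  have hVlin : Matrix.toEuclideanLin V = W.toLinearMap :=
    Matrix.toEuclideanLin.apply_symm_apply W.toLinearMap
  refine ⟨V, ?_, ?_⟩
  · apply Matrix.toEuclideanLin.injective
    rw [toEuclideanLin_mul, Matrix.toEuclideanLin_conjTranspose_eq_adjoint, hVlin]
    have h1 : Matrix.toEuclideanLin (1 : Matrix (Fin m) (Fin m) ℂ) = LinearMap.id := by
      simp [Matrix.toEuclideanLin_eq_toLin]
    rw [h1]
    apply LinearMap.ext; intro x
    apply ext_inner_right ℂ
    intro y
    rw [LinearMap.comp_apply, LinearMap.adjoint_inner_left, LinearMap.id_apply]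
    exact W.inner_map_map x y
  · apply Matrix.toEuclideanLin.injective
    rw [toEuclideanLin_mul, hVlin]
    apply LinearMap.ext; intro x
    exact hW x

section Meas

variable {m : ℕ}

lemma meas_ct : Measurable (fun S : Matrix (Fin m) (Fin m) ℂ => Sᴴ) :=
  (continuous_id.matrix_conjTranspose).measurable

lemma meas_mul_left (U : Matrix (Fin m) (Fin m) ℂ) :
    Measurable (fun S : Matrix (Fin m) (Fin m) ℂ => U * S) :=
  (continuous_const.matrix_mul continuous_id).measurable

lemma meas_mul_right (U : Matrix (Fin m) (Fin m) ℂ) :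
    Measurable (fun S : Matrix (Fin m) (Fin m) ℂ => S * U) :=
  (continuous_id.matrix_mul continuous_const).measurable

lemma meas_unitary_set : MeasurableSet {S : Matrix (Fin m) (Fin m) ℂ | Sᴴ * S = 1} := by
  have : Continuous (fun S : Matrix (Fin m) (Fin m) ℂ => Sᴴ * S) :=
    (continuous_id.matrix_conjTranspose).matrix_mul continuous_id
  exact (isClosed_singleton.preimage this).measurableSet

variable (μ : Measure (Matrix (Fin m) (Fin m) ℂ)) [IsProbabilityMeasure μ]
  (hsupp : ∀ᵐ S ∂μ, Sᴴ * S = 1)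
  (hinv : ∀ U : Matrix (Fin m) (Fin m) ℂ, Uᴴ * U = 1 →
    Measure.map (fun S => U * S) μ = μ)

include hsupp hinv in
/-- A left-invariant probability measure on the unitary group is invariant under
conjugate transposition. -/
lemma map_conjTranspose_eq : Measure.map (fun S => Sᴴ) μ = μ := by
  set ν := Measure.map (fun S : Matrix (Fin m) (Fin m) ℂ => Sᴴ) μ with hν
  haveI : IsProbabilityMeasure ν := Measure.isProbabilityMeasure_map meas_ct.aemeasurable
  have hν_supp : ∀ᵐ S ∂ν, Sᴴ * S = 1 := by
    rw [hν, ae_map_iff meas_ct.aemeasurable meas_unitary_set]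
    filter_upwards [hsupp] with S hS
    rw [conjTranspose_conjTranspose]
    exact mul_eq_one_comm.mp hS
  have hν_right : ∀ U : Matrix (Fin m) (Fin m) ℂ, Uᴴ * U = 1 →
      Measure.map (fun S => S * U) ν = ν := by
    intro U hU
    have hU' : (Uᴴ)ᴴ * Uᴴ = 1 := by
      rw [conjTranspose_conjTranspose]; exact mul_eq_one_comm.mp hU
    calc Measure.map (fun S => S * U) ν
        = Measure.map ((fun S : Matrix (Fin m) (Fin m) ℂ => S * U) ∘
            (fun S => Sᴴ)) μ := Measure.map_map (meas_mul_right U) meas_ct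
      _ = Measure.map ((fun S : Matrix (Fin m) (Fin m) ℂ => Sᴴ) ∘
            (fun S => Uᴴ * S)) μ := by
          congr 1; funext S; simp [Matrix.conjTranspose_mul]
      _ = Measure.map (fun S : Matrix (Fin m) (Fin m) ℂ => Sᴴ)
            (Measure.map (fun S => Uᴴ * S) μ) :=
          (Measure.map_map meas_ct (meas_mul_left Uᴴ)).symm
      _ = ν := by rw [hinv _ hU']
  haveI : SecondCountableTopology (Matrix (Fin m) (Fin m) ℂ) := 
    inferInstanceAs (SecondCountableTopology (Fin m → Fin m → ℂ))
  have hmul : Measurable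
      (fun p : Matrix (Fin m) (Fin m) ℂ × Matrix (Fin m) (Fin m) ℂ => p.1 * p.2) :=
    (continuous_fst.matrix_mul continuous_snd).measurable
  ext E hE
  have hs : MeasurableSet ((fun p : Matrix (Fin m) (Fin m) ℂ × Matrix (Fin m) (Fin m) ℂ
      => p.1 * p.2) ⁻¹' E) := hmul hE
  have h1 : (ν.prod μ) ((fun p : Matrix (Fin m) (Fin m) ℂ × Matrix (Fin m) (Fin m) ℂ
      => p.1 * p.2) ⁻¹' E) = μ E := by
    rw [Measure.prod_apply hs]
    have hae : ∀ᵐ S ∂ν, μ (Prod.mk S ⁻¹' ((fun p : Matrix (Fin m) (Fin m) ℂ ×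
        Matrix (Fin m) (Fin m) ℂ => p.1 * p.2) ⁻¹' E)) = μ E := by
      filter_upwards [hν_supp] with S hS
      have hpre : Prod.mk S ⁻¹' ((fun p : Matrix (Fin m) (Fin m) ℂ ×
          Matrix (Fin m) (Fin m) ℂ => p.1 * p.2) ⁻¹' E) = (fun T => S * T) ⁻¹' E := rfl
      rw [hpre, ← Measure.map_apply (meas_mul_left S) hE, hinv S hS]
    rw [lintegral_congr_ae hae, lintegral_const, measure_univ, mul_one]
  have h2 : (ν.prod μ) ((fun p : Matrix (Fin m) (Fin m) ℂ × Matrix (Fin m) (Fin m) ℂ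
      => p.1 * p.2) ⁻¹' E) = ν E := by
    rw [Measure.prod_apply_symm hs]
    have hae : ∀ᵐ T ∂μ, ν ((fun S => (S, T)) ⁻¹' ((fun p : Matrix (Fin m) (Fin m) ℂ ×
        Matrix (Fin m) (Fin m) ℂ => p.1 * p.2) ⁻¹' E)) = ν E := by
      filter_upwards [hsupp] with T hT
      have hpre : (fun S => (S, T)) ⁻¹' ((fun p : Matrix (Fin m) (Fin m) ℂ ×
          Matrix (Fin m) (Fin m) ℂ => p.1 * p.2) ⁻¹' E) = (fun S => S * T) ⁻¹' E := rfl
      rw [hpre, ← Measure.map_apply (meas_mul_right T) hE, hν_right T hT]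
    rw [lintegral_congr_ae hae, lintegral_const, measure_univ, mul_one]
  rw [← h2, h1]

include hsupp hinv in
/-- Left invariance implies right invariance. -/
lemma map_mul_right_eq (V : Matrix (Fin m) (Fin m) ℂ) (hV : Vᴴ * V = 1) :
    Measure.map (fun S => S * V) μ = μ := by
  have hV' : (Vᴴ)ᴴ * Vᴴ = 1 := by
    rw [conjTranspose_conjTranspose]; exact mul_eq_one_comm.mp hV
  conv_lhs => rw [← map_conjTranspose_eq μ hsupp hinv]
  rw [Measure.map_map (meas_mul_right V) meas_ct]
  have hcomp : ((fun S : Matrix (Fin m) (Fin m) ℂ => S * V) ∘ (fun S => Sᴴ)) =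
      ((fun S : Matrix (Fin m) (Fin m) ℂ => Sᴴ) ∘ (fun S => Vᴴ * S)) := by
    funext S; simp [Matrix.conjTranspose_mul]
  rw [hcomp, ← Measure.map_map meas_ct (meas_mul_left Vᴴ), hinv _ hV',
    map_conjTranspose_eq μ hsupp hinv]

/-- Right multiplication by a unitary as a measurable equivalence. -/
noncomputable def mulRightEquiv (V : Matrix (Fin m) (Fin m) ℂ) (hV : Vᴴ * V = 1) :
    Matrix (Fin m) (Fin m) ℂ ≃ᵐ Matrix (Fin m) (Fin m) ℂ where
  toFun := fun S => S * V
  invFun := fun S => S * Vᴴ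
  left_inv := fun S => by
    show S * V * Vᴴ = S
    rw [Matrix.mul_assoc, mul_eq_one_comm.mp hV, Matrix.mul_one]
  right_inv := fun S => by
    show S * Vᴴ * V = S
    rw [Matrix.mul_assoc, hV, Matrix.mul_one]
  measurable_toFun := meas_mul_right V
  measurable_invFun := meas_mul_right Vᴴ

end Meas

section Sub

lemma emb_orth {p m : ℕ} (hpm : p ≤ m) :
    ((1 : Matrix (Fin m) (Fin m) ℂ).submatrix id (Fin.castLE hpm))ᴴ *
      ((1 : Matrix (Fin m) (Fin m) ℂ).submatrix id (Fin.castLE hpm)) = 1 := by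
  ext a b
  simp only [Matrix.mul_apply, Matrix.conjTranspose_apply, Matrix.submatrix_apply, id_eq,
    Matrix.one_apply, apply_ite (star : ℂ → ℂ), star_one, star_zero, ite_mul, one_mul, zero_mul]
  rw [Finset.sum_ite_eq' Finset.univ (Fin.castLE hpm a)]
  simp [Fin.castLE_inj, eq_comm]

lemma submatrix_mul_eq {n p q' m : ℕ} (hpm : p ≤ m) (hqm : q' ≤ m)
    (S : Matrix (Fin m) (Fin m) ℂ) (X : Matrix (Fin p) (Fin n) ℂ) :
    (S.submatrix (Fin.castLE hqm) (Fin.castLE hpm)) * X =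
      (S * ((1 : Matrix (Fin m) (Fin m) ℂ).submatrix id (Fin.castLE hpm) * X)).submatrix
        (Fin.castLE hqm) id := by
  ext i j
  simp only [Matrix.mul_apply, Matrix.submatrix_apply, id_eq, Matrix.one_apply,
    ite_mul, one_mul, zero_mul, Finset.mul_sum]
  rw [Finset.sum_comm]
  refine Finset.sum_congr rfl fun l _ => ?_
  simp only [mul_ite, mul_zero]
  rw [Finset.sum_ite_eq' Finset.univ (Fin.castLE hpm l)
    (fun x => S (Fin.castLE hqm i) x * X l j)]
  simp

end Sub

end TruncAux

/-- for `S` Haar-distributed on `U(m)` (modelled by a probability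
measure on matrices supported on unitaries and invariant under left translation by
unitaries), the singular values of `T·X` and of `T̃·(X^*X)^{1/2}` have the same
distribution, where `T`, `T̃` are the `n₂×n₁` and `n₂×n` upper-left truncations of `S`.
Equality in distribution of the unordered collection of singular values is expressed
through symmetric continuous test functions. -/
theorem truncation_restructuring (n n₁ n₂ m : ℕ) (hn : 1 ≤ n)
    (h1 : n ≤ n₁) (h2 : n ≤ n₂) (h1m : n₁ ≤ m) (h2m : n₂ ≤ m)
    (X : Matrix (Fin n₁) (Fin n) ℂ)
    (μ : Measure (Matrix (Fin m) (Fin m) ℂ)) [IsProbabilityMeasure μ]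
    (hsupp : ∀ᵐ S ∂μ, Sᴴ * S = 1)
    (hinv : ∀ U : Matrix (Fin m) (Fin m) ℂ, Uᴴ * U = 1 →
      Measure.map (fun S => U * S) μ = μ) :
    ∀ f : (Fin n → ℝ) → ℝ, Continuous f →
      (∀ (v : Fin n → ℝ) (σ : Equiv.Perm (Fin n)), f (v ∘ σ) = f v) →
      (∫ S, f (sval ((S.submatrix (Fin.castLE h2m) (Fin.castLE h1m)) * X)) ∂μ) =
        ∫ S, f (sval ((S.submatrix (Fin.castLE h2m) (Fin.castLE (h1.trans h1m))) *
          (Matrix.posSemidef_conjTranspose_mul_self X).sqrt)) ∂μ := by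
  intro f _ _
  classical
  set Y := (Matrix.posSemidef_conjTranspose_mul_self X).sqrt with hY
  set E₁ := (1 : Matrix (Fin m) (Fin m) ℂ).submatrix id (Fin.castLE h1m) with hE₁
  set E₂ := (1 : Matrix (Fin m) (Fin m) ℂ).submatrix id (Fin.castLE (h1.trans h1m)) with hE₂
  set M := E₁ * X with hM
  set N := E₂ * Y with hN
  have hMM : Mᴴ * M = Nᴴ * N := by
    rw [hM, hN, Matrix.conjTranspose_mul, Matrix.conjTranspose_mul,
      Matrix.mul_assoc, Matrix.mul_assoc, ← Matrix.mul_assoc E₁ᴴ E₁ X,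
      ← Matrix.mul_assoc E₂ᴴ E₂ Y, hE₁, hE₂, TruncAux.emb_orth h1m,
      TruncAux.emb_orth (h1.trans h1m), Matrix.one_mul, Matrix.one_mul]
    have hYh : Yᴴ = Y :=
      sqrt_herm (Matrix.posSemidef_conjTranspose_mul_self X)
    rw [hYh, hY, sqrt_mul_self' (Matrix.posSemidef_conjTranspose_mul_self X)]
  obtain ⟨V, hV, hVN⟩ := TruncAux.exists_unitary_mul_eq M N hMM
  have key1 : ∀ S : Matrix (Fin m) (Fin m) ℂ,
      (S.submatrix (Fin.castLE h2m) (Fin.castLE h1m)) * X =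
        ((S * V) * N).submatrix (Fin.castLE h2m) id := by
    intro S
    rw [TruncAux.submatrix_mul_eq h1m h2m S X, ← hE₁, ← hM, ← hVN, ← Matrix.mul_assoc]
  have key2 : ∀ S : Matrix (Fin m) (Fin m) ℂ,
      (S.submatrix (Fin.castLE h2m) (Fin.castLE (h1.trans h1m))) * Y =
        (S * N).submatrix (Fin.castLE h2m) id := by
    intro S
    rw [TruncAux.submatrix_mul_eq (h1.trans h1m) h2m S Y, ← hE₂, ← hN]
  calc (∫ S, f (sval ((S.submatrix (Fin.castLE h2m) (Fin.castLE h1m)) * X)) ∂μ)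
      = ∫ S, f (sval (((S * V) * N).submatrix (Fin.castLE h2m) id)) ∂μ := by
        exact integral_congr_ae (Filter.Eventually.of_forall fun S =>
          congrArg (fun A => f (sval A)) (key1 S))
    _ = ∫ S, f (sval ((S * N).submatrix (Fin.castLE h2m) id)) ∂μ := by
        have := MeasureTheory.integral_map_equiv (μ := μ) (TruncAux.mulRightEquiv V hV)
          (fun S => f (sval ((S * N).submatrix (Fin.castLE h2m) id)))
        rw [show ⇑(TruncAux.mulRightEquiv V hV) = fun S : Matrix (Fin m) (Fin m) ℂ => S * V
            from rfl, TruncAux.map_mul_right_eq μ hsupp hinv V hV] at this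
        exact this.symm
    _ = ∫ S, f (sval ((S.submatrix (Fin.castLE h2m) (Fin.castLE (h1.trans h1m))) * Y)) ∂μ := by
        exact integral_congr_ae (Filter.Eventually.of_forall fun S =>
          (congrArg (fun A => f (sval A)) (key2 S)).symm)
end

section
/- As $\epsilon \to 0^+$ with $q = e^{-\epsilon}$, for fixed real $a, b > 0$, the ratio $\frac{(q^a;q)_\infty}{(q^b;q)_\infty}$ is asymptotic to $\frac{\Gamma(b)}{\Gamma(a)}\epsilon^{b-a}$, i.e. $\lim_{\epsilon\to 0^+} \epsilon^{a-b}\frac{(q^a;q)_\infty}{(q^b;q)_\infty} = \frac{\Gamma(b)}{\Gamma(a)}$. -/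
set_option maxHeartbeats 1000000


/-- Infinite q-Pochhammer symbol `(z;q)_∞ = ∏_{i≥0} (1 - qⁱ z)`. -/
noncomputable def pochInf (q z : ℝ) : ℝ := ∏' i : ℕ, (1 - q ^ i * z)

namespace PochAux

open Real Filter Finset

noncomputable def g (x : ℝ) : ℝ := Real.log (1 - Real.exp (-x))

lemma one_sub_exp_pos {x : ℝ} (hx : 0 < x) : 0 < 1 - Real.exp (-x) := by
  have := Real.exp_lt_one_iff.mpr (neg_neg_iff_pos.mpr hx)
  linarith

lemma g_neg {x : ℝ} (hx : 0 < x) : g x < 0 := by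
  have h1 := one_sub_exp_pos hx
  have h2 : Real.exp (-x) > 0 := Real.exp_pos _
  exact Real.log_neg h1 (by linarith)

/-- concavity upper bound: `g y - g x ≤ (y-x)/(e^x - 1)` -/
lemma g_diff_le {x y : ℝ} (hx : 0 < x) (hxy : x ≤ y) :
    g y - g x ≤ (y - x) / (Real.exp x - 1) := by
  have hy : 0 < y := lt_of_lt_of_le hx hxy
  have hA := one_sub_exp_pos hx
  have hB := one_sub_exp_pos hy
  have hEx : (1:ℝ) < Real.exp x := Real.one_lt_exp_iff.mpr hx
  have hlog : g y - g x ≤ (1 - Real.exp (-y)) / (1 - Real.exp (-x)) - 1 := by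
    rw [g, g, ← Real.log_div hB.ne' hA.ne']
    exact Real.log_le_sub_one_of_pos (div_pos hB hA)
  refine hlog.trans ?_
  rw [div_sub_one hA.ne', div_le_div_iff₀ hA (by linarith)]
  -- (exp(-x) - exp(-y)) * (exp x - 1) ≤ (y - x) * (1 - exp (-x))
  have E1 : Real.exp x * Real.exp (-x) = 1 := by rw [← Real.exp_add]; simp
  have E2 : Real.exp x * Real.exp (-y) = Real.exp (x - y) := by rw [← Real.exp_add]; ring_nf
  have E3 : 1 - (y - x) ≤ Real.exp (x - y) := by
    have := Real.add_one_le_exp (x - y); linarith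
  have E4 : (0:ℝ) < Real.exp (-y) := Real.exp_pos _
  nlinarith [Real.exp_pos (-x)]

/-- concavity lower bound: `(y-x)/(e^y - 1) ≤ g y - g x` -/
lemma le_g_diff {x y : ℝ} (hx : 0 < x) (hxy : x ≤ y) :
    (y - x) / (Real.exp y - 1) ≤ g y - g x := by
  have hy : 0 < y := lt_of_lt_of_le hx hxy
  have hA := one_sub_exp_pos hx
  have hB := one_sub_exp_pos hy
  have hEy : (1:ℝ) < Real.exp y := Real.one_lt_exp_iff.mpr hy
  have hlog : 1 - (1 - Real.exp (-x)) / (1 - Real.exp (-y)) ≤ g y - g x := by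
    rw [g, g, ← Real.log_div hB.ne' hA.ne']
    have h1 : Real.log ((1 - Real.exp (-x)) / (1 - Real.exp (-y)))
        ≤ (1 - Real.exp (-x)) / (1 - Real.exp (-y)) - 1 :=
      Real.log_le_sub_one_of_pos (div_pos hA hB)
    have h2 : Real.log ((1 - Real.exp (-y)) / (1 - Real.exp (-x)))
        = - Real.log ((1 - Real.exp (-x)) / (1 - Real.exp (-y))) := by
      rw [← Real.log_inv]; congr 1; field_simp
    rw [h2]; linarith
  refine le_trans ?_ hlog
  rw [div_le_iff₀ (by linarith : (0:ℝ) < Real.exp y - 1)] at *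
  have hq : Real.exp y * (1 - Real.exp (-y)) = Real.exp y - 1 := by
    have : Real.exp y * Real.exp (-y) = 1 := by rw [← Real.exp_add]; simp
    nlinarith
  have E2 : Real.exp y * Real.exp (-x) = Real.exp (y - x) := by rw [← Real.exp_add]; ring_nf
  have E3 : (y - x) + 1 ≤ Real.exp (y - x) := Real.add_one_le_exp _
  have h5 : (Real.exp y - 1) / (1 - Real.exp (-y)) = Real.exp y := by
    rw [eq_comm, eq_div_iff hB.ne']; linarith [hq]
  have hQ : 1 - (1 - Real.exp (-x)) / (1 - Real.exp (-y))
      = ((1 - Real.exp (-y)) - (1 - Real.exp (-x))) / (1 - Real.exp (-y)) := by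
    field_simp
  rw [hQ, div_mul_eq_mul_div, mul_comm, mul_div_right_comm, h5]
  nlinarith [Real.exp_pos (-x), Real.exp_pos (-y)]

noncomputable def psi (x : ℝ) : ℝ := Real.log (1 - Real.exp (-x)) - Real.log x

lemma hasDerivAt_psi {x : ℝ} (hx : 0 < x) :
    HasDerivAt psi (Real.exp (-x) / (1 - Real.exp (-x)) - x⁻¹) x := by
  have h1 : HasDerivAt (fun t : ℝ => 1 - Real.exp (-t)) (Real.exp (-x)) x := by
    have h0 : HasDerivAt (fun t : ℝ => Real.exp (-t)) (Real.exp (-x) * (-1)) x :=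
      (Real.hasDerivAt_exp (-x)).comp x ((hasDerivAt_id x).neg)
    simpa using h0.const_sub 1
  have h2 := h1.log (one_sub_exp_pos hx).ne'
  have h3 := Real.hasDerivAt_log hx.ne'
  exact h2.sub h3

lemma deriv_psi_bound {x : ℝ} (hx : 0 < x) :
    |Real.exp (-x) / (1 - Real.exp (-x)) - x⁻¹| ≤ 1 := by
  have hA := one_sub_exp_pos hx
  have hE : (0:ℝ) < Real.exp (-x) := Real.exp_pos _
  have E1 : Real.exp x * Real.exp (-x) = 1 := by rw [← Real.exp_add]; simp
  have E3 : x + 1 ≤ Real.exp x := Real.add_one_le_exp x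
  have E4 : 1 - x ≤ Real.exp (-x) := by have := Real.add_one_le_exp (-x); linarith
  rw [abs_le]
  constructor
  · -- -1 ≤ exp(-x)/(1-exp(-x)) - 1/x , in fact 1/x - exp(-x)/(1-exp(-x)) ≤ 1
    rw [neg_le, neg_sub, sub_le_iff_le_add]
    have hiq : 1 + Real.exp (-x) / (1 - Real.exp (-x)) = (1 - Real.exp (-x))⁻¹ := by
      field_simp
      ring
    rw [hiq]
    exact inv_anti₀ hA (by linarith)
  · -- ≤ 1, in fact ≤ 0 : exp(-x)/(1-exp(-x)) ≤ 1/x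
    have h : Real.exp (-x) / (1 - Real.exp (-x)) ≤ x⁻¹ := by
      rw [div_le_iff₀ hA, ← one_div, div_mul_eq_mul_div, le_div_iff₀ hx]
      nlinarith
    linarith

lemma psi_lip {x y : ℝ} (hx : 0 < x) (hxy : x ≤ y) : |psi y - psi x| ≤ y - x := by
  have key := Convex.norm_image_sub_le_of_norm_hasDerivWithin_le
    (f := psi) (f' := fun t => Real.exp (-t) / (1 - Real.exp (-t)) - t⁻¹)
    (s := Set.Ioi (0:ℝ)) (C := 1)
    (fun t ht => (hasDerivAt_psi ht).hasDerivWithinAt)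
    (fun t ht => by simpa [Real.norm_eq_abs] using deriv_psi_bound ht)
    (convex_Ioi 0) hx (lt_of_lt_of_le hx hxy)
  simpa [Real.norm_eq_abs, abs_of_nonneg (show (0:ℝ) ≤ y - x by linarith)] using key

lemma g_sub_log_nonpos {x : ℝ} (hx : 0 < x) : g x - Real.log x ≤ 0 := by
  have h1 : 1 - Real.exp (-x) ≤ x := by
    have := Real.add_one_le_exp (-x); linarith
  have := Real.log_le_log (one_sub_exp_pos hx) h1
  simpa [g] using this

lemma neg_le_g_sub_log {x : ℝ} (hx : 0 < x) : -x ≤ g x - Real.log x := by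
  have hE : (0:ℝ) < Real.exp (-x) := Real.exp_pos _
  have E1 : Real.exp x * Real.exp (-x) = 1 := by rw [← Real.exp_add]; simp
  have E3 : x + 1 ≤ Real.exp x := Real.add_one_le_exp x
  have h1 : x * Real.exp (-x) ≤ 1 - Real.exp (-x) := by nlinarith
  have h2 := Real.log_le_log (by positivity) h1
  rw [Real.log_mul hx.ne' hE.ne', Real.log_exp] at h2
  simp only [g]; linarith

lemma abs_g_sub_log {x : ℝ} (hx : 0 < x) : |g x - Real.log x| ≤ x := by
  rw [abs_le]
  exact ⟨by linarith [neg_le_g_sub_log hx], by linarith [g_sub_log_nonpos hx]⟩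

lemma neg_g_le {x : ℝ} (hx : 0 < x) : -g x ≤ Real.exp (-x) / (1 - Real.exp (-x)) := by
  have hA := one_sub_exp_pos hx
  have h1 : Real.log (1 - Real.exp (-x))⁻¹ ≤ (1 - Real.exp (-x))⁻¹ - 1 :=
    Real.log_le_sub_one_of_pos (by positivity)
  rw [Real.log_inv] at h1
  have h2 : (1 - Real.exp (-x))⁻¹ - 1 = Real.exp (-x) / (1 - Real.exp (-x)) := by
    field_simp
    ring
  rw [g]; linarith [h2 ▸ h1]

lemma summable_g {ε c : ℝ} (hε : 0 < ε) (hc : 0 < c) :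
    Summable (fun n : ℕ => g (ε * (n + c))) := by
  have hpos : ∀ n : ℕ, 0 < ε * ((n : ℝ) + c) := fun n => by positivity
  rw [← summable_neg_iff]
  have hgeom : Summable (fun n : ℕ =>
      (Real.exp (-(ε * c)) / (1 - Real.exp (-(ε * c)))) * Real.exp (-ε) ^ n) :=
    (summable_geometric_of_lt_one (Real.exp_pos _).le
      (Real.exp_lt_one_iff.mpr (by linarith))).mul_left _
  refine Summable.of_nonneg_of_le (fun n => by linarith [g_neg (hpos n)]) (fun n => ?_) hgeom
  · have h1 := neg_g_le (hpos n)
    have h2 : Real.exp (-(ε * (n + c))) = Real.exp (-(ε * c)) * Real.exp (-ε) ^ n := by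
      rw [← Real.exp_nat_mul, ← Real.exp_add]; ring_nf
    have h3 : 1 - Real.exp (-(ε * c)) ≤ 1 - Real.exp (-(ε * (n + c))) := by
      have : Real.exp (-(ε * (n + c))) ≤ Real.exp (-(ε * c)) := by
        apply Real.exp_le_exp.mpr; nlinarith [Nat.cast_nonneg (α := ℝ) n]
      linarith
    have hA := one_sub_exp_pos (show (0:ℝ) < ε * c by positivity)
    have hB := one_sub_exp_pos (hpos n)
    calc -g (ε * (n + c)) ≤ Real.exp (-(ε * (n + c))) / (1 - Real.exp (-(ε * (n + c)))) := h1
      _ ≤ Real.exp (-(ε * (n + c))) / (1 - Real.exp (-(ε * c))) := by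
          apply div_le_div_of_nonneg_left (Real.exp_pos _).le hA h3
      _ = (Real.exp (-(ε * c)) / (1 - Real.exp (-(ε * c)))) * Real.exp (-ε) ^ n := by
          rw [h2]; ring

lemma tsum_telescope {G : ℕ → ℝ} (hG : Summable G) : ∑' n, (G n - G (n + 1)) = G 0 := by
  have h2 : Summable fun n => G (n + 1) := (summable_nat_add_iff 1).mpr hG
  have hs : Summable fun n => G n - G (n + 1) := hG.sub h2
  have h0 : Filter.Tendsto (fun n => ∑ i ∈ Finset.range n, (G i - G (i + 1)))
      Filter.atTop (nhds (G 0)) := by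
    have h3 : Filter.Tendsto (fun n => G 0 - G n) Filter.atTop (nhds (G 0 - 0)) :=
      tendsto_const_nhds.sub hG.tendsto_atTop_zero
    simpa [Finset.sum_range_sub' G] using h3
  exact tendsto_nhds_unique hs.hasSum.tendsto_sum_nat h0

noncomputable def TT (a b ε : ℝ) : ℝ :=
  (a - b) * Real.log ε + ∑' n : ℕ, (g (ε * (n + a)) - g (ε * (n + b)))

noncomputable def BB (a b : ℝ) (N : ℕ) : ℝ :=
  (b - a) * Real.log N + ∑ n ∈ Finset.range N, (Real.log (n + a) - Real.log (n + b))

variable {a b ε : ℝ}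

lemma tsum_tele_g (hε : 0 < ε) {c : ℝ} (hc : 0 < c) :
    ∑' n : ℕ, (g (ε * (n + c)) - g (ε * ((n : ℝ) + 1 + c))) = g (ε * c) := by
  have hG : Summable (fun n : ℕ => g (ε * (n + c))) := summable_g hε hc
  have h := tsum_telescope hG
  calc ∑' n : ℕ, (g (ε * (n + c)) - g (ε * ((n:ℝ) + 1 + c)))
      = ∑' n : ℕ, (g (ε * (n + c)) - g (ε * ((↑(n+1):ℝ) + c))) := by
        refine tsum_congr fun n => ?_
        congr 2
        push_cast; ring
    _ = g (ε * ((0:ℕ) + c)) := h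
    _ = g (ε * c) := by norm_num

lemma summable_tele_g (hε : 0 < ε) {c : ℝ} (hc : 0 < c) :
    Summable (fun n : ℕ => g (ε * (n + c)) - g (ε * ((n : ℝ) + 1 + c))) := by
  have hG : Summable (fun n : ℕ => g (ε * (n + c))) := summable_g hε hc
  have hshift : Summable (fun n : ℕ => g (ε * ((n:ℝ) + 1 + c))) :=
    ((summable_nat_add_iff 1).mpr hG).congr (fun n => by congr 2; push_cast; ring)
  exact hG.sub hshift

lemma tail_ub (ha : 0 < a) (hab : a ≤ b) (hε : 0 < ε) {N : ℕ} (hN : 1 ≤ N) :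
    ∑' n : ℕ, (g (ε * ((n + N : ℕ) + a)) - g (ε * ((n + N : ℕ) + b)))
      ≤ (b - a) * g (ε * (N + b)) := by
  have hb : 0 < b := lt_of_lt_of_le ha hab
  have hc : (0:ℝ) < (N:ℝ) + b := by positivity
  have hd0 : (0:ℝ) ≤ b - a := by linarith
  have hsd : Summable (fun k : ℕ => g (ε * (k + a)) - g (ε * (k + b))) :=
    (summable_g hε ha).sub (summable_g hε hb)
  have hlhs : Summable (fun n : ℕ => g (ε * ((n + N : ℕ) + a)) - g (ε * ((n + N : ℕ) + b))) :=
    (summable_nat_add_iff N).mpr hsd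
  have hrhs : Summable (fun n : ℕ =>
      (b - a) * (g (ε * (n + ((N:ℝ) + b))) - g (ε * ((n:ℝ) + 1 + ((N:ℝ) + b))))) :=
    (summable_tele_g hε hc).mul_left _
  have hterm : ∀ n : ℕ, g (ε * ((n + N : ℕ) + a)) - g (ε * ((n + N : ℕ) + b))
      ≤ (b - a) * (g (ε * (n + ((N:ℝ) + b))) - g (ε * ((n:ℝ) + 1 + ((N:ℝ) + b)))) := by
    intro n
    have hx : (0:ℝ) < ε * ((n:ℝ) + N + a) := by positivity
    have hy : (0:ℝ) < ε * ((n:ℝ) + N + b) := by positivity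
    have hxy : ε * ((n:ℝ) + N + a) ≤ ε * ((n:ℝ) + N + b) := by nlinarith
    have hD : (0:ℝ) < Real.exp (ε * ((n:ℝ) + N + b)) - 1 := by
      have := Real.one_lt_exp_iff.mpr hy; linarith
    have h1 := le_g_diff hx hxy
    have h2 := g_diff_le hy (show ε * ((n:ℝ) + N + b) ≤ ε * ((n:ℝ) + N + b) + ε by linarith)
    have h1' : (b - a) * (ε / (Real.exp (ε * ((n:ℝ) + N + b)) - 1))
        ≤ g (ε * ((n:ℝ) + N + b)) - g (ε * ((n:ℝ) + N + a)) := by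
      have harg : ε * ((n:ℝ) + N + b) - ε * ((n:ℝ) + N + a) = (b - a) * ε := by ring
      rw [harg, mul_div_assoc] at h1
      exact h1
    have h2' : g (ε * ((n:ℝ) + N + b) + ε) - g (ε * ((n:ℝ) + N + b))
        ≤ ε / (Real.exp (ε * ((n:ℝ) + N + b)) - 1) := by
      have harg : (ε * ((n:ℝ) + N + b) + ε - ε * ((n:ℝ) + N + b)) = ε := by ring
      rw [harg] at h2
      exact h2
    have e0 : g (ε * ((n + N : ℕ) + a)) = g (ε * ((n:ℝ) + N + a)) := by
      congr 2; push_cast; ring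
    have e1 : g (ε * ((n + N : ℕ) + b)) = g (ε * ((n:ℝ) + N + b)) := by
      congr 2; push_cast; ring
    have e2 : g (ε * ((n:ℝ) + ((N:ℝ) + b))) = g (ε * ((n:ℝ) + N + b)) := by
      congr 2; ring
    have e3 : g (ε * ((n:ℝ) + 1 + ((N:ℝ) + b))) = g (ε * ((n:ℝ) + N + b) + ε) := by
      congr 1; ring
    rw [e0, e1, e2, e3]
    have h3 := mul_le_mul_of_nonneg_left h2' hd0
    nlinarith [h3, h1']
  calc ∑' n : ℕ, (g (ε * ((n + N : ℕ) + a)) - g (ε * ((n + N : ℕ) + b)))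
      ≤ ∑' n : ℕ, (b - a) * (g (ε * (n + ((N:ℝ) + b))) - g (ε * ((n:ℝ) + 1 + ((N:ℝ) + b)))) :=
        Summable.tsum_le_tsum hterm hlhs hrhs
    _ = (b - a) * ∑' n : ℕ, (g (ε * (n + ((N:ℝ) + b))) - g (ε * ((n:ℝ) + 1 + ((N:ℝ) + b)))) :=
        tsum_mul_left
    _ = (b - a) * g (ε * ((N:ℝ) + b)) := by rw [tsum_tele_g hε hc]

lemma tail_lb (ha : 0 < a) (hab : a ≤ b) (hε : 0 < ε) {N : ℕ} (hN : 1 ≤ N) :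
    (b - a) * g (ε * (N + a - 1))
      ≤ ∑' n : ℕ, (g (ε * ((n + N : ℕ) + a)) - g (ε * ((n + N : ℕ) + b))) := by
  have hb : 0 < b := lt_of_lt_of_le ha hab
  have hNR : (1:ℝ) ≤ (N:ℝ) := by exact_mod_cast hN
  have hc : (0:ℝ) < (N:ℝ) + a - 1 := by linarith
  have hd0 : (0:ℝ) ≤ b - a := by linarith
  have hsd : Summable (fun k : ℕ => g (ε * (k + a)) - g (ε * (k + b))) :=
    (summable_g hε ha).sub (summable_g hε hb)
  have hlhs : Summable (fun n : ℕ => g (ε * ((n + N : ℕ) + a)) - g (ε * ((n + N : ℕ) + b))) :=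
    (summable_nat_add_iff N).mpr hsd
  have hrhs : Summable (fun n : ℕ =>
      (b - a) * (g (ε * (n + ((N:ℝ) + a - 1))) - g (ε * ((n:ℝ) + 1 + ((N:ℝ) + a - 1))))) :=
    (summable_tele_g hε hc).mul_left _
  have hterm : ∀ n : ℕ,
      (b - a) * (g (ε * (n + ((N:ℝ) + a - 1))) - g (ε * ((n:ℝ) + 1 + ((N:ℝ) + a - 1))))
      ≤ g (ε * ((n + N : ℕ) + a)) - g (ε * ((n + N : ℕ) + b)) := by
    intro n
    have hx : (0:ℝ) < ε * ((n:ℝ) + N + a) := by positivity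
    have hx' : (0:ℝ) < ε * ((n:ℝ) + N + a) - ε := by
      nlinarith [Nat.cast_nonneg (α := ℝ) n]
    have hy : (0:ℝ) < ε * ((n:ℝ) + N + b) := by positivity
    have hxy : ε * ((n:ℝ) + N + a) ≤ ε * ((n:ℝ) + N + b) := by nlinarith
    have hD : (0:ℝ) < Real.exp (ε * ((n:ℝ) + N + a)) - 1 := by
      have := Real.one_lt_exp_iff.mpr hx; linarith
    have h1 := g_diff_le hx hxy
    have h1' : g (ε * ((n:ℝ) + N + b)) - g (ε * ((n:ℝ) + N + a))
        ≤ (b - a) * (ε / (Real.exp (ε * ((n:ℝ) + N + a)) - 1)) := by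
      have harg : ε * ((n:ℝ) + N + b) - ε * ((n:ℝ) + N + a) = (b - a) * ε := by ring
      rw [harg, mul_div_assoc] at h1
      exact h1
    have h2 := le_g_diff hx' (show ε * ((n:ℝ) + N + a) - ε ≤ ε * ((n:ℝ) + N + a) by linarith)
    have h2' : ε / (Real.exp (ε * ((n:ℝ) + N + a)) - 1)
        ≤ g (ε * ((n:ℝ) + N + a)) - g (ε * ((n:ℝ) + N + a) - ε) := by
      have harg : ε * ((n:ℝ) + N + a) - (ε * ((n:ℝ) + N + a) - ε) = ε := by ring
      rw [harg] at h2
      exact h2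
    have e0 : g (ε * ((n + N : ℕ) + a)) = g (ε * ((n:ℝ) + N + a)) := by
      congr 2; push_cast; ring
    have e1 : g (ε * ((n + N : ℕ) + b)) = g (ε * ((n:ℝ) + N + b)) := by
      congr 2; push_cast; ring
    have e2 : g (ε * ((n:ℝ) + ((N:ℝ) + a - 1))) = g (ε * ((n:ℝ) + N + a) - ε) := by
      congr 1; ring
    have e3 : g (ε * ((n:ℝ) + 1 + ((N:ℝ) + a - 1))) = g (ε * ((n:ℝ) + N + a)) := by
      congr 2; ring
    rw [e0, e1, e2, e3]
    have h3 := mul_le_mul_of_nonneg_left h2' hd0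
    nlinarith [h3, h1']
  calc (b - a) * g (ε * ((N:ℝ) + a - 1))
      = (b - a) * ∑' n : ℕ, (g (ε * (n + ((N:ℝ) + a - 1))) - g (ε * ((n:ℝ) + 1 + ((N:ℝ) + a - 1)))) := by
        rw [tsum_tele_g hε hc]
    _ = ∑' n : ℕ, (b - a) * (g (ε * (n + ((N:ℝ) + a - 1))) - g (ε * ((n:ℝ) + 1 + ((N:ℝ) + a - 1)))) :=
        tsum_mul_left.symm
    _ ≤ _ := Summable.tsum_le_tsum hterm hrhs hlhs

lemma head_err (ha : 0 < a) (hab : a ≤ b) (hε : 0 < ε) (N : ℕ) :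
    |∑ n ∈ Finset.range N, ((g (ε * (n + a)) - g (ε * (n + b)))
        - (Real.log (n + a) - Real.log (n + b)))| ≤ N * (ε * (b - a)) := by
  have hb : 0 < b := lt_of_lt_of_le ha hab
  have hterm : ∀ n : ℕ, |(g (ε * ((n:ℝ) + a)) - g (ε * (n + b)))
      - (Real.log (n + a) - Real.log (n + b))| ≤ ε * (b - a) := by
    intro n
    have hna : (0:ℝ) < (n:ℝ) + a := by positivity
    have hnb : (0:ℝ) < (n:ℝ) + b := by positivity
    have hx : (0:ℝ) < ε * ((n:ℝ) + a) := by positivity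
    have hy : (0:ℝ) < ε * ((n:ℝ) + b) := by positivity
    have hxy : ε * ((n:ℝ) + a) ≤ ε * ((n:ℝ) + b) := by nlinarith
    have hla : Real.log (ε * ((n:ℝ) + a)) = Real.log ε + Real.log ((n:ℝ) + a) :=
      Real.log_mul hε.ne' hna.ne'
    have hlb : Real.log (ε * ((n:ℝ) + b)) = Real.log ε + Real.log ((n:ℝ) + b) :=
      Real.log_mul hε.ne' hnb.ne'
    have hid : (g (ε * ((n:ℝ) + a)) - g (ε * (n + b)))
        - (Real.log (n + a) - Real.log (n + b))
        = -(psi (ε * ((n:ℝ) + b)) - psi (ε * ((n:ℝ) + a))) := by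
      simp only [psi, g, hla, hlb]; ring
    rw [hid, abs_neg]
    have := psi_lip hx hxy
    calc |psi (ε * ((n:ℝ) + b)) - psi (ε * ((n:ℝ) + a))|
        ≤ ε * ((n:ℝ) + b) - ε * ((n:ℝ) + a) := this
      _ = ε * (b - a) := by ring
  calc |∑ n ∈ Finset.range N, ((g (ε * (n + a)) - g (ε * (n + b)))
        - (Real.log (n + a) - Real.log (n + b)))|
      ≤ ∑ n ∈ Finset.range N, |(g (ε * ((n:ℝ) + a)) - g (ε * (n + b)))
        - (Real.log (n + a) - Real.log (n + b))| := Finset.abs_sum_le_sum_abs _ _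
    _ ≤ ∑ _n ∈ Finset.range N, ε * (b - a) := Finset.sum_le_sum (fun n _ => hterm n)
    _ = N * (ε * (b - a)) := by simp [Finset.sum_const, nsmul_eq_mul]

lemma log_ratio_bounds (hNpos : (0:ℝ) < (N₁:ℝ)) {c : ℝ} (hc : (0:ℝ) < (N₁:ℝ) + c) :
    Real.log ((N₁:ℝ) + c) - Real.log (N₁:ℝ) ≤ c / (N₁:ℝ) ∧
    Real.log (N₁:ℝ) - Real.log ((N₁:ℝ) + c) ≤ -c / ((N₁:ℝ) + c) := by
  constructor
  · have h := Real.log_le_sub_one_of_pos (show (0:ℝ) < ((N₁:ℝ) + c) / (N₁:ℝ) by positivity)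
    rw [Real.log_div hc.ne' hNpos.ne'] at h
    have : ((N₁:ℝ) + c) / (N₁:ℝ) - 1 = c / (N₁:ℝ) := by field_simp; ring
    linarith [this ▸ h]
  · have h := Real.log_le_sub_one_of_pos (show (0:ℝ) < (N₁:ℝ) / ((N₁:ℝ) + c) by positivity)
    rw [Real.log_div hNpos.ne' hc.ne'] at h
    have : (N₁:ℝ) / ((N₁:ℝ) + c) - 1 = -c / ((N₁:ℝ) + c) := by field_simp; ring
    linarith [this ▸ h]

lemma est (ha : 0 < a) (hb : 0 < b) (hab : a ≤ b) (hε : 0 < ε) {N : ℕ} (hN : 1 ≤ N) :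
    |TT a b ε - BB a b N| ≤ (b - a) * (2 * N * ε + ε * b + (a + b + 1/a) / N) := by
  have hNR : (1:ℝ) ≤ (N:ℝ) := by exact_mod_cast hN
  have hNpos : (0:ℝ) < (N:ℝ) := by linarith
  have hd0 : (0:ℝ) ≤ b - a := by linarith
  have hsd : Summable (fun k : ℕ => g (ε * (k + a)) - g (ε * (k + b))) :=
    (summable_g hε ha).sub (summable_g hε hb)
  have hsplit := hsd.sum_add_tsum_nat_add N
  set Tl := ∑' n : ℕ, (g (ε * ((n + N : ℕ) + a)) - g (ε * ((n + N : ℕ) + b))) with hTl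
  set Hd := ∑ n ∈ Finset.range N, (g (ε * (n + a)) - g (ε * (n + b))) with hHd
  set Sl := ∑ n ∈ Finset.range N, (Real.log (n + a) - Real.log (n + b)) with hSl
  have hT : TT a b ε = (a - b) * Real.log ε + Hd + Tl := by
    rw [TT, ← hsplit]; ring
  -- head bound
  have h1 : |Hd - Sl| ≤ N * (ε * (b - a)) := by
    have := head_err ha hab hε N
    rwa [Finset.sum_sub_distrib] at this
  -- endpoint bounds for piece 3
  set K := a + b + 1/a with hK
  set M := ε * ((N:ℝ) + b) + K / (N:ℝ) with hM
  have hbc : (0:ℝ) < (N:ℝ) + b := by positivity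
  have hac : (0:ℝ) < (N:ℝ) + (a - 1) := by linarith
  have hb_bound : |g (ε * ((N:ℝ) + b)) - (Real.log ε + Real.log (N:ℝ))| ≤ M := by
    have hX : (0:ℝ) < ε * ((N:ℝ) + b) := by positivity
    have hlX : Real.log (ε * ((N:ℝ) + b)) = Real.log ε + Real.log ((N:ℝ) + b) :=
      Real.log_mul hε.ne' hbc.ne'
    have hgl := abs_g_sub_log hX
    have hup := (log_ratio_bounds hNpos hbc).1
    have hlow : 0 ≤ Real.log ((N:ℝ) + b) - Real.log (N:ℝ) := by
      have := Real.log_le_log hNpos (show (N:ℝ) ≤ (N:ℝ) + b by linarith)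
      linarith
    have habs : |Real.log ((N:ℝ) + b) - Real.log (N:ℝ)| ≤ K / (N:ℝ) := by
      rw [abs_of_nonneg hlow]
      have hKb : b / (N:ℝ) ≤ K / (N:ℝ) := by
        rw [hK, div_le_div_iff₀ hNpos hNpos]
        nlinarith [mul_pos (show (0:ℝ) < a + 1/a by positivity) hNpos]
      linarith
    have hid : g (ε * ((N:ℝ) + b)) - (Real.log ε + Real.log (N:ℝ))
        = (g (ε * ((N:ℝ) + b)) - Real.log (ε * ((N:ℝ) + b)))
          + (Real.log ((N:ℝ) + b) - Real.log (N:ℝ)) := by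
      rw [hlX]; ring
    calc |g (ε * ((N:ℝ) + b)) - (Real.log ε + Real.log (N:ℝ))|
        ≤ |g (ε * ((N:ℝ) + b)) - Real.log (ε * ((N:ℝ) + b))|
          + |Real.log ((N:ℝ) + b) - Real.log (N:ℝ)| := by rw [hid]; exact abs_add_le _ _
      _ ≤ ε * ((N:ℝ) + b) + K / (N:ℝ) := add_le_add hgl habs
  have ha_bound : |g (ε * ((N:ℝ) + a - 1)) - (Real.log ε + Real.log (N:ℝ))| ≤ M := by
    have hX : (0:ℝ) < ε * ((N:ℝ) + (a - 1)) := by positivity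
    have hlX : Real.log (ε * ((N:ℝ) + (a - 1)))
        = Real.log ε + Real.log ((N:ℝ) + (a - 1)) := Real.log_mul hε.ne' hac.ne'
    have hgl := abs_g_sub_log hX
    have hup := (log_ratio_bounds hNpos hac).1
    have hlow := (log_ratio_bounds hNpos hac).2
    have hinv : -(a - 1) / ((N:ℝ) + (a - 1)) ≤ 1 / (a * (N:ℝ)) := by
      rcases le_or_gt 1 a with h | h
      · have h1 : -(a - 1) / ((N:ℝ) + (a - 1)) ≤ 0 := by
          apply div_nonpos_of_nonpos_of_nonneg <;> linarith
        have h2 : (0:ℝ) ≤ 1 / (a * (N:ℝ)) := by positivity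
        linarith
      · rw [div_le_div_iff₀ hac (by positivity)]
        have k0 : 0 ≤ ((N:ℝ) - 1) * (1 - a) := mul_nonneg (by linarith) (by linarith)
        have k2 : (0:ℝ) < a * a * (N:ℝ) := by positivity
        nlinarith [k0, k2]
    have habs : |Real.log ((N:ℝ) + (a - 1)) - Real.log (N:ℝ)| ≤ K / (N:ℝ) := by
      have hklow : 1 / (a * (N:ℝ)) + a / (N:ℝ) ≤ K / (N:ℝ) := by
        rw [div_add_div _ _ (by positivity : a * (N:ℝ) ≠ 0) hNpos.ne', hK,
          div_le_div_iff₀ (by positivity) hNpos]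
        have e : (N:ℝ)^2 * (a * a⁻¹) = (N:ℝ)^2 * 1 := by
          rw [mul_inv_cancel₀ ha.ne']
        ring_nf
        nlinarith [e, mul_pos (mul_pos hNpos hNpos) (mul_pos ha hb)]
      rw [abs_le]
      constructor
      · have : -(1 / (a * (N:ℝ))) ≤ Real.log ((N:ℝ) + (a - 1)) - Real.log (N:ℝ) := by
          have := hlow; have := hinv; linarith
        have h0 : (0:ℝ) ≤ a / (N:ℝ) := by positivity
        linarith
      · have h3 : (a - 1) / (N:ℝ) ≤ a / (N:ℝ) := by
          rw [div_le_div_iff₀ hNpos hNpos]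
          nlinarith
        have h0 : (0:ℝ) ≤ 1 / (a * (N:ℝ)) := by positivity
        linarith
    have hid : g (ε * ((N:ℝ) + a - 1)) - (Real.log ε + Real.log (N:ℝ))
        = (g (ε * ((N:ℝ) + (a - 1))) - Real.log (ε * ((N:ℝ) + (a - 1))))
          + (Real.log ((N:ℝ) + (a - 1)) - Real.log (N:ℝ)) := by
      rw [hlX]
      have : g (ε * ((N:ℝ) + a - 1)) = g (ε * ((N:ℝ) + (a - 1))) := by congr 2; ring
      rw [this]; ring
    calc |g (ε * ((N:ℝ) + a - 1)) - (Real.log ε + Real.log (N:ℝ))|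
        ≤ |g (ε * ((N:ℝ) + (a - 1))) - Real.log (ε * ((N:ℝ) + (a - 1)))|
          + |Real.log ((N:ℝ) + (a - 1)) - Real.log (N:ℝ)| := by rw [hid]; exact abs_add_le _ _
      _ ≤ ε * ((N:ℝ) + (a - 1)) + K / (N:ℝ) := add_le_add hgl habs
      _ ≤ M := by rw [hM]; have : ε * ((N:ℝ) + (a-1)) ≤ ε * ((N:ℝ) + b) := by nlinarith
                  linarith
  -- piece 3
  have hub := tail_ub ha hab hε hN
  have hlb := tail_lb ha hab hε hN
  have e1 : g (ε * ((N:ℝ) + b)) - (Real.log ε + Real.log (N:ℝ)) ≤ M := (abs_le.mp hb_bound).2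
  have e2 : -M ≤ g (ε * ((N:ℝ) + a - 1)) - (Real.log ε + Real.log (N:ℝ)) :=
    (abs_le.mp ha_bound).1
  have hp3 : |(a - b) * (Real.log ε + Real.log (N:ℝ)) + Tl| ≤ (b - a) * M := by
    have f1 := mul_le_mul_of_nonneg_left e1 hd0
    have f2 := mul_le_mul_of_nonneg_left e2 hd0
    rw [abs_le]
    constructor
    · nlinarith [f2, hlb]
    · nlinarith [f1, hub]
  -- combine
  have hdecomp : TT a b ε - BB a b N
      = (Hd - Sl) + ((a - b) * (Real.log ε + Real.log (N:ℝ)) + Tl) := by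
    rw [hT, BB]; ring
  have hfinal : (N:ℝ) * (ε * (b - a)) + (b - a) * M
      = (b - a) * (2 * N * ε + ε * b + (a + b + 1/a) / N) := by
    rw [hM, hK]; ring
  calc |TT a b ε - BB a b N|
      ≤ |Hd - Sl| + |(a - b) * (Real.log ε + Real.log (N:ℝ)) + Tl| := by
        rw [hdecomp]; exact abs_add_le _ _
    _ ≤ (N:ℝ) * (ε * (b - a)) + (b - a) * M := add_le_add h1 hp3
    _ = _ := hfinal

lemma B_tendsto (ha : 0 < a) (hb : 0 < b) :
    Filter.Tendsto (BB a b) atTop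
      (nhds (Real.log (Real.Gamma b) - Real.log (Real.Gamma a))) := by
  have hC : Filter.Tendsto
      (fun n => Real.BohrMollerup.logGammaSeq b n - Real.BohrMollerup.logGammaSeq a n) atTop
      (nhds (Real.log (Real.Gamma b) - Real.log (Real.Gamma a))) :=
    (Real.BohrMollerup.tendsto_log_gamma hb).sub (Real.BohrMollerup.tendsto_log_gamma ha)
  have hcorr : Filter.Tendsto (fun n : ℕ => (b - a) * (Real.log ((n:ℝ) + 1) - Real.log (n:ℝ)))
      atTop (nhds 0) := by
    have h0 : Filter.Tendsto (fun n : ℕ => 1 + 1/(n:ℝ)) atTop (nhds (1 + 0)) :=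
      tendsto_const_nhds.add tendsto_one_div_atTop_nhds_zero_nat
    have h1 : Filter.Tendsto (fun n : ℕ => Real.log (1 + 1/(n:ℝ))) atTop (nhds 0) := by
      have := ((Real.continuousAt_log one_ne_zero).tendsto).comp (by simpa using h0)
      simpa [Function.comp_def] using this
    have h2 : (fun n : ℕ => Real.log ((n:ℝ) + 1) - Real.log (n:ℝ))
        =ᶠ[atTop] (fun n : ℕ => Real.log (1 + 1/(n:ℝ))) := by
      filter_upwards [eventually_ge_atTop 1] with n hn
      have hn0 : (0:ℝ) < (n:ℝ) := by exact_mod_cast hn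
      rw [show (1:ℝ) + 1/(n:ℝ) = ((n:ℝ) + 1)/(n:ℝ) by field_simp,
        Real.log_div (by positivity) hn0.ne']
    have h3 := (h1.congr' h2.symm).const_mul (b - a)
    simpa using h3
  have hBB : ∀ n : ℕ, BB a b (n + 1)
      = (Real.BohrMollerup.logGammaSeq b n - Real.BohrMollerup.logGammaSeq a n)
        + (b - a) * (Real.log ((n:ℝ) + 1) - Real.log (n:ℝ)) := by
    intro n
    rw [BB, Real.BohrMollerup.logGammaSeq, Real.BohrMollerup.logGammaSeq,
      Finset.sum_sub_distrib]
    have e1 : ∑ j ∈ Finset.range (n+1), (Real.log ((j:ℝ) + a))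
        = ∑ j ∈ Finset.range (n+1), Real.log (a + (j:ℝ)) :=
      Finset.sum_congr rfl (fun j _ => by rw [add_comm])
    have e2 : ∑ j ∈ Finset.range (n+1), (Real.log ((j:ℝ) + b))
        = ∑ j ∈ Finset.range (n+1), Real.log (b + (j:ℝ)) :=
      Finset.sum_congr rfl (fun j _ => by rw [add_comm])
    rw [e1, e2]
    push_cast
    ring
  have h4 : Filter.Tendsto (fun n : ℕ => BB a b (n + 1)) atTop
      (nhds (Real.log (Real.Gamma b) - Real.log (Real.Gamma a))) := by
    have := hC.add hcorr
    rw [add_zero] at this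
    exact this.congr (fun n => (hBB n).symm)
  exact (tendsto_add_atTop_iff_nat 1).mp h4

lemma core (ha : 0 < a) (hb : 0 < b) (hab : a ≤ b) :
    Filter.Tendsto (fun ε => TT a b ε) (nhdsWithin 0 (Set.Ioi 0))
      (nhds (Real.log (Real.Gamma b) - Real.log (Real.Gamma a))) := by
  set L := Real.log (Real.Gamma b) - Real.log (Real.Gamma a) with hL
  rw [Metric.tendsto_nhdsWithin_nhds]
  intro δ hδ
  obtain ⟨N₀, hN₀⟩ := Metric.tendsto_atTop.mp (B_tendsto ha hb) (δ/2) (by linarith)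
  have hd0 : (0:ℝ) ≤ b - a := by linarith
  have hK0 : (0:ℝ) < a + b + 1/a := by positivity
  set u := min 1 (δ / (16 * (b - a + 1))) with hu
  have hu0 : 0 < u := lt_min one_pos (by positivity)
  have hu2 : u ≤ δ / (16 * (b - a + 1)) := min_le_right _ _
  set εb := min (u / (N₀ + 1)) (min u (min (δ / (16 * (b - a + 1) * (b + 1)))
    (u * δ / (16 * (b - a + 1) * (a + b + 1/a))))) with hεb
  have hεb0 : 0 < εb := by
    apply lt_min (by positivity)
    apply lt_min hu0
    apply lt_min (by positivity) (by positivity)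
  refine ⟨εb, hεb0, ?_⟩
  intro ε hε hdist
  have hε0 : 0 < ε := hε
  rw [Real.dist_eq, sub_zero, abs_of_pos hε0] at hdist
  have hεu : ε < u := lt_of_lt_of_le hdist ((min_le_right _ _).trans (min_le_left _ _))
  have hεN₀ : ε < u / (N₀ + 1) := lt_of_lt_of_le hdist (min_le_left _ _)
  have hε3 : ε < δ / (16 * (b - a + 1) * (b + 1)) := lt_of_lt_of_le hdist
    ((min_le_right _ _).trans ((min_le_right _ _).trans (min_le_left _ _)))
  have hε4 : ε < u * δ / (16 * (b - a + 1) * (a + b + 1/a)) := lt_of_lt_of_le hdist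
    ((min_le_right _ _).trans ((min_le_right _ _).trans (min_le_right _ _)))
  set N := ⌈u / ε⌉₊ with hNdef
  have hNl : u / ε ≤ (N:ℝ) := Nat.le_ceil _
  have hNu : (N:ℝ) < u / ε + 1 := Nat.ceil_lt_add_one (by positivity)
  have hN1 : 1 ≤ N := by
    have : 0 < N := Nat.ceil_pos.mpr (by positivity)
    omega
  have hNR : (1:ℝ) ≤ (N:ℝ) := by exact_mod_cast hN1
  have hNpos : (0:ℝ) < (N:ℝ) := by linarith
  have hu_eN : u ≤ (N:ℝ) * ε := (div_le_iff₀ hε0).mp hNl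
  have hNN₀ : N₀ ≤ N := by
    have h' : (N₀:ℝ) < u / ε := by
      rw [lt_div_iff₀ hε0]
      have := (lt_div_iff₀ (by positivity : (0:ℝ) < (N₀:ℝ) + 1)).mp hεN₀
      nlinarith [Nat.cast_nonneg (α := ℝ) N₀]
    have : (N₀:ℝ) ≤ (N:ℝ) := h'.le.trans hNl
    exact_mod_cast this
  have hB := hN₀ N hNN₀
  have hest := est ha hb hab hε0 hN1
  -- numeric bounds
  have bNε : (N:ℝ) * ε ≤ 2 * u := by
    have h5 := mul_lt_mul_of_pos_right hNu hε0
    rw [add_mul, div_mul_cancel₀ u hε0.ne', one_mul] at h5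
    linarith
  have c1 : (b - a) * (2 * (N:ℝ) * ε) ≤ δ / 4 := by
    have s1 : (b - a) * (2 * (N:ℝ) * ε) ≤ (b - a) * (4 * u) := by
      apply mul_le_mul_of_nonneg_left (by linarith) hd0
    have s2 : (b - a) * (4 * u) ≤ (b - a + 1) * (4 * u) := by nlinarith
    have s3 : (b - a + 1) * (4 * u) ≤ (b - a + 1) * (4 * (δ / (16 * (b - a + 1)))) := by
      apply mul_le_mul_of_nonneg_left (by linarith) (by linarith)
    have s4 : (b - a + 1) * (4 * (δ / (16 * (b - a + 1)))) = δ / 4 := by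
      field_simp; ring
    exact s1.trans (s2.trans (s3.trans_eq s4))
  have c2 : (b - a) * (ε * b) ≤ δ / 16 := by
    have s1 : (b - a) * (ε * b) ≤ (b - a + 1) * (b + 1) * ε := by nlinarith
    have s2 : (b - a + 1) * (b + 1) * ε
        ≤ (b - a + 1) * (b + 1) * (δ / (16 * (b - a + 1) * (b + 1))) := by
      apply mul_le_mul_of_nonneg_left hε3.le (by positivity)
    have s3 : (b - a + 1) * (b + 1) * (δ / (16 * (b - a + 1) * (b + 1))) = δ / 16 := by
      field_simp
    exact s1.trans (s2.trans_eq s3)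
  have c3 : (b - a) * ((a + b + 1/a) / (N:ℝ)) ≤ δ / 16 := by
    have s1 : (a + b + 1/a) / (N:ℝ) ≤ (a + b + 1/a) * ε / u := by
      rw [div_le_div_iff₀ hNpos hu0]
      nlinarith [mul_le_mul_of_nonneg_left hu_eN hK0.le]
    have s2 : (b - a) * ((a + b + 1/a) / (N:ℝ)) ≤ (b - a + 1) * ((a + b + 1/a) * ε / u) := by
      have h6 : 0 ≤ (a + b + 1/a) * ε / u := by positivity
      have h7 : (b - a) * ((a + b + 1/a) / (N:ℝ)) ≤ (b - a) * ((a + b + 1/a) * ε / u) :=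
        mul_le_mul_of_nonneg_left s1 hd0
      nlinarith
    have s3 : (b - a + 1) * ((a + b + 1/a) * ε / u)
        = ((b - a + 1) * (a + b + 1/a) / u) * ε := by ring
    have s4 : ((b - a + 1) * (a + b + 1/a) / u) * ε
        ≤ ((b - a + 1) * (a + b + 1/a) / u) * (u * δ / (16 * (b - a + 1) * (a + b + 1/a))) :=
      mul_le_mul_of_nonneg_left hε4.le (by positivity)
    have s5 : ((b - a + 1) * (a + b + 1/a) / u) * (u * δ / (16 * (b - a + 1) * (a + b + 1/a)))
        = δ / 16 := by
      field_simp
    exact s2.trans (s3.trans_le (s4.trans_eq s5))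
  have hb2 : |TT a b ε - BB a b N| ≤ δ / 4 + δ / 16 + δ / 16 := by
    have hsplitmul : (b - a) * (2 * (N:ℝ) * ε + ε * b + (a + b + 1/a) / (N:ℝ))
        = (b - a) * (2 * (N:ℝ) * ε) + (b - a) * (ε * b) + (b - a) * ((a + b + 1/a) / (N:ℝ)) := by
      ring
    calc |TT a b ε - BB a b N|
        ≤ (b - a) * (2 * (N:ℝ) * ε + ε * b + (a + b + 1/a) / (N:ℝ)) := hest
      _ = (b - a) * (2 * (N:ℝ) * ε) + (b - a) * (ε * b)
          + (b - a) * ((a + b + 1/a) / (N:ℝ)) := hsplitmul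
      _ ≤ δ / 4 + δ / 16 + δ / 16 := add_le_add (add_le_add c1 c2) c3
  rw [Real.dist_eq] at hB ⊢
  calc |TT a b ε - L| ≤ |TT a b ε - BB a b N| + |BB a b N - L| := abs_sub_le _ _ _
    _ < (δ / 4 + δ / 16 + δ / 16) + δ / 2 := by
        linarith [hb2, hB]
    _ ≤ δ := by linarith

lemma core' (a b : ℝ) (ha : 0 < a) (hb : 0 < b) :
    Filter.Tendsto (fun ε => TT a b ε) (nhdsWithin 0 (Set.Ioi 0))
      (nhds (Real.log (Real.Gamma b) - Real.log (Real.Gamma a))) := by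
  rcases le_total a b with h | h
  · exact core ha hb h
  · have h1 := (core hb ha h).neg
    rw [neg_sub] at h1
    have e : ∀ ε : ℝ, -TT b a ε = TT a b ε := by
      intro ε
      rw [TT, TT, neg_add, ← tsum_neg]
      congr 1
      · ring
      · exact tsum_congr (fun n => by ring)
    exact h1.congr e

lemma poch_eq {a ε : ℝ} (ha : 0 < a) (hε : 0 < ε) :
    pochInf (Real.exp (-ε)) (Real.exp (-ε) ^ a) = Real.exp (∑' n : ℕ, g (ε * (n + a))) := by
  have hsum := summable_g hε ha
  have hterm : ∀ i : ℕ, (1 : ℝ) - Real.exp (-ε) ^ i * Real.exp (-ε) ^ a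
      = Real.exp (g (ε * (i + a))) := by
    intro i
    have hpos : (0:ℝ) < ε * ((i:ℝ) + a) := by positivity
    rw [g, Real.exp_log (one_sub_exp_pos hpos)]
    congr 1
    rw [← Real.exp_nat_mul, Real.rpow_def_of_pos (Real.exp_pos _), Real.log_exp, ← Real.exp_add]
    congr 1
    ring
  rw [pochInf, tprod_congr hterm]
  simpa [Function.comp] using (hsum.hasSum.rexp).tprod_eq

end PochAux

/-- with `q = e^{-ε}`, `(qᵃ;q)_∞/(qᵇ;q)_∞ ∼ (Γ(b)/Γ(a)) ε^{b-a}` as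
`ε → 0⁺`, i.e. `ε^{a-b} (qᵃ;q)_∞/(qᵇ;q)_∞ → Γ(b)/Γ(a)`. -/
theorem pochhammer_gamma_asymptotics (a b : ℝ) (ha : 0 < a) (hb : 0 < b) :
    Filter.Tendsto
      (fun ε : ℝ => ε ^ (a - b) *
        (pochInf (Real.exp (-ε)) (Real.exp (-ε) ^ a) /
          pochInf (Real.exp (-ε)) (Real.exp (-ε) ^ b)))
      (nhdsWithin 0 (Set.Ioi 0)) (nhds (Real.Gamma b / Real.Gamma a)) := by
  have hcore := PochAux.core' a b ha hb
  have h2 := (Real.continuous_exp.continuousAt.tendsto).comp hcore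
  rw [Real.exp_sub, Real.exp_log (Real.Gamma_pos_of_pos hb),
    Real.exp_log (Real.Gamma_pos_of_pos ha)] at h2
  refine h2.congr' ?_
  filter_upwards [self_mem_nhdsWithin] with ε hε
  have hε0 : (0:ℝ) < ε := hε
  have hsa := PochAux.summable_g hε0 ha
  have hsb := PochAux.summable_g hε0 hb
  show Real.exp (PochAux.TT a b ε) = _
  rw [PochAux.TT, Real.exp_add, (hsa.hasSum.sub hsb.hasSum).tsum_eq, Real.exp_sub,
    ← PochAux.poch_eq ha hε0, ← PochAux.poch_eq hb hε0,
    Real.rpow_def_of_pos hε0, mul_comm (Real.log ε)]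
end

section
/- (Skew-symmetric Hankel-type inverse via skew-orthogonal polynomials) Let $\mu$ be a positive measure on $\mathbb{R}$ with all moments $h_k = \int x^k d\mu(x)$ finite, and let $H = ((j-i)h_{i+j-1})_{i,j=0}^{2n-1}$. Suppose $\{q_0,\ldots,q_{2n-1}\}$ are polynomials with $\deg q_k = k$ satisfying the skew-orthogonality conditions $\langle q_{2k}, q_{2k+1}\rangle_\mu = r_k \ne 0$, $\langle q_{2k+1}, q_{2k}\rangle_\mu = -r_k$, and $\langle q_i, q_j\rangle_\mu = 0$ otherwise, where $\langle f,g\rangle_\mu = \tfrac12\int(f g' - g f')d\mu$. Define $q_{i,j} = \sum_{k=0}^{n-1} \frac{1}{r_k}\big[\tfrac{1}{i!}q_{2k}^{(i)}(0)\big]\big[\tfrac{1}{j!}q_{2k+1}^{(j)}(0)\big]$ and $Q = (\tfrac12(q_{j,i} - q_{i,j}))_{i,j=0}^{2n-1}$. Then $QH = I_{2n}$. -/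
open MeasureTheory Polynomial

/-- The skew inner product `⟨f,g⟩_μ = (1/2)∫ (f g' - g f') dμ` on polynomials. -/
noncomputable def skewInner (μ : Measure ℝ) (f g : Polynomial ℝ) : ℝ :=
  (1 / 2) * ∫ x, (f.eval x * (derivative (R := ℝ) g).eval x
      - g.eval x * (derivative (R := ℝ) f).eval x) ∂μ

/-- The coefficients `q_{i,j} = ∑_{k<n} (1/r_k) [q_{2k}^{(i)}(0)/i!][q_{2k+1}^{(j)}(0)/j!]`. -/
noncomputable def qcoef (n : ℕ) (q : ℕ → Polynomial ℝ) (r : Fin n → ℝ) (i j : ℕ) : ℝ :=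
  ∑ k : Fin n, (1 / r k) *
    (((fun p => derivative (R := ℝ) p)^[i] (q (2 * (k : ℕ)))).eval 0 / (Nat.factorial i)) *
    (((fun p => derivative (R := ℝ) p)^[j] (q (2 * (k : ℕ) + 1))).eval 0 / (Nat.factorial j))

open Finset
section aux
variable {μ : Measure ℝ}

def HM (μ : Measure ℝ) : Prop := ∀ k : ℕ, Integrable (fun x => x ^ k) μ

lemma integrable_eval (hmom : ∀ k : ℕ, Integrable (fun x => x ^ k) μ) (p : Polynomial ℝ) : Integrable (fun x => p.eval x) μ := by
  have h : (fun x => p.eval x)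
      = fun x => ∑ i ∈ Finset.range (p.natDegree + 1), p.coeff i * x ^ i := by
    funext x; exact p.eval_eq_sum_range x
  rw [h]
  exact integrable_finset_sum _ fun i _ => (hmom i).const_mul _

lemma skewInner_eq (f g : Polynomial ℝ) :
    skewInner μ f g = (1/2) * ∫ x, (f * derivative g - g * derivative f).eval x ∂μ := by
  simp [skewInner]

lemma skew_zero_left (g : Polynomial ℝ) : skewInner μ 0 g = 0 := by
  simp [skewInner]

lemma skew_antisymm (f g : Polynomial ℝ) : skewInner μ f g = - skewInner μ g f := by
  unfold skewInner
  rw [← mul_neg, ← integral_neg]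
  congr 1
  exact integral_congr_ae (Filter.Eventually.of_forall fun x => by ring)

lemma skew_add_left (hmom : ∀ k : ℕ, Integrable (fun x => x ^ k) μ) (f₁ f₂ g : Polynomial ℝ) :
    skewInner μ (f₁ + f₂) g = skewInner μ f₁ g + skewInner μ f₂ g := by
  have hp : (f₁ + f₂) * derivative g - g * derivative (f₁ + f₂)
      = (f₁ * derivative g - g * derivative f₁) + (f₂ * derivative g - g * derivative f₂) := by
    rw [derivative_add]; ring
  rw [skewInner_eq, skewInner_eq, skewInner_eq, hp, ← mul_add,
    ← integral_add (integrable_eval hmom _) (integrable_eval hmom _)]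
  simp only [eval_add]

lemma skew_C_mul_left (hmom : ∀ k : ℕ, Integrable (fun x => x ^ k) μ) (a : ℝ) (f g : Polynomial ℝ) :
    skewInner μ (C a * f) g = a * skewInner μ f g := by
  have hp : (C a * f) * derivative g - g * derivative (C a * f)
      = C a * (f * derivative g - g * derivative f) := by
    rw [derivative_C_mul]; ring
  rw [skewInner_eq, skewInner_eq, hp]
  simp only [eval_mul, eval_C]
  rw [integral_const_mul]
  ring

lemma skew_sum_left (hmom : ∀ k : ℕ, Integrable (fun x => x ^ k) μ) {ι : Type*} (s : Finset ι) (F : ι → Polynomial ℝ) (g : Polynomial ℝ) :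
    skewInner μ (∑ m ∈ s, F m) g = ∑ m ∈ s, skewInner μ (F m) g := by
  classical
  induction s using Finset.induction with
  | empty => simpa using skew_zero_left (μ := μ) g
  | @insert a s h ih => rw [Finset.sum_insert h, skew_add_left hmom, ih, Finset.sum_insert h]

lemma skew_sum_right (hmom : ∀ k : ℕ, Integrable (fun x => x ^ k) μ) {ι : Type*} (s : Finset ι) (f : Polynomial ℝ) (F : ι → Polynomial ℝ) :
    skewInner μ f (∑ m ∈ s, F m) = ∑ m ∈ s, skewInner μ f (F m) := by
  rw [skew_antisymm, skew_sum_left hmom, ← Finset.sum_neg_distrib]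
  exact Finset.sum_congr rfl fun m _ => (skew_antisymm _ _).symm

lemma skew_C_mul_right (hmom : ∀ k : ℕ, Integrable (fun x => x ^ k) μ) (a : ℝ) (f g : Polynomial ℝ) :
    skewInner μ f (C a * g) = a * skewInner μ f g := by
  rw [skew_antisymm, skew_C_mul_left hmom, skew_antisymm f g]; ring

lemma two_skew (hmom : ∀ k : ℕ, Integrable (fun x => x ^ k) μ) (i j : ℕ) :
    ((j : ℝ) - (i : ℝ)) * ∫ x, x ^ (i + j - 1) ∂μ = 2 * skewInner μ (X ^ i) (X ^ j) := by
  have key : ∀ x : ℝ, (X ^ i : Polynomial ℝ).eval x * (derivative (R := ℝ) (X ^ j)).eval x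
      - (X ^ j : Polynomial ℝ).eval x * (derivative (R := ℝ) (X ^ i)).eval x
      = (j : ℝ) * x ^ (i + j - 1) - (i : ℝ) * x ^ (i + j - 1) := by
    intro x
    rw [derivative_X_pow, derivative_X_pow]
    simp only [eval_mul, eval_C, eval_pow, eval_X, eval_natCast]
    rcases i with _ | i <;> rcases j with _ | j
    · simp
    · have h : 0 + (j + 1) - 1 = j := by omega
      rw [h]; push_cast; ring
    · have h : (i + 1) + 0 - 1 = i := by omega
      rw [h]; push_cast; ring
    · have h1 : (i + 1) + (j + 1) - 1 = i + j + 1 := by omega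
      rw [h1]; push_cast; ring
  unfold skewInner
  rw [integral_congr_ae (Filter.Eventually.of_forall key),
    integral_sub ((hmom _).const_mul _) ((hmom _).const_mul _),
    integral_const_mul, integral_const_mul]
  ring

lemma sum_range_pair (n : ℕ) (f : ℕ → ℝ) :
    ∑ m ∈ Finset.range (2 * n), f m = ∑ k ∈ Finset.range n, (f (2 * k) + f (2 * k + 1)) := by
  induction n with
  | zero => simp
  | succ n ih =>
    have h : 2 * (n + 1) = (2 * n + 1) + 1 := by ring
    rw [h, Finset.sum_range_succ, Finset.sum_range_succ, ih, Finset.sum_range_succ]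
    ring

lemma deriv_eval_zero (p : Polynomial ℝ) (i : ℕ) :
    (derivative^[i] p).eval 0 / (Nat.factorial i) = p.coeff i := by
  rw [← Polynomial.coeff_zero_eq_eval_zero, Polynomial.coeff_iterate_derivative]
  simp [Nat.descFactorial_self, nsmul_eq_mul]
  rw [mul_div_cancel_left₀ _ (by exact_mod_cast (Nat.factorial_ne_zero i))]

end aux


lemma qcoef_eq (n : ℕ) (q : ℕ → Polynomial ℝ) (r : Fin n → ℝ) (i j : ℕ) :
    qcoef n q r i j = ∑ k : Fin n,
      (1 / r k) * (q (2 * (k : ℕ))).coeff i * (q (2 * (k : ℕ) + 1)).coeff j := by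
  unfold qcoef
  refine Finset.sum_congr rfl fun k _ => ?_
  have h1 : ((fun p => derivative (R := ℝ) p)^[i] (q (2 * (k : ℕ)))) = derivative^[i] (q (2 * (k:ℕ))) := rfl
  have h2 : ((fun p => derivative (R := ℝ) p)^[j] (q (2 * (k : ℕ) + 1))) = derivative^[j] (q (2 * (k:ℕ) + 1)) := rfl
  rw [h1, h2, deriv_eval_zero, deriv_eval_zero]


/-- inverse of a skew-symmetric Hankel-type matrix via skew-orthogonal
polynomials: with `H = ((j-i) h_{i+j-1})` and `Q = (½(q_{j,i} - q_{i,j}))`, `Q H = I`. -/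
theorem skew_hankel_inverse (n : ℕ) (μ : Measure ℝ)
    (hmom : ∀ k : ℕ, Integrable (fun x => x ^ k) μ)
    (q : ℕ → Polynomial ℝ)
    (hdeg : ∀ k, k < 2 * n → (q k).natDegree = k)
    (r : Fin n → ℝ) (hr : ∀ k, r k ≠ 0)
    (hskew1 : ∀ k : Fin n, skewInner μ (q (2 * (k : ℕ))) (q (2 * (k : ℕ) + 1)) = r k)
    (hskew2 : ∀ k : Fin n, skewInner μ (q (2 * (k : ℕ) + 1)) (q (2 * (k : ℕ))) = - r k)
    (hskew0 : ∀ i j, i < 2 * n → j < 2 * n →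
      (¬ ∃ k : Fin n, (i = 2 * (k : ℕ) ∧ j = 2 * (k : ℕ) + 1) ∨
        (i = 2 * (k : ℕ) + 1 ∧ j = 2 * (k : ℕ))) →
      skewInner μ (q i) (q j) = 0) :
    (Matrix.of fun i j : Fin (2 * n) =>
        (1 / 2) * (qcoef n q r (j : ℕ) (i : ℕ) - qcoef n q r (i : ℕ) (j : ℕ))) *
      (Matrix.of fun i j : Fin (2 * n) =>
        ((j : ℝ) - (i : ℝ)) * ∫ x, x ^ ((i : ℕ) + (j : ℕ) - 1) ∂μ) = 1 := by
  classical
  have qne : ∀ m, m < 2 * n → (q m).coeff m ≠ 0 := by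
    intro m hm
    have hne : q m ≠ 0 := by
      intro h0
      rcases Nat.even_or_odd m with ⟨k, hk⟩ | ⟨k, hk⟩
      · have hkn : k < n := by omega
        have h1 := hskew1 ⟨k, hkn⟩
        rw [show 2 * ((⟨k, hkn⟩ : Fin n) : ℕ) = m by simp; omega, h0, skew_zero_left] at h1
        exact hr _ h1.symm
      · have hkn : k < n := by omega
        have h2 := hskew2 ⟨k, hkn⟩
        rw [show 2 * ((⟨k, hkn⟩ : Fin n) : ℕ) + 1 = m by simp; omega, h0, skew_zero_left] at h2
        exact hr _ (neg_eq_zero.mp h2.symm)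
    have hlc : (q m).coeff m = (q m).leadingCoeff := by
      rw [Polynomial.leadingCoeff, hdeg m hm]
    rw [hlc]
    exact Polynomial.leadingCoeff_ne_zero.mpr hne
  have expand : ∀ d, d < 2 * n → ∀ p : Polynomial ℝ, p.natDegree ≤ d →
      ∃ a : ℕ → ℝ, p = ∑ m ∈ Finset.range (2 * n), C (a m) * q m := by
    intro d
    induction d with
    | zero =>
      intro hd p hp
      refine ⟨fun m => if m = 0 then p.coeff 0 / (q 0).coeff 0 else 0, ?_⟩
      rw [Finset.sum_eq_single 0 (fun m _ hm => by simp [hm])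
        (fun h => absurd (Finset.mem_range.mpr hd) h)]
      simp only [if_pos rfl]
      have hp0 : p = C (p.coeff 0) := Polynomial.eq_C_of_natDegree_le_zero hp
      obtain ⟨b, hb⟩ := Polynomial.natDegree_eq_zero.mp (hdeg 0 hd)
      have hbne : b ≠ 0 := by
        rw [show b = (q 0).coeff 0 by rw [← hb, Polynomial.coeff_C_zero]]
        exact qne 0 hd
      rw [← hb, Polynomial.coeff_C_zero]
      simp only [if_true]
      rw [← C_mul, div_mul_cancel₀ _ hbne]
      exact hp0
    | succ d ih =>
      intro hd p hp
      have hd' : d < 2 * n := by omega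
      have hd1 : d + 1 < 2 * n := hd
      set c := p.coeff (d + 1) / (q (d + 1)).coeff (d + 1) with hc
      have hdegsub : (p - C c * q (d + 1)).natDegree ≤ d := by
        rw [Polynomial.natDegree_le_iff_coeff_eq_zero]
        intro N hN
        rcases eq_or_lt_of_le (Nat.succ_le_of_lt hN) with hN1 | hN2
        · rw [← hN1]
          simp only [Polynomial.coeff_sub, Polynomial.coeff_C_mul]
          rw [hc, div_mul_cancel₀ _ (qne (d + 1) hd1), sub_self]
        · simp only [Polynomial.coeff_sub, Polynomial.coeff_C_mul]
          rw [Polynomial.coeff_eq_zero_of_natDegree_lt (lt_of_le_of_lt hp hN2),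
            Polynomial.coeff_eq_zero_of_natDegree_lt (by rw [hdeg (d + 1) hd1]; exact hN2),
            mul_zero, sub_self]
      obtain ⟨a, ha⟩ := ih hd' (p - C c * q (d + 1)) hdegsub
      refine ⟨fun m => if m = d + 1 then a m + c else a m, ?_⟩
      have hterm : ∀ m ∈ Finset.range (2 * n),
          C (if m = d + 1 then a m + c else a m) * q m
            = C (a m) * q m + (if m = d + 1 then C c * q m else 0) := by
        intro m _
        split_ifs with h
        · rw [C_add]; ring
        · rw [add_zero]
      rw [Finset.sum_congr rfl hterm, Finset.sum_add_distrib,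
        Finset.sum_ite_eq' (Finset.range (2 * n)) (d + 1),
        if_pos (Finset.mem_range.mpr hd1), ← ha]
      ring
  ext i l
  rw [Matrix.mul_apply, Matrix.one_apply]
  simp only [Matrix.of_apply]
  have hlpos : (l : ℕ) < 2 * n := l.isLt
  obtain ⟨a, ha⟩ := expand (2 * n - 1) (by omega) ((X : Polynomial ℝ) ^ (l : ℕ))
    (by rw [Polynomial.natDegree_X_pow]; omega)
  have step1 : ∀ j : Fin (2 * n),
      (1 / 2 : ℝ) * (qcoef n q r (j : ℕ) (i : ℕ) - qcoef n q r (i : ℕ) (j : ℕ)) *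
        (((l : ℝ) - (j : ℝ)) * ∫ x, x ^ ((j : ℕ) + (l : ℕ) - 1) ∂μ)
      = ∑ k : Fin n, ((1 / r k) * ((q (2 * (k:ℕ))).coeff (j:ℕ) * (q (2 * (k:ℕ) + 1)).coeff (i:ℕ))
          - (1 / r k) * ((q (2 * (k:ℕ))).coeff (i:ℕ) * (q (2 * (k:ℕ) + 1)).coeff (j:ℕ)))
          * skewInner μ (X ^ (j : ℕ)) (X ^ (l : ℕ)) := by
    intro j
    rw [two_skew hmom, qcoef_eq, qcoef_eq, ← Finset.sum_sub_distrib,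
      show ∀ T S : ℝ, 1 / 2 * T * (2 * S) = T * S from fun T S => by ring,
      Finset.sum_mul]
    exact Finset.sum_congr rfl fun k _ => by ring
  have hsum_coeff : ∀ m, m < 2 * n →
      (∑ j : Fin (2 * n), (q m).coeff (j : ℕ) * skewInner μ (X ^ (j : ℕ)) (X ^ (l : ℕ)))
        = skewInner μ (q m) (X ^ (l : ℕ)) := by
    intro m hm
    have hrepr : q m = ∑ j ∈ Finset.range (2 * n), C ((q m).coeff j) * X ^ j := by
      conv_lhs => rw [(q m).as_sum_range' (2 * n) (by rw [hdeg m hm]; exact hm)]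
      exact Finset.sum_congr rfl fun j _ => (Polynomial.C_mul_X_pow_eq_monomial).symm
    conv_rhs => rw [hrepr]
    rw [skew_sum_left hmom,
      Fin.sum_univ_eq_sum_range (fun j => (q m).coeff j * skewInner μ (X ^ j) (X ^ (l:ℕ))) (2*n)]
    exact Finset.sum_congr rfl fun j _ => (skew_C_mul_left hmom _ _ _).symm
  have hqX : ∀ s, s < 2 * n → skewInner μ (q s) (X ^ (l : ℕ))
      = ∑ m ∈ Finset.range (2 * n), a m * skewInner μ (q s) (q m) := by
    intro s hs
    rw [ha, skew_sum_right hmom]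
    exact Finset.sum_congr rfl fun m _ => skew_C_mul_right hmom _ _ _
  have e1 : ∀ k : Fin n, skewInner μ (q (2 * (k:ℕ))) (X ^ (l : ℕ)) = a (2 * (k:ℕ) + 1) * r k := by
    intro k
    have hkn := k.isLt
    rw [hqX _ (by omega), Finset.sum_eq_single (2 * (k:ℕ) + 1)]
    · rw [hskew1 k]
    · intro m hm hne
      have h0 : skewInner μ (q (2 * (k:ℕ))) (q m) = 0 := by
        apply hskew0 _ _ (by omega) (Finset.mem_range.mp hm)
        rintro ⟨k', ⟨hk1, hk2⟩ | ⟨hk1, hk2⟩⟩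
        · exact hne (by omega)
        · omega
      rw [h0, mul_zero]
    · intro hnot
      exact absurd (Finset.mem_range.mpr (by omega)) hnot
  have e2 : ∀ k : Fin n, skewInner μ (q (2 * (k:ℕ) + 1)) (X ^ (l : ℕ)) = a (2 * (k:ℕ)) * (- r k) := by
    intro k
    have hkn := k.isLt
    rw [hqX _ (by omega), Finset.sum_eq_single (2 * (k:ℕ))]
    · rw [hskew2 k]
    · intro m hm hne
      have h0 : skewInner μ (q (2 * (k:ℕ) + 1)) (q m) = 0 := by
        apply hskew0 _ _ (by omega) (Finset.mem_range.mp hm)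
        rintro ⟨k', ⟨hk1, hk2⟩ | ⟨hk1, hk2⟩⟩
        · omega
        · exact hne (by omega)
      rw [h0, mul_zero]
    · intro hnot
      exact absurd (Finset.mem_range.mpr (by omega)) hnot
  have hk : ∀ k : Fin n,
      (∑ j : Fin (2 * n), ((1 / r k) * ((q (2*(k:ℕ))).coeff (j:ℕ) * (q (2*(k:ℕ)+1)).coeff (i:ℕ))
        - (1 / r k) * ((q (2*(k:ℕ))).coeff (i:ℕ) * (q (2*(k:ℕ)+1)).coeff (j:ℕ)))
        * skewInner μ (X ^ (j:ℕ)) (X ^ (l:ℕ)))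
      = a (2*(k:ℕ)) * (q (2*(k:ℕ))).coeff (i:ℕ) + a (2*(k:ℕ)+1) * (q (2*(k:ℕ)+1)).coeff (i:ℕ) := by
    intro k
    have hkn := k.isLt
    have hC : ∀ j : Fin (2 * n), ((1 / r k) * ((q (2*(k:ℕ))).coeff (j:ℕ) * (q (2*(k:ℕ)+1)).coeff (i:ℕ))
        - (1 / r k) * ((q (2*(k:ℕ))).coeff (i:ℕ) * (q (2*(k:ℕ)+1)).coeff (j:ℕ)))
        * skewInner μ (X ^ (j:ℕ)) (X ^ (l:ℕ))
        = (1 / r k) * (q (2*(k:ℕ)+1)).coeff (i:ℕ)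
            * ((q (2*(k:ℕ))).coeff (j:ℕ) * skewInner μ (X ^ (j:ℕ)) (X ^ (l:ℕ)))
          - (1 / r k) * (q (2*(k:ℕ))).coeff (i:ℕ)
            * ((q (2*(k:ℕ)+1)).coeff (j:ℕ) * skewInner μ (X ^ (j:ℕ)) (X ^ (l:ℕ))) :=
      fun j => by ring
    rw [Finset.sum_congr rfl fun j _ => hC j, Finset.sum_sub_distrib,
      ← Finset.mul_sum, ← Finset.mul_sum,
      hsum_coeff (2*(k:ℕ)) (by omega), hsum_coeff (2*(k:ℕ)+1) (by omega), e1 k, e2 k]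
    have h1 : (1:ℝ) / r k * r k = 1 := one_div_mul_cancel (hr k)
    linear_combination ((q (2*(k:ℕ)+1)).coeff (i:ℕ) * a (2*(k:ℕ)+1)
      + (q (2*(k:ℕ))).coeff (i:ℕ) * a (2*(k:ℕ))) * h1
  calc (∑ j : Fin (2 * n),
        (1 / 2 : ℝ) * (qcoef n q r (j : ℕ) (i : ℕ) - qcoef n q r (i : ℕ) (j : ℕ)) *
          (((l : ℝ) - (j : ℝ)) * ∫ x, x ^ ((j : ℕ) + (l : ℕ) - 1) ∂μ))
      = ∑ j : Fin (2 * n), ∑ k : Fin n,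
          ((1 / r k) * ((q (2*(k:ℕ))).coeff (j:ℕ) * (q (2*(k:ℕ)+1)).coeff (i:ℕ))
          - (1 / r k) * ((q (2*(k:ℕ))).coeff (i:ℕ) * (q (2*(k:ℕ)+1)).coeff (j:ℕ)))
          * skewInner μ (X ^ (j:ℕ)) (X ^ (l:ℕ)) := Finset.sum_congr rfl fun j _ => step1 j
    _ = ∑ k : Fin n, ∑ j : Fin (2 * n),
          ((1 / r k) * ((q (2*(k:ℕ))).coeff (j:ℕ) * (q (2*(k:ℕ)+1)).coeff (i:ℕ))
          - (1 / r k) * ((q (2*(k:ℕ))).coeff (i:ℕ) * (q (2*(k:ℕ)+1)).coeff (j:ℕ)))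
          * skewInner μ (X ^ (j:ℕ)) (X ^ (l:ℕ)) := Finset.sum_comm
    _ = ∑ k : Fin n, (a (2*(k:ℕ)) * (q (2*(k:ℕ))).coeff (i:ℕ)
          + a (2*(k:ℕ)+1) * (q (2*(k:ℕ)+1)).coeff (i:ℕ)) :=
        Finset.sum_congr rfl fun k _ => hk k
    _ = ∑ k ∈ Finset.range n, (a (2*k) * (q (2*k)).coeff (i:ℕ)
          + a (2*k+1) * (q (2*k+1)).coeff (i:ℕ)) :=
        Fin.sum_univ_eq_sum_range (fun m => a (2*m) * (q (2*m)).coeff (i:ℕ) + a (2*m+1) * (q (2*m+1)).coeff (i:ℕ)) n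
    _ = ∑ m ∈ Finset.range (2 * n), a m * (q m).coeff (i:ℕ) :=
        (sum_range_pair n (fun m => a m * (q m).coeff (i:ℕ))).symm
    _ = ((X : Polynomial ℝ) ^ (l : ℕ)).coeff (i:ℕ) := by
        rw [ha, Polynomial.finset_sum_coeff]
        exact Finset.sum_congr rfl fun m _ => (Polynomial.coeff_C_mul _).symm
    _ = if i = l then 1 else 0 := by
        rw [Polynomial.coeff_X_pow]
        simp [Fin.ext_iff]
end

section
/- (Characteristic polynomial recursion for the $\infty$-Jacobi transition) Let $0 < x_1 < \cdots < x_n < 1$ and $\nu > 0$, and let $\tilde{y} = (\tilde{y}_1, \ldots, \tilde{y}_n)$ with $0 \le \tilde y_1 \le x_1 \le \cdots \le \tilde y_n \le x_n$ be the unique solution of the critical point equations $\sum_{j=1}^n \frac{1}{\tilde{y}_i - x_j} + \frac{\nu+1}{\tilde{y}_i} = 0$ for $i = 1,\ldots,n$. Then the polynomial identity $\frac{1}{n}\sum_{i=1}^n \Big(z - \frac{\nu+1}{n+\nu+1}x_i\Big)\prod_{j\ne i}(z - x_j) = \prod_{i=1}^n (z - \tilde{y}_i)$ holds for all $z$. 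-/
open Polynomial Finset

/-- characteristic polynomial recursion for the `∞`-Jacobi transition.
If `ỹ` interlaces with `x` and solves the critical point equations
`∑ⱼ 1/(ỹᵢ - xⱼ) + (ν+1)/ỹᵢ = 0`, then
`(1/n) ∑ᵢ (z - (ν+1)/(n+ν+1) xᵢ) ∏_{j≠i} (z - xⱼ) = ∏ᵢ (z - ỹᵢ)` for all `z`. -/
theorem infty_jacobi_characteristic_recursion (n : ℕ) (hn : 1 ≤ n) (ν : ℝ) (hν : 0 < ν)
    (x y : Fin n → ℝ) (hx : StrictMono x)
    (hx0 : ∀ i, 0 < x i) (hx1 : ∀ i, x i < 1)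
    (hy0 : ∀ i, 0 ≤ y i) (hyx : ∀ i, y i ≤ x i)
    (hxy : ∀ i : Fin n, ∀ h : (i : ℕ) + 1 < n, x i ≤ y ⟨(i : ℕ) + 1, h⟩)
    (hne : ∀ i j, y i ≠ x j) (hy0' : ∀ i, y i ≠ 0)
    (hcrit : ∀ i, (∑ j, 1 / (y i - x j)) + (ν + 1) / y i = 0) :
    ∀ z : ℝ,
      (1 / (n : ℝ)) * ∑ i, (z - (ν + 1) / ((n : ℝ) + ν + 1) * x i) *
          ∏ j ∈ Finset.univ.erase i, (z - x j) =
        ∏ i, (z - y i) := by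
  classical
  set N : ℝ := (n : ℝ) with hN
  have hNpos : (0 : ℝ) < N := by
    simp only [hN]
    exact_mod_cast Nat.lt_of_lt_of_le Nat.zero_lt_one hn
  have hNne : N ≠ 0 := ne_of_gt hNpos
  have hden : N + ν + 1 ≠ 0 := by positivity
  -- real-valued functions
  set P : ℝ → ℝ := fun z => ∏ i, (z - x i) with hP
  set D : ℝ → ℝ := fun z => ∑ i, ∏ j ∈ Finset.univ.erase i, (z - x j) with hD
  set Qe : ℝ → ℝ := fun z => ∏ i, (z - y i) with hQe
  -- y is strictly monotone, hence injective
  have hymono : StrictMono y := by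
    rintro ⟨i, hi⟩ ⟨j, hj⟩ hij
    simp only [Fin.mk_lt_mk] at hij
    have h1 : y ⟨i, hi⟩ < x ⟨i, hi⟩ := lt_of_le_of_ne (hyx _) (hne _ _)
    have h2 : x ⟨i, hi⟩ ≤ x ⟨j - 1, by omega⟩ := by
      apply hx.monotone
      simp only [Fin.mk_le_mk]
      omega
    have h3 : x ⟨j - 1, by omega⟩ ≤ y ⟨j, hj⟩ := by
      have h' : (j - 1) + 1 < n := by omega
      have := hxy ⟨j - 1, by omega⟩ h'
      have e : (⟨(j - 1 : ℕ) + 1, h'⟩ : Fin n) = ⟨j, hj⟩ := by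
        ext; simp; omega
      rwa [e] at this
    linarith
  -- the polynomials
  set p : Polynomial ℝ := ∏ i, (X - C (x i)) with hp
  set q : Polynomial ℝ := ∏ i, (X - C (y i)) with hq
  set d : Polynomial ℝ := ∑ i, ∏ j ∈ Finset.univ.erase i, (X - C (x j)) with hd
  have hpmonic : p.Monic := monic_prod_of_monic _ _ fun i _ => monic_X_sub_C _
  have hqmonic : q.Monic := monic_prod_of_monic _ _ fun i _ => monic_X_sub_C _
  have hpdeg : p.natDegree = n := by
    rw [hp, natDegree_prod_of_monic _ _ fun i _ => monic_X_sub_C _]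
    simp
  have hqdeg : q.natDegree = n := by
    rw [hq, natDegree_prod_of_monic _ _ fun i _ => monic_X_sub_C _]
    simp
  have hterm_monic : ∀ i : Fin n,
      (∏ j ∈ Finset.univ.erase i, (X - C (x j)) : Polynomial ℝ).Monic :=
    fun i => monic_prod_of_monic _ _ fun j _ => monic_X_sub_C _
  have hterm_deg : ∀ i : Fin n,
      (∏ j ∈ Finset.univ.erase i, (X - C (x j)) : Polynomial ℝ).natDegree = n - 1 := by
    intro i
    rw [natDegree_prod_of_monic _ _ fun j _ => monic_X_sub_C _]
    simp [Finset.card_erase_of_mem]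
  have hddeg : d.natDegree ≤ n - 1 := by
    rw [hd]
    refine natDegree_sum_le_of_forall_le _ _ fun i _ => le_of_eq (hterm_deg i)
  -- evaluations
  have hpeval : ∀ z : ℝ, p.eval z = P z := by intro z; simp [hp, hP, eval_prod]
  have hqeval : ∀ z : ℝ, q.eval z = Qe z := by intro z; simp [hq, hQe, eval_prod]
  have hdeval : ∀ z : ℝ, d.eval z = D z := by
    intro z; simp [hd, hD, eval_finset_sum, eval_prod]
  -- the remainder polynomial
  set R : Polynomial ℝ := X * d + C (ν + 1) * p - C (N + ν + 1) * q with hR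
  have hRdeg : R.natDegree ≤ n - 1 := by
    rw [natDegree_le_iff_coeff_eq_zero]
    intro m hm
    have hmn : n ≤ m := by omega
    have hcoeffXd : (X * d).coeff m = d.coeff (m - 1) := by
      obtain ⟨k, rfl⟩ : ∃ k, m = k + 1 := ⟨m - 1, by omega⟩
      simp [coeff_X_mul]
    rw [hR]
    rw [coeff_sub, coeff_add, hcoeffXd, coeff_C_mul, coeff_C_mul]
    rcases eq_or_lt_of_le hmn with h | h
    · -- m = n
      have h1 : d.coeff (m - 1) = N := by
        rw [hd, finset_sum_coeff]
        have : ∀ i ∈ (Finset.univ : Finset (Fin n)),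
            (∏ j ∈ Finset.univ.erase i, (X - C (x j)) : Polynomial ℝ).coeff (m - 1) = 1 := by
          intro i _
          have := (hterm_monic i).coeff_natDegree
          rwa [hterm_deg i, show n - 1 = m - 1 by omega] at this
        rw [Finset.sum_congr rfl this]
        simp [hN]
      have h2 : p.coeff m = 1 := by
        rw [← h, ← hpdeg]; exact hpmonic.coeff_natDegree
      have h3 : q.coeff m = 1 := by
        rw [← h, ← hqdeg]; exact hqmonic.coeff_natDegree
      rw [h1, h2, h3]; ring
    · -- m > n
      have h1 : d.coeff (m - 1) = 0 :=
        coeff_eq_zero_of_natDegree_lt (lt_of_le_of_lt hddeg (by omega))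
      have h2 : p.coeff m = 0 := coeff_eq_zero_of_natDegree_lt (by omega)
      have h3 : q.coeff m = 0 := coeff_eq_zero_of_natDegree_lt (by omega)
      rw [h1, h2, h3]; ring
  -- R vanishes at every y i
  have hRroot : ∀ i, R.eval (y i) = 0 := by
    intro i
    have hqy : Qe (y i) = 0 :=
      Finset.prod_eq_zero (Finset.mem_univ i) (by ring)
    have hsum : D (y i) = -((ν + 1) / y i) * P (y i) := by
      have hterm : ∀ j : Fin n,
          (∏ k ∈ Finset.univ.erase j, (y i - x k)) = (1 / (y i - x j)) * P (y i) := by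
        intro j
        have hfac : P (y i) = (y i - x j) * ∏ k ∈ Finset.univ.erase j, (y i - x k) :=
          (Finset.mul_prod_erase _ _ (Finset.mem_univ j)).symm
        have hne' : y i - x j ≠ 0 := sub_ne_zero.mpr (hne i j)
        rw [hfac]
        field_simp
      have hcrit' : (∑ j, 1 / (y i - x j)) = -((ν + 1) / y i) := by
        have := hcrit i; linarith
      calc D (y i) = ∑ j, (1 / (y i - x j)) * P (y i) := by
            rw [hD]
            exact Finset.sum_congr rfl fun j _ => hterm j
        _ = (∑ j, 1 / (y i - x j)) * P (y i) := by rw [Finset.sum_mul]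
        _ = -((ν + 1) / y i) * P (y i) := by rw [hcrit']
    have hyi := hy0' i
    simp only [hR, eval_sub, eval_add, eval_mul, eval_X, eval_C, hpeval, hqeval, hdeval,
      hqy, hsum]
    field_simp
    ring
  -- conclude R = 0
  have hRzero : R = 0 := by
    apply Polynomial.eq_zero_of_natDegree_lt_card_of_eval_eq_zero R hymono.injective hRroot
    calc R.natDegree ≤ n - 1 := hRdeg
      _ < n := by omega
      _ = Fintype.card (Fin n) := (Fintype.card_fin n).symm
  have key : ∀ z : ℝ, z * D z + (ν + 1) * P z = (N + ν + 1) * Qe z := by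
    intro z
    have := congrArg (Polynomial.eval z) hRzero
    simp only [hR, eval_sub, eval_add, eval_mul, eval_X, eval_C, eval_zero,
      hpeval, hqeval, hdeval] at this
    linarith
  -- final algebra
  intro z
  have hsum : ∑ i, (z - (ν + 1) / (N + ν + 1) * x i) *
      ∏ j ∈ Finset.univ.erase i, (z - x j)
      = (ν + 1) / (N + ν + 1) * (N * P z) + (1 - (ν + 1) / (N + ν + 1)) * (z * D z) := by
    have hsplit : ∀ i ∈ (Finset.univ : Finset (Fin n)),
        (z - (ν + 1) / (N + ν + 1) * x i) * ∏ j ∈ Finset.univ.erase i, (z - x j)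
        = (ν + 1) / (N + ν + 1) * ((z - x i) * ∏ j ∈ Finset.univ.erase i, (z - x j))
          + (1 - (ν + 1) / (N + ν + 1)) * (z * ∏ j ∈ Finset.univ.erase i, (z - x j)) := by
      intro i _
      ring
    rw [Finset.sum_congr rfl hsplit, Finset.sum_add_distrib, ← Finset.mul_sum, ← Finset.mul_sum]
    congr 1
    · congr 1
      have : ∀ i ∈ (Finset.univ : Finset (Fin n)),
          (z - x i) * ∏ j ∈ Finset.univ.erase i, (z - x j) = P z := fun i _ =>
        Finset.mul_prod_erase Finset.univ (fun j => z - x j) (Finset.mem_univ i)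
      rw [Finset.sum_congr rfl this]
      simp [hN, mul_comm]
    · rw [← Finset.mul_sum, hD]
  rw [hsum]
  have hk := key z
  field_simp
  linear_combination N * hk
end

section
/- (Gradient cancellation identity for the frozen Jacobi transition) Let $0 < x_1 < \cdots < x_n < 1$, $\nu > 0$, and let $\tilde{y}_1 < \cdots < \tilde{y}_n$ be the roots of $\frac{1}{n}\sum_{i=1}^n (z - \frac{\nu+1}{n+\nu+1}x_i)\prod_{j\ne i}(z - x_j)$. Then for each $i = 1,\ldots,n$: $\sum_{j=1}^n \frac{1}{x_i - \tilde{y}_j} = \frac{\nu+2}{x_i} + 2\sum_{j\ne i}\frac{1}{x_i - x_j}$. -/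
/-- gradient cancellation identity for the frozen Jacobi transition.
If `ỹ₁ < ⋯ < ỹₙ` are the roots of `(1/n) ∑ᵢ (z - (ν+1)/(n+ν+1) xᵢ) ∏_{j≠i}(z - xⱼ)`
(with `xᵢ ≠ ỹⱼ` for all `i,j`), then
`∑ⱼ 1/(xᵢ - ỹⱼ) = (ν+2)/xᵢ + 2 ∑_{j≠i} 1/(xᵢ - xⱼ)` for each `i`. -/
theorem frozen_jacobi_gradient_cancellation (n : ℕ) (hn : 1 ≤ n) (ν : ℝ) (hν : 0 < ν)
    (x y : Fin n → ℝ) (hx : StrictMono x)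
    (hx0 : ∀ i, 0 < x i) (hx1 : ∀ i, x i < 1)
    (hy : StrictMono y) (hne : ∀ i j, x i ≠ y j)
    (hroots : ∀ z : ℝ,
      (1 / (n : ℝ)) * ∑ i, (z - (ν + 1) / ((n : ℝ) + ν + 1) * x i) *
          ∏ j ∈ Finset.univ.erase i, (z - x j) =
        ∏ i, (z - y i)) :
    ∀ i, ∑ j, 1 / (x i - y j) =
      (ν + 2) / x i + 2 * ∑ j ∈ Finset.univ.erase i, 1 / (x i - x j) := by
  intro i
  classical
  obtain ⟨c, hc⟩ : ∃ c : ℝ, c = (ν + 1) / ((n : ℝ) + ν + 1) := ⟨_, rfl⟩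
  simp only [← hc] at hroots
  have hn0 : (0:ℝ) < n := by exact_mod_cast hn
  have hnν : (n : ℝ) + ν + 1 ≠ 0 := by positivity
  have hxne : ∀ j, j ≠ i → x i - x j ≠ 0 := fun j hj =>
    sub_ne_zero.2 (fun h => hj (hx.injective h).symm)
  have hyne : ∀ j, x i - y j ≠ 0 := fun j => sub_ne_zero.2 (hne i j)
  set P : ℝ := ∏ j ∈ Finset.univ.erase i, (x i - x j) with hP
  have hPne : P ≠ 0 := Finset.prod_ne_zero_iff.2 fun j hj =>
    hxne j (Finset.ne_of_mem_erase hj)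
  set G : ℝ := ∏ j, (x i - y j) with hG
  have hGne : G ≠ 0 := Finset.prod_ne_zero_iff.2 fun j _ => hyne j
  set S : ℝ := ∑ j ∈ Finset.univ.erase i, 1 / (x i - x j) with hS
  -- derivative of RHS
  have hdG : HasDerivAt (fun z => ∏ j, (z - y j))
      (∑ j, (∏ k ∈ Finset.univ.erase j, (x i - y k)) • (1:ℝ)) (x i) :=
    HasDerivAt.fun_finsetProd (fun j _ => (hasDerivAt_id _).sub_const _)
  -- derivative of LHS
  have hdF : HasDerivAt (fun z => (1 / (n : ℝ)) * ∑ k, (z - c * x k) *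
        ∏ j ∈ Finset.univ.erase k, (z - x j))
      ((1 / (n : ℝ)) * ∑ k, (1 * ∏ j ∈ Finset.univ.erase k, (x i - x j) +
        (x i - c * x k) * ∑ m ∈ Finset.univ.erase k,
          (∏ j ∈ (Finset.univ.erase k).erase m, (x i - x j)) • (1:ℝ))) (x i) := by
    refine HasDerivAt.const_mul _ (HasDerivAt.fun_sum fun k _ => ?_)
    exact ((hasDerivAt_id _).sub_const _).mul
      (HasDerivAt.fun_finsetProd (fun j _ => (hasDerivAt_id _).sub_const _))
  have hfun : (fun z => (1 / (n : ℝ)) * ∑ k, (z - c * x k) *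
        ∏ j ∈ Finset.univ.erase k, (z - x j)) = (fun z => ∏ j, (z - y j)) := by
    funext z; exact hroots z
  rw [hfun] at hdF
  have hDeq := hdF.unique hdG
  -- value equality at x i
  have hval := hroots (x i)
  -- compute F (x i)
  have hFval : (1 / (n : ℝ)) * ∑ k, (x i - c * x k) *
      ∏ j ∈ Finset.univ.erase k, (x i - x j) = (1 / (n : ℝ)) * ((x i - c * x i) * P) := by
    congr 1
    rw [Finset.sum_eq_single i]
    · intro k _ hk
      rw [Finset.prod_eq_zero (Finset.mem_erase.2 ⟨hk.symm, Finset.mem_univ i⟩) (sub_self (x i))]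
      ring
    · intro h; exact absurd (Finset.mem_univ i) h
  -- per-term: Q k := prod over double erase
  have hQ : ∀ k, k ≠ i → ∏ j ∈ (Finset.univ.erase i).erase k, (x i - x j)
      = P * (x i - x k)⁻¹ := by
    intro k hk
    have hk' : k ∈ Finset.univ.erase i := Finset.mem_erase.2 ⟨hk, Finset.mem_univ k⟩
    have hmul := Finset.mul_prod_erase (Finset.univ.erase i) (fun j => x i - x j) hk'
    rw [hP, ← hmul]
    field_simp
    exact (mul_div_cancel_right₀ _ (hxne k hk)).symm
  -- simplify the derivative D_F
  have hDF : (1 / (n : ℝ)) * ∑ k, (1 * ∏ j ∈ Finset.univ.erase k, (x i - x j) +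
        (x i - c * x k) * ∑ m ∈ Finset.univ.erase k,
          (∏ j ∈ (Finset.univ.erase k).erase m, (x i - x j)) • (1:ℝ))
      = (1 / (n : ℝ)) * (P + (x i - c * x i) * (P * S) +
          ∑ k ∈ Finset.univ.erase i, (x i - c * x k) * (P * (x i - x k)⁻¹)) := by
    congr 1
    rw [← Finset.add_sum_erase _ _ (Finset.mem_univ i)]
    congr 1
    · -- k = i term
      have h1 : ∑ m ∈ Finset.univ.erase i,
          (∏ j ∈ (Finset.univ.erase i).erase m, (x i - x j)) • (1:ℝ) = P * S := by
        rw [hS, Finset.mul_sum]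
        refine Finset.sum_congr rfl fun m hm => ?_
        rw [hQ m (Finset.ne_of_mem_erase hm), smul_eq_mul, mul_one, one_div]
      rw [h1]; ring
    · -- k ≠ i terms
      refine Finset.sum_congr rfl fun k hk => ?_
      have hki : k ≠ i := Finset.ne_of_mem_erase hk
      have h0 : ∏ j ∈ Finset.univ.erase k, (x i - x j) = 0 :=
        Finset.prod_eq_zero (Finset.mem_erase.2 ⟨Ne.symm hki, Finset.mem_univ i⟩) (sub_self (x i))
      have h2 : ∑ m ∈ Finset.univ.erase k,
          (∏ j ∈ (Finset.univ.erase k).erase m, (x i - x j)) • (1:ℝ)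
          = P * (x i - x k)⁻¹ := by
        rw [Finset.sum_eq_single i]
        · rw [Finset.erase_right_comm, hQ k hki, smul_eq_mul, mul_one]
        · intro m hm hmi
          rw [smul_eq_mul, mul_one,
            Finset.prod_eq_zero (Finset.mem_erase.2 ⟨Ne.symm hmi,
              Finset.mem_erase.2 ⟨Ne.symm hki, Finset.mem_univ i⟩⟩) (sub_self (x i))]
        · intro h
          exact absurd (Finset.mem_erase.2 ⟨Ne.symm hki, Finset.mem_univ i⟩) h
      rw [h0, h2]; ring
  rw [hDF] at hDeq
  -- sum over k ≠ i of (x i - c x k)/(x i - x k) = (1-c) x i S + c (n-1)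
  have hsum2 : ∑ k ∈ Finset.univ.erase i, (x i - c * x k) * (P * (x i - x k)⁻¹)
      = P * ((1 - c) * x i * S + c * ((n:ℝ) - 1)) := by
    have hcard : ((Finset.univ.erase i).card : ℝ) = (n:ℝ) - 1 := by
      rw [Finset.card_erase_of_mem (Finset.mem_univ i), Finset.card_univ, Fintype.card_fin]
      push_cast [Nat.cast_sub hn]
      ring
    have : ∑ k ∈ Finset.univ.erase i, (x i - c * x k) * (P * (x i - x k)⁻¹)
        = ∑ k ∈ Finset.univ.erase i, (P * ((1 - c) * x i * (1 / (x i - x k))) + P * c) := by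
      refine Finset.sum_congr rfl fun k hk => ?_
      have hk0 := hxne k (Finset.ne_of_mem_erase hk)
      field_simp
      ring
    rw [this, Finset.sum_add_distrib, ← Finset.mul_sum, ← Finset.mul_sum, hS,
      Finset.sum_const, nsmul_eq_mul, hcard]
    ring
  rw [hsum2] at hDeq
  -- LHS sum identity: ∑ 1/(xi - yj) * G = D_G
  have hsumG : ∑ j, 1 / (x i - y j) =
      (∑ j, (∏ k ∈ Finset.univ.erase j, (x i - y k)) • (1:ℝ)) / G := by
    rw [Finset.sum_div]
    refine Finset.sum_congr rfl fun j _ => ?_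
    rw [smul_eq_mul, mul_one, div_eq_div_iff (hyne j) hGne, one_mul, hG,
      ← Finset.mul_prod_erase Finset.univ _ (Finset.mem_univ j)]
    ring
  -- key cancellation: 1 + c(n-1) = (1-c)(ν+2)
  have hkey : 1 + c * ((n:ℝ) - 1) = (1 - c) * (ν + 2) := by
    rw [hc]; field_simp; ring
  -- conclude
  have hGval : G = (1 / (n : ℝ)) * ((x i - c * x i) * P) := by rw [hG, ← hval]; exact hFval
  have hxi : x i ≠ 0 := (hx0 i).ne'
  have hmain : (1 / (n : ℝ)) * (P + (x i - c * x i) * (P * S) +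
      P * ((1 - c) * x i * S + c * ((n:ℝ) - 1))) = ((ν + 2) / x i + 2 * S) * G := by
    rw [hGval]
    field_simp
    linear_combination hkey
  rw [hsumG, ← hDeq, hmain, mul_div_assoc, div_self hGne, mul_one]
end

section
/- (Normalization of the rank-one perturbation Markov kernel, unitary case $\theta = 1$) For fixed $0 < x_1 < \cdots < x_n < 1$ and integer $\nu \ge 0$, $\int_{R} \frac{\Gamma(\nu+n+1)}{\Gamma(\nu+1)}\,\frac{\triangle(y)}{\triangle(x)}\prod_{i=1}^n \frac{y_i^{\nu}}{x_i^{\nu+1}}\, dy_1\cdots dy_n = 1$, where $R = \{0 \le y_1 \le x_1 \le y_2 \le \cdots \le y_n \le x_n\}$ and $\triangle(z) = \prod_{1\le i<j\le n}(z_j - z_i)$. -/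
open MeasureTheory

lemma det_telescope {n : ℕ} (u : Fin n → Fin n → ℝ) :
    Matrix.det (Matrix.of fun i j => u i j -
      (if h : (i : ℕ) = 0 then 0
        else u ⟨(i : ℕ) - 1, Nat.lt_of_le_of_lt (Nat.sub_le _ _) i.isLt⟩ j))
      = Matrix.det (Matrix.of u) := by
  set L : Matrix (Fin n) (Fin n) ℝ :=
    Matrix.of fun i k => (if k = i then (1:ℝ) else 0) -
      (if (k : ℕ) + 1 = (i : ℕ) then 1 else 0) with hLdef
  have hLl : L.BlockTriangular OrderDual.toDual := by
    intro i j hij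
    have h1 : j ≠ i := by
      intro h; subst h; exact lt_irrefl _ hij
    have h2 : (j : ℕ) + 1 ≠ (i : ℕ) := by
      have : (i : ℕ) < (j : ℕ) := hij
      omega
    simp [hLdef, h1, h2]
  have hLdet : L.det = 1 := by
    rw [Matrix.det_of_lowerTriangular L hLl]
    refine Finset.prod_eq_one fun i _ => ?_
    have : (i : ℕ) + 1 ≠ (i : ℕ) := by omega
    simp [hLdef, this]
  have key : (Matrix.of fun i j => u i j -
      (if h : (i : ℕ) = 0 then 0
        else u ⟨(i : ℕ) - 1, Nat.lt_of_le_of_lt (Nat.sub_le _ _) i.isLt⟩ j))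
      = L * Matrix.of u := by
    ext i j
    rw [Matrix.mul_apply]
    simp only [hLdef, Matrix.of_apply, sub_mul]
    rw [Finset.sum_sub_distrib]
    congr 1
    · rw [Finset.sum_eq_single i]
      · simp
      · intro k _ hk; simp [hk]
      · intro h; exact absurd (Finset.mem_univ i) h
    · by_cases hi : (i : ℕ) = 0
      · rw [dif_pos hi]
        refine (Finset.sum_eq_zero fun k _ => ?_).symm
        have : (k : ℕ) + 1 ≠ (i : ℕ) := by omega
        simp [this]
      · rw [dif_neg hi]
        rw [Finset.sum_eq_single (⟨(i : ℕ) - 1,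
            Nat.lt_of_le_of_lt (Nat.sub_le _ _) i.isLt⟩ : Fin n)]
        · simp only [Fin.val_mk]
          rw [if_pos (by omega), one_mul]
        · intro k _ hk
          have : (k : ℕ) + 1 ≠ (i : ℕ) := by
            intro h
            apply hk
            apply Fin.ext
            simp
            omega
          simp [this]
        · intro h; exact absurd (Finset.mem_univ _) h
  rw [key, Matrix.det_mul, hLdet, one_mul]

lemma box_prod_integral {n : ℕ} (a b : Fin n → ℝ) (f : Fin n → ℝ → ℝ) :
    ∫ y in Set.Icc a b, ∏ i, f i (y i) = ∏ i, ∫ t in Set.Icc (a i) (b i), f i t := by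
  rw [← integral_indicator measurableSet_Icc]
  have h : (Set.Icc a b).indicator (fun y => ∏ i, f i (y i))
      = fun y => ∏ i, (Set.Icc (a i) (b i)).indicator (f i) (y i) := by
    funext y
    by_cases h : y ∈ Set.Icc a b
    · rw [Set.indicator_of_mem h]
      exact Finset.prod_congr rfl fun i _ =>
        (Set.indicator_of_mem (Set.mem_Icc.mpr ⟨h.1 i, h.2 i⟩) _).symm
    · rw [Set.indicator_of_notMem h]
      obtain ⟨i, hi⟩ : ∃ i, y i ∉ Set.Icc (a i) (b i) := by
        by_contra hc; push_neg at hc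
        exact h ⟨fun i => (hc i).1, fun i => (hc i).2⟩
      exact (Finset.prod_eq_zero (Finset.mem_univ i)
        (Set.indicator_of_notMem hi _)).symm
  rw [h, MeasureTheory.integral_fintype_prod_volume_eq_prod]
  exact Finset.prod_congr rfl fun i _ => by rw [integral_indicator measurableSet_Icc]

lemma det_box_integral {n : ℕ} (a b : Fin n → ℝ) (m : Fin n → ℕ) :
    ∫ y in Set.Icc a b, Matrix.det (Matrix.of fun i j => (y i) ^ (m j))
      = Matrix.det (Matrix.of fun i j => ∫ t in Set.Icc (a i) (b i), t ^ (m j)) := by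
  have hint : ∀ σ : Equiv.Perm (Fin n), IntegrableOn
      (fun y : Fin n → ℝ => (Equiv.Perm.sign σ : ℝ) * ∏ i, (y (σ i)) ^ (m i))
      (Set.Icc a b) volume := by
    intro σ
    apply ContinuousOn.integrableOn_compact isCompact_Icc
    apply Continuous.continuousOn
    fun_prop
  calc ∫ y in Set.Icc a b, Matrix.det (Matrix.of fun i j => (y i) ^ (m j))
      = ∫ y in Set.Icc a b, ∑ σ : Equiv.Perm (Fin n),
          (Equiv.Perm.sign σ : ℝ) * ∏ i, (y (σ i)) ^ (m i) := by
        simp_rw [Matrix.det_apply']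
        rfl
    _ = ∑ σ : Equiv.Perm (Fin n), (Equiv.Perm.sign σ : ℝ) *
          ∏ i, ∫ t in Set.Icc (a i) (b i), t ^ (m (σ⁻¹ i)) := by
        rw [integral_finset_sum _ (fun σ _ => hint σ)]
        refine Finset.sum_congr rfl fun σ _ => ?_
        rw [integral_const_mul]
        congr 1
        have : ∀ y : Fin n → ℝ, (∏ i, (y (σ i)) ^ (m i))
            = ∏ i, (y i) ^ (m (σ⁻¹ i)) := by
          intro y
          rw [← Equiv.prod_comp σ (fun i => (y i) ^ (m (σ⁻¹ i)))]
          simp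
        simp_rw [this]
        exact box_prod_integral a b (fun i t => t ^ (m (σ⁻¹ i)))
    _ = Matrix.det (Matrix.of fun i j => ∫ t in Set.Icc (a i) (b i), t ^ (m j)) := by
        rw [Matrix.det_apply']
        refine Finset.sum_congr rfl fun σ _ => ?_
        congr 1
        rw [← Equiv.prod_comp σ (fun i => ∫ t in Set.Icc (a i) (b i), t ^ (m (σ⁻¹ i)))]
        simp

lemma det_pow_vandermonde {n ν : ℕ} (y : Fin n → ℝ) :
    Matrix.det (Matrix.of fun i j : Fin n => (y i) ^ (ν + (j : ℕ)))
      = (∏ i, (y i) ^ ν) * ∏ i, ∏ j ∈ Finset.Ioi i, (y j - y i) := by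
  have : (Matrix.of fun i j : Fin n => (y i) ^ (ν + (j : ℕ)))
      = Matrix.of (fun i j => (y i) ^ ν * Matrix.vandermonde y i j) := by
    ext i j
    simp [Matrix.vandermonde, pow_add]
  rw [this, Matrix.det_mul_column, Matrix.det_vandermonde]

lemma fact_prod_real (ν : ℕ) : ∀ n : ℕ,
    (ν.factorial : ℝ) * ∏ j : Fin n, ((ν : ℝ) + (j : ℕ) + 1) = ((ν + n).factorial : ℝ)
  | 0 => by simp
  | (n+1) => by
      rw [Fin.prod_univ_castSucc]
      have h := fact_prod_real ν n
      simp only [Fin.coe_castSucc, Fin.val_last]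
      rw [← mul_assoc, h]
      have : ν + (n + 1) = (ν + n) + 1 := by omega
      rw [this, Nat.factorial_succ]
      push_cast
      ring

/-- normalization of the rank-one perturbation Markov kernel
(unitary case `θ = 1`): the kernel integrates to `1` over the interlacing region
`0 ≤ y₁ ≤ x₁ ≤ y₂ ≤ ⋯ ≤ yₙ ≤ xₙ`. -/
theorem markov_kernel_normalization (n ν : ℕ) (x : Fin n → ℝ)
    (hx : StrictMono x) (hx0 : ∀ i, 0 < x i) (hx1 : ∀ i, x i < 1) :
    ∫ y in {y : Fin n → ℝ | (∀ i, 0 ≤ y i) ∧ (∀ i, y i ≤ x i) ∧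
        ∀ i : Fin n, ∀ h : (i : ℕ) + 1 < n, x i ≤ y ⟨(i : ℕ) + 1, h⟩},
      (Real.Gamma ((ν : ℝ) + (n : ℝ) + 1) / Real.Gamma ((ν : ℝ) + 1)) *
        ((∏ i, ∏ j ∈ Finset.Ioi i, (y j - y i)) /
          (∏ i, ∏ j ∈ Finset.Ioi i, (x j - x i))) *
        ∏ i, (y i ^ ν / x i ^ (ν + 1)) = 1 := by
  classical
  set a : Fin n → ℝ := fun i => if h : (i : ℕ) = 0 then 0
      else x ⟨(i : ℕ) - 1, Nat.lt_of_le_of_lt (Nat.sub_le _ _) i.isLt⟩ with ha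
  -- the interlacing region is a box
  have hset : {y : Fin n → ℝ | (∀ i, 0 ≤ y i) ∧ (∀ i, y i ≤ x i) ∧
      ∀ i : Fin n, ∀ h : (i : ℕ) + 1 < n, x i ≤ y ⟨(i : ℕ) + 1, h⟩}
      = Set.Icc a x := by
    ext y
    simp only [Set.mem_setOf_eq, Set.mem_Icc, Pi.le_def, ha]
    constructor
    · rintro ⟨h0, h1, h2⟩
      refine ⟨fun i => ?_, fun i => h1 i⟩
      by_cases hi : (i : ℕ) = 0
      · rw [dif_pos hi]; exact h0 i
      · rw [dif_neg hi]
        have hlt := i.isLt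
        have h3 := h2 ⟨(i : ℕ) - 1, by omega⟩ (by simp only [Fin.val_mk]; omega)
        have he : (⟨(((⟨(i : ℕ) - 1, by omega⟩ : Fin n)) : ℕ) + 1,
            by simp only [Fin.val_mk]; omega⟩ : Fin n) = i := by
          apply Fin.ext; simp only [Fin.val_mk]; omega
        rwa [he] at h3
    · rintro ⟨hl, hr⟩
      refine ⟨fun i => ?_, fun i => hr i, fun i h => ?_⟩
      · refine le_trans ?_ (hl i)
        by_cases hi : (i : ℕ) = 0
        · rw [dif_pos hi]
        · rw [dif_neg hi]; exact (hx0 _).le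
      · have h3 := hl ⟨(i : ℕ) + 1, h⟩
        rw [dif_neg (by simp)] at h3
        have he : (⟨((((⟨(i : ℕ) + 1, h⟩ : Fin n)) : ℕ)) - 1,
            Nat.lt_of_le_of_lt (Nat.sub_le _ _) (Fin.isLt _)⟩ : Fin n) = i := by
          apply Fin.ext; simp only [Fin.val_mk]; omega
        rwa [he] at h3
  have hab : ∀ i, a i ≤ x i := by
    intro i
    by_cases hi : (i : ℕ) = 0
    · rw [ha]; simp only; rw [dif_pos hi]; exact (hx0 i).le
    · rw [ha]; simp only; rw [dif_neg hi]
      exact (hx (Fin.lt_def.mpr (by simp only [Fin.val_mk]; omega))).le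
  set Δx : ℝ := ∏ i, ∏ j ∈ Finset.Ioi i, (x j - x i) with hΔ
  have hΔpos : 0 < Δx := by
    rw [hΔ]
    refine Finset.prod_pos fun i _ => Finset.prod_pos fun j hj => ?_
    exact sub_pos.mpr (hx (Finset.mem_Ioi.mp hj))
  set Px : ℝ := ∏ i, x i ^ (ν + 1) with hPx
  have hPxpos : 0 < Px := Finset.prod_pos fun i _ => pow_pos (hx0 i) _
  have hcpos : (0:ℝ) < ∏ j : Fin n, ((ν : ℝ) + (j : ℕ) + 1) :=
    Finset.prod_pos fun j _ => by positivity
  have hgamma : Real.Gamma ((ν : ℝ) + (n : ℝ) + 1) / Real.Gamma ((ν : ℝ) + 1)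
      = ∏ j : Fin n, ((ν : ℝ) + (j : ℕ) + 1) := by
    have h1 : Real.Gamma ((ν : ℝ) + 1) = (ν.factorial : ℝ) :=
      Real.Gamma_nat_eq_factorial ν
    have h2 : Real.Gamma ((ν : ℝ) + (n : ℝ) + 1) = (((ν + n).factorial : ℕ) : ℝ) := by
      rw [show (ν : ℝ) + (n : ℝ) = ((ν + n : ℕ) : ℝ) by push_cast; ring]
      exact Real.Gamma_nat_eq_factorial _
    rw [h1, h2, ← fact_prod_real ν n, mul_comm, mul_div_assoc, div_self (by
      exact_mod_cast Nat.factorial_ne_zero ν), mul_one]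
  -- rewrite the integrand as constant times a determinant
  have hK : ∀ y : Fin n → ℝ,
      (Real.Gamma ((ν : ℝ) + (n : ℝ) + 1) / Real.Gamma ((ν : ℝ) + 1)) *
        ((∏ i, ∏ j ∈ Finset.Ioi i, (y j - y i)) / Δx) * ∏ i, (y i ^ ν / x i ^ (ν + 1))
      = ((∏ j : Fin n, ((ν : ℝ) + (j : ℕ) + 1)) / (Δx * Px)) *
          Matrix.det (Matrix.of fun i j : Fin n => (y i) ^ (ν + (j : ℕ))) := by
    intro y
    rw [hgamma, det_pow_vandermonde, Finset.prod_div_distrib, ← hPx]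
    have h1 : Δx ≠ 0 := ne_of_gt hΔpos
    have h2 : Px ≠ 0 := ne_of_gt hPxpos
    field_simp
  rw [hset]
  rw [integral_congr_ae (Filter.Eventually.of_forall fun y => hK y)]
  rw [integral_const_mul, det_box_integral a x (fun j => ν + (j : ℕ))]
  -- compute the entry integrals
  have hentry : (Matrix.of fun i j : Fin n => ∫ t in Set.Icc (a i) (x i), t ^ (ν + (j : ℕ)))
      = Matrix.of fun i j : Fin n => ((↑(ν + (j : ℕ)) : ℝ) + 1)⁻¹ *
          (Matrix.of (fun i j : Fin n =>
            x i ^ (ν + (j : ℕ) + 1) - a i ^ (ν + (j : ℕ) + 1)) i j) := by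
    ext i j
    simp only [Matrix.of_apply]
    rw [integral_Icc_eq_integral_Ioc, ← intervalIntegral.integral_of_le (hab i),
      integral_pow, div_eq_inv_mul]
  rw [hentry, Matrix.det_mul_row]
  -- telescope the determinant
  have htel : (Matrix.of fun i j : Fin n =>
      x i ^ (ν + (j : ℕ) + 1) - a i ^ (ν + (j : ℕ) + 1))
      = Matrix.of fun i j : Fin n =>
          (fun i j : Fin n => x i ^ (ν + (j : ℕ) + 1)) i j -
          (if h : (i : ℕ) = 0 then 0
            else (fun i j : Fin n => x i ^ (ν + (j : ℕ) + 1))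
              ⟨(i : ℕ) - 1, Nat.lt_of_le_of_lt (Nat.sub_le _ _) i.isLt⟩ j) := by
    ext i j
    simp only [Matrix.of_apply]
    congr 1
    by_cases hi : (i : ℕ) = 0
    · rw [dif_pos hi, ha]
      simp only
      rw [dif_pos hi]
      exact zero_pow (by omega)
    · rw [dif_neg hi, ha]
      simp only
      rw [dif_neg hi]
  rw [htel, det_telescope]
  have hvdm : Matrix.det (Matrix.of fun i j : Fin n => x i ^ (ν + (j : ℕ) + 1))
      = Px * Δx := by
    have : (Matrix.of fun i j : Fin n => x i ^ (ν + (j : ℕ) + 1))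
        = Matrix.of fun i j : Fin n => x i ^ ((ν + 1) + (j : ℕ)) := by
      ext i j
      simp only [Matrix.of_apply]
      congr 1
      omega
    rw [this, det_pow_vandermonde, ← hPx, ← hΔ]
  rw [hvdm]
  -- final arithmetic
  have hprod : (∏ j : Fin n, ((↑(ν + (j : ℕ)) : ℝ) + 1)⁻¹)
      = (∏ j : Fin n, ((ν : ℝ) + (j : ℕ) + 1))⁻¹ := by
    rw [← Finset.prod_inv_distrib]
    refine Finset.prod_congr rfl fun j _ => ?_
    congr 1
    push_cast
    ring
  rw [hprod]
  have h1 : Δx ≠ 0 := ne_of_gt hΔpos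
  have h2 : Px ≠ 0 := ne_of_gt hPxpos
  have h3 : (∏ j : Fin n, ((ν : ℝ) + (j : ℕ) + 1)) ≠ 0 := ne_of_gt hcpos
  field_simp
end
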